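/- arXiv:1601.07348 — 8 statements merged into one kernel-verified Lean document; each statement's English description precedes it below -/
import Mathlib

section
/- For all integers d ≥ 0, the identity τ(b_d(t)) = l_d · Σ_{i=0}^{d} b_i(t)/l_i holds in F_q(θ)[t], where τ(b_d(t)) denotes b_d(t) with θ replaced by θ^q in each factor. -/
set_option autoImplicit false

open Polynomial

/-- For all `d ≥ 0`, `τ(b_d(t)) = l_d * ∑_{i=0}^{d} b_i(t)/l_i` in `F_q(θ)[t]`,
where `τ` replaces `θ` by `θ^q` in each factor of `b_d(t)`. -/
theorem twist_b_eq_l_mul_sum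
    (Fq : Type) [Field Fq] [Fintype Fq] (q : ℕ) (hq : q = Fintype.card Fq)
    (θ : RatFunc Fq) (hθ : θ = RatFunc.X)
    (l : ℕ → RatFunc Fq) (hl0 : l 0 = 1)
    (hl : ∀ i, l (i + 1) = (θ - θ ^ q ^ (i + 1)) * l i)
    (b : ℕ → Polynomial (RatFunc Fq)) (hb0 : b 0 = 1)
    (hb : ∀ i, b (i + 1) = b i * (X - C (θ ^ q ^ i)))
    (d : ℕ) :
    (∏ m ∈ Finset.range d, (X - C (θ ^ q ^ (m + 1)))) =
      C (l d) * ∑ i ∈ Finset.range (d + 1), C (l i)⁻¹ * b i := by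
  have hq2 : 2 ≤ q := hq ▸ Fintype.one_lt_card
  have hθne : ∀ i : ℕ, θ - θ ^ q ^ (i + 1) ≠ 0 := by
    intro i h
    rw [sub_eq_zero, hθ] at h
    have h2 : algebraMap (Polynomial Fq) (RatFunc Fq) X =
        algebraMap (Polynomial Fq) (RatFunc Fq) (X ^ q ^ (i + 1)) := by
      rw [map_pow, RatFunc.algebraMap_X]; exact h
    have h3 : (X : Polynomial Fq) = X ^ q ^ (i + 1) :=
      RatFunc.algebraMap_injective Fq h2
    have h4 := congrArg natDegree h3
    rw [natDegree_X, natDegree_X_pow] at h4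
    have : 2 ≤ q ^ (i + 1) :=
      hq2.trans (Nat.le_self_pow (Nat.succ_ne_zero i) q)
    omega
  have hlne : ∀ i, l i ≠ 0 := by
    intro i
    induction i with
    | zero => simp [hl0]
    | succ i ih => rw [hl]; exact mul_ne_zero (hθne i) ih
  have hbp : ∀ n, b (n + 1) =
      (X - C θ) * ∏ m ∈ Finset.range n, (X - C (θ ^ q ^ (m + 1))) := by
    intro n
    induction n with
    | zero => simp [hb, hb0]
    | succ n ihn => rw [hb, ihn, Finset.prod_range_succ]; ring
  induction d with
  | zero => simp [hb0, hl0]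
  | succ d ih =>
    rw [Finset.prod_range_succ, Finset.sum_range_succ, mul_add]
    have h1 : C (l (d + 1)) * (C (l (d + 1))⁻¹ * b (d + 1)) = b (d + 1) := by
      rw [← mul_assoc, ← C_mul, mul_inv_cancel₀ (hlne _), C_1, one_mul]
    rw [h1, hl d, map_mul, mul_assoc, ← ih, hbp d, map_sub, map_pow]
    ring
end

section
/- For all d ≥ 0, the power sum S_d(1) := Σ_{a monic of degree d in F_q[θ]} 1/a equals 1/l_d. -/
set_option autoImplicit false

open Polynomial

set_option linter.unusedSectionVars false

section Carlitz

variable (Fq : Type) [Field Fq] [Fintype Fq]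

lemma carlitz_char : ∃ p : ℕ, Nat.Prime p ∧ CharP (RatFunc Fq) p ∧
    ∃ n : ℕ, n ≠ 0 ∧ Fintype.card Fq = p ^ n := by
  obtain ⟨n, hp, hcard⟩ := FiniteField.card Fq (ringChar Fq)
  refine ⟨ringChar Fq, hp, ?_, n, n.2.ne', hcard⟩
  exact charP_of_injective_algebraMap (algebraMap Fq (RatFunc Fq)).injective _

lemma carlitz_cast_card : ((Fintype.card Fq : ℕ) : RatFunc Fq) = 0 := by
  obtain ⟨p, hp, hchar, n, hn, hcard⟩ := carlitz_char Fq
  rw [hcard]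
  push_cast
  rw [CharP.cast_eq_zero (RatFunc Fq) p]
  exact zero_pow hn

lemma carlitz_frob_add (x y : RatFunc Fq) :
    (x + y) ^ Fintype.card Fq = x ^ Fintype.card Fq + y ^ Fintype.card Fq := by
  obtain ⟨p, hp, hchar, n, hn, hcard⟩ := carlitz_char Fq
  haveI : Fact p.Prime := ⟨hp⟩
  rw [hcard]
  exact add_pow_char_pow x y p n

lemma carlitz_frob_sub (x y : RatFunc Fq) :
    (x - y) ^ Fintype.card Fq = x ^ Fintype.card Fq - y ^ Fintype.card Fq := by
  obtain ⟨p, hp, hchar, n, hn, hcard⟩ := carlitz_char Fq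
  haveI : Fact p.Prime := ⟨hp⟩
  rw [hcard]
  exact sub_pow_char_pow x y n

lemma carlitz_frob_c (c : Fq) :
    (algebraMap Fq (RatFunc Fq) c) ^ Fintype.card Fq = algebraMap Fq (RatFunc Fq) c := by
  rw [← map_pow, FiniteField.pow_card]

/-- The normalized additive polynomial with kernel the polynomials of degree `< d`. -/
noncomputable def carlitzPsi (l : ℕ → RatFunc Fq) : ℕ → RatFunc Fq → RatFunc Fq
  | 0 => fun z => z
  | d + 1 => fun z => carlitzPsi l d z -
      (carlitzPsi l d z) ^ Fintype.card Fq * l d * ((l d) ^ Fintype.card Fq)⁻¹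

variable {Fq}
variable (l : ℕ → RatFunc Fq)

lemma carlitzPsi_zero (z : RatFunc Fq) : carlitzPsi Fq l 0 z = z := rfl

lemma carlitzPsi_succ (d : ℕ) (z : RatFunc Fq) :
    carlitzPsi Fq l (d + 1) z = carlitzPsi Fq l d z -
      (carlitzPsi Fq l d z) ^ Fintype.card Fq * l d * ((l d) ^ Fintype.card Fq)⁻¹ := rfl

lemma carlitzPsi_add (d : ℕ) (x y : RatFunc Fq) :
    carlitzPsi Fq l d (x + y) = carlitzPsi Fq l d x + carlitzPsi Fq l d y := by
  induction d with
  | zero => rfl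
  | succ d ih =>
    simp only [carlitzPsi_succ, ih, carlitz_frob_add]
    ring

lemma carlitzPsi_c_mul (d : ℕ) (c : Fq) (x : RatFunc Fq) :
    carlitzPsi Fq l d (algebraMap Fq (RatFunc Fq) c * x)
      = algebraMap Fq (RatFunc Fq) c * carlitzPsi Fq l d x := by
  induction d with
  | zero => rfl
  | succ d ih =>
    simp only [carlitzPsi_succ, ih, mul_pow, carlitz_frob_c]
    ring



variable {l}

lemma carlitz_qsum (t y : RatFunc Fq) (ht : t ≠ 0)
    (hy : ∀ c : Fq, y + algebraMap Fq (RatFunc Fq) c * t ≠ 0) :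
    (y - y ^ Fintype.card Fq * t * (t ^ Fintype.card Fq)⁻¹ ≠ 0) ∧
    ∑ c : Fq, (y + algebraMap Fq (RatFunc Fq) c * t)⁻¹
      = (y - y ^ Fintype.card Fq * t * (t ^ Fintype.card Fq)⁻¹)⁻¹ := by
  classical
  set ι := algebraMap Fq (RatFunc Fq) with hι
  set a := t ^ Fintype.card Fq * t⁻¹ with ha
  have htq : t ^ Fintype.card Fq ≠ 0 := pow_ne_zero _ ht
  have ha0 : a ≠ 0 := mul_ne_zero htq (inv_ne_zero ht)
  set v : Fq → RatFunc Fq := fun c => -(ι c * t) with hv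
  have hvinj : Function.Injective v := by
    intro c1 c2 h
    simp only [hv, neg_inj] at h
    exact (algebraMap Fq (RatFunc Fq)).injective (mul_right_cancel₀ ht h)
  set N := Lagrange.nodal Finset.univ v with hN
  have hNeval : ∀ x : RatFunc Fq, N.eval x = ∏ c : Fq, (x + ι c * t) := by
    intro x
    rw [hN, Lagrange.eval_nodal]
    exact Finset.prod_congr rfl fun c _ => by rw [hv, sub_neg_eq_add]
  have hq0 : Fintype.card Fq ≠ 0 := Fintype.card_ne_zero
  have hq1 : 1 < Fintype.card Fq := Fintype.one_lt_card
  have hdegCaX : (C a * X : (RatFunc Fq)[X]).degree < (Fintype.card Fq : WithBot ℕ) := by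
    have h1 : (C a * X : (RatFunc Fq)[X]).degree ≤ 1 := by
      simpa using Polynomial.degree_C_mul_X_pow_le 1 a
    exact lt_of_le_of_lt h1 (by exact_mod_cast hq1)
  -- N = X^q - C a * X
  have hNM : N = X ^ Fintype.card Fq - C a * X := by
    have hroot : ∀ c : Fq, (N - (X ^ Fintype.card Fq - C a * X)).eval (v c) = 0 := by
      intro c
      have h1 : N.eval (v c) = 0 := Lagrange.eval_nodal_at_node (Finset.mem_univ c)
      have h2 : (v c) ^ Fintype.card Fq = -(ι c * t ^ Fintype.card Fq) := by
        have h3 : (v c) ^ Fintype.card Fq = (0 - ι c * t) ^ Fintype.card Fq := by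
          rw [hv, zero_sub]
        rw [h3, carlitz_frob_sub, zero_pow hq0, zero_sub, mul_pow, hι, carlitz_frob_c]
      simp only [eval_sub, eval_pow, eval_mul, eval_C, eval_X, h1, h2]
      rw [ha]
      field_simp
      simp only [hv]
      ring
    by_cases hz : N - (X ^ Fintype.card Fq - C a * X) = 0
    · exact sub_eq_zero.mp hz
    · exfalso
      apply hz
      apply Polynomial.eq_zero_of_natDegree_lt_card_of_eval_eq_zero _ hvinj hroot
      have hdegM : (X ^ Fintype.card Fq - C a * X : (RatFunc Fq)[X]).degree
          = (Fintype.card Fq : WithBot ℕ) := by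
        rw [sub_eq_add_neg, degree_add_eq_left_of_degree_lt, degree_X_pow]
        rw [degree_neg, degree_X_pow]
        exact hdegCaX
      have hMmonic : (X ^ Fintype.card Fq - C a * X : (RatFunc Fq)[X]).Monic :=
        monic_X_pow_sub hdegCaX
      have hNdeg : N.degree = (Fintype.card Fq : WithBot ℕ) := by
        rw [hN, Lagrange.degree_nodal, Finset.card_univ]
      have hNmonic : N.Monic := Lagrange.nodal_monic
      have hlt := degree_sub_lt (hNdeg.trans hdegM.symm) (hNmonic.ne_zero)
          (hNmonic.leadingCoeff.trans hMmonic.leadingCoeff.symm)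
      rw [hNdeg] at hlt
      exact (natDegree_lt_iff_degree_lt hz).mpr hlt
  -- derivative
  have hcast : ((Fintype.card Fq : ℕ) : RatFunc Fq) = 0 := carlitz_cast_card Fq
  have hderiv : derivative N = C (-a) := by
    rw [hNM, derivative_sub, derivative_X_pow, derivative_mul, derivative_C, derivative_X]
    rw [hcast]
    simp
  have hNy : N.eval y ≠ 0 := by
    rw [hNeval]
    exact Finset.prod_ne_zero_iff.mpr fun c _ => hy c
  -- the sum equals eval of derivative over eval
  have hsum : ∑ c : Fq, (y + ι c * t)⁻¹ = -a * (N.eval y)⁻¹ := by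
    have hterm : ∀ c : Fq, (y + ι c * t)⁻¹
        = (Lagrange.nodal (Finset.univ.erase c) v).eval y * (N.eval y)⁻¹ := by
      intro c
      have hPe : (Lagrange.nodal (Finset.univ.erase c) v).eval y
          = ∏ c' ∈ Finset.univ.erase c, (y + ι c' * t) := by
        rw [Lagrange.eval_nodal]
        exact Finset.prod_congr rfl fun c' _ => by rw [hv, sub_neg_eq_add]
      have hP0 : ∏ c' ∈ Finset.univ.erase c, (y + ι c' * t) ≠ 0 :=
        Finset.prod_ne_zero_iff.mpr fun c' _ => hy c'
      have hfac := Finset.mul_prod_erase Finset.univ (fun c' => y + ι c' * t)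
        (Finset.mem_univ c)
      rw [hPe, hNeval, ← hfac, mul_inv, ← mul_assoc, mul_comm _ (y + ι c * t)⁻¹,
        mul_assoc, mul_inv_cancel₀ hP0, mul_one]
    rw [Finset.sum_congr rfl fun c _ => hterm c, ← Finset.sum_mul]
    congr 1
    have h5 : ∑ c : Fq, (Lagrange.nodal (Finset.univ.erase c) v).eval y
        = (derivative N).eval y := by
      rw [hN, Lagrange.derivative_nodal, eval_finset_sum]
    rw [h5, hderiv, eval_C]
  have hNevaly : N.eval y = y ^ Fintype.card Fq - a * y := by
    rw [hNM]
    simp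
  have hne2 : y ^ Fintype.card Fq - a * y ≠ 0 := hNevaly ▸ hNy
  set φ := y - y ^ Fintype.card Fq * t * (t ^ Fintype.card Fq)⁻¹ with hφdef
  have hφa : φ = (a * y - y ^ Fintype.card Fq) * a⁻¹ := by
    rw [hφdef, ha]
    field_simp
  have hφ0 : φ ≠ 0 := by
    rw [hφa]
    apply mul_ne_zero _ (inv_ne_zero ha0)
    intro h
    apply hne2
    linear_combination -h
  refine ⟨hφ0, ?_⟩
  rw [hsum, hNevaly, hφa, mul_inv, inv_inv]
  rw [show a * y - y ^ Fintype.card Fq = -(y ^ Fintype.card Fq - a * y) by ring, inv_neg]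
  ring



lemma carlitz_l_ne_zero (hl0 : l 0 = 1)
    (hl : ∀ i, l (i + 1) = (RatFunc.X - RatFunc.X ^ (Fintype.card Fq) ^ (i + 1)) * l i) :
    ∀ i, l i ≠ 0 := by
  intro i
  induction i with
  | zero => rw [hl0]; exact one_ne_zero
  | succ i ih =>
    rw [hl i]
    refine mul_ne_zero ?_ ih
    rw [sub_ne_zero]
    intro h
    rw [← RatFunc.algebraMap_X, ← map_pow] at h
    have h2 := RatFunc.algebraMap_injective Fq h
    have h3 := congrArg Polynomial.natDegree h2
    rw [Polynomial.natDegree_X, Polynomial.natDegree_X_pow] at h3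
    have h4 : 1 < (Fintype.card Fq) ^ (i + 1) :=
      Nat.one_lt_pow (Nat.succ_ne_zero i) Fintype.one_lt_card
    omega

lemma carlitzPsi_X_mul (hl0 : l 0 = 1)
    (hl : ∀ i, l (i + 1) = (RatFunc.X - RatFunc.X ^ (Fintype.card Fq) ^ (i + 1)) * l i) :
    ∀ d z, carlitzPsi Fq l (d + 1) (RatFunc.X * z)
      = RatFunc.X * carlitzPsi Fq l (d + 1) z
        + l (d + 1) * ((l d ^ Fintype.card Fq))⁻¹ * (carlitzPsi Fq l d z) ^ Fintype.card Fq := by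
  have hlne := carlitz_l_ne_zero hl0 hl
  intro d
  induction d with
  | zero =>
    intro z
    simp only [carlitzPsi_succ, carlitzPsi_zero]
    rw [hl0, hl 0, hl0, mul_pow]
    simp only [pow_one, one_pow, inv_one, mul_one]
    ring
  | succ d ih =>
    intro z
    set Q := Fintype.card Fq with hQ
    set b := carlitzPsi Fq l d z with hb
    set a := carlitzPsi Fq l (d + 1) z with ha2
    have hadef : a = b - b ^ Q * l d * (l d ^ Q)⁻¹ := carlitzPsi_succ l d z
    have haq : a ^ Q = b ^ Q - (b ^ Q) ^ Q * (l d) ^ Q * ((l d ^ Q) ^ Q)⁻¹ := by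
      rw [hadef, carlitz_frob_sub, mul_pow, mul_pow, inv_pow]
    set T : RatFunc Fq := RatFunc.X ^ Q ^ (d + 1) with hT
    have hTQ : RatFunc.X ^ Q ^ (d + 2) = T ^ Q := by
      rw [hT, ← pow_mul, pow_succ]
    have hu : (RatFunc.X - T) ^ Q = RatFunc.X ^ Q - T ^ Q := carlitz_frob_sub Fq _ _
    have hld1 : l (d + 1) = (RatFunc.X - T) * l d := by rw [hl d, hT]
    have hld2 : l (d + 2) = (RatFunc.X - T ^ Q) * ((RatFunc.X - T) * l d) := by
      rw [hl (d + 1), hTQ, hld1]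
    have hXT : RatFunc.X - T ≠ 0 := by
      intro h0
      exact hlne (d + 1) (by rw [hld1, h0, zero_mul])
    have hXTQ : RatFunc.X ^ Q - T ^ Q ≠ 0 := by
      rw [← hu]
      exact pow_ne_zero _ hXT
    have hL : l d ≠ 0 := hlne d
    have hLq : l d ^ Q ≠ 0 := pow_ne_zero _ hL
    have hLq2 : (l d ^ Q) ^ Q ≠ 0 := pow_ne_zero _ hLq
    rw [carlitzPsi_succ l (d + 1) (RatFunc.X * z), ih z, carlitzPsi_succ l (d + 1) z]
    rw [← ha2, ← hb]
    have hfrob : (RatFunc.X * a + l (d + 1) * (l d ^ Q)⁻¹ * b ^ Q) ^ Q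
        = RatFunc.X ^ Q * a ^ Q + (l (d + 1)) ^ Q * ((l d ^ Q) ^ Q)⁻¹ * (b ^ Q) ^ Q := by
      rw [carlitz_frob_add, mul_pow, mul_pow, mul_pow, inv_pow]
    rw [hfrob, haq]
    have hld1q : (l (d + 1)) ^ Q = (RatFunc.X ^ Q - T ^ Q) * l d ^ Q := by
      rw [hld1, mul_pow, hu]
    rw [hld1q, hld1, hld2]
    field_simp
    ring



lemma carlitzPsi_X_pow (hl0 : l 0 = 1)
    (hl : ∀ i, l (i + 1) = (RatFunc.X - RatFunc.X ^ (Fintype.card Fq) ^ (i + 1)) * l i) :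
    ∀ d, carlitzPsi Fq l d ((RatFunc.X : RatFunc Fq) ^ d) = l d := by
  have hlne := carlitz_l_ne_zero hl0 hl
  intro d
  induction d with
  | zero =>
    rw [pow_zero, carlitzPsi_zero, hl0]
  | succ d ih =>
    have h1 : carlitzPsi Fq l (d + 1) ((RatFunc.X : RatFunc Fq) ^ d) = 0 := by
      rw [carlitzPsi_succ, ih]
      field_simp [hlne d]
      simp
    have h2 := carlitzPsi_X_mul hl0 hl d ((RatFunc.X : RatFunc Fq) ^ d)
    rw [h1, ih, mul_zero, zero_add] at h2
    have h3 : (RatFunc.X : RatFunc Fq) ^ (d + 1) = RatFunc.X * RatFunc.X ^ d := by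
      rw [pow_succ, mul_comm]
    rw [h3, h2]
    rw [mul_assoc, inv_mul_cancel₀ (pow_ne_zero _ (hlne d)), mul_one]



variable (Fq) in
/-- The polynomial with coefficients `f 0, ..., f (d-1)` in degrees `< d`. -/
noncomputable def carlitzE (d : ℕ) (f : Fin d → Fq) : Polynomial Fq :=
  ∑ i : Fin d, Polynomial.C (f i) * Polynomial.X ^ (i : ℕ)

lemma carlitzE_coeff (d : ℕ) (f : Fin d → Fq) (n : ℕ) :
    (carlitzE Fq d f).coeff n = if h : n < d then f ⟨n, h⟩ else 0 := by
  rw [carlitzE, Polynomial.finset_sum_coeff]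
  simp only [Polynomial.coeff_C_mul, Polynomial.coeff_X_pow, mul_ite, mul_one, mul_zero]
  by_cases h : n < d
  · rw [dif_pos h, Finset.sum_eq_single (⟨n, h⟩ : Fin d)]
    · simp
    · intro i _ hne
      rw [if_neg]
      intro he
      exact hne (Fin.ext he.symm)
    · intro habs
      exact absurd (Finset.mem_univ _) habs
  · rw [dif_neg h]
    refine Finset.sum_eq_zero fun i _ => ?_
    rw [if_neg]
    intro he
    exact h (he ▸ i.isLt)

lemma carlitzE_degree_lt (d : ℕ) (f : Fin d → Fq) :
    (carlitzE Fq d f).degree < (d : WithBot ℕ) := by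
  refine lt_of_le_of_lt (Polynomial.degree_sum_le _ _) ?_
  refine (Finset.sup_lt_iff (WithBot.bot_lt_coe d)).mpr fun i _ => ?_
  exact lt_of_le_of_lt (Polynomial.degree_C_mul_X_pow_le _ _) (WithBot.coe_lt_coe.mpr i.isLt)

lemma carlitz_monic (d : ℕ) (f : Fin d → Fq) :
    (Polynomial.X ^ d + carlitzE Fq d f).Monic :=
  Polynomial.monic_X_pow_add (carlitzE_degree_lt d f)

lemma carlitz_natDegree (d : ℕ) (f : Fin d → Fq) :
    (Polynomial.X ^ d + carlitzE Fq d f).natDegree = d := by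
  refine Polynomial.natDegree_eq_of_degree_eq_some ?_
  rw [Polynomial.degree_add_eq_left_of_degree_lt, Polynomial.degree_X_pow]
  rw [Polynomial.degree_X_pow]
  exact carlitzE_degree_lt d f

lemma carlitzE_snoc (d : ℕ) (f : Fin d → Fq) (c : Fq) :
    carlitzE Fq (d + 1) (Fin.snoc f c) = carlitzE Fq d f + Polynomial.C c * Polynomial.X ^ d := by
  rw [carlitzE, Fin.sum_univ_castSucc]
  congr 1
  · rw [carlitzE]
    refine Finset.sum_congr rfl fun i _ => ?_
    rw [Fin.snoc_castSucc, Fin.coe_castSucc]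
  · rw [Fin.snoc_last, Fin.val_last]

lemma carlitz_main (hl0 : l 0 = 1)
    (hl : ∀ i, l (i + 1) = (RatFunc.X - RatFunc.X ^ (Fintype.card Fq) ^ (i + 1)) * l i) :
    ∀ d, ∀ z : RatFunc Fq,
      (∀ f : Fin d → Fq, z + algebraMap (Polynomial Fq) (RatFunc Fq) (carlitzE Fq d f) ≠ 0) →
      carlitzPsi Fq l d z ≠ 0 ∧
      ∑ f : Fin d → Fq, (z + algebraMap (Polynomial Fq) (RatFunc Fq) (carlitzE Fq d f))⁻¹
        = (carlitzPsi Fq l d z)⁻¹ := by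
  have hlne := carlitz_l_ne_zero hl0 hl
  intro d
  induction d with
  | zero =>
    intro z hz
    have h0 : ∀ f : Fin 0 → Fq, carlitzE Fq 0 f = 0 := fun f => by
      rw [carlitzE]
      simp
    have hz0 : z ≠ 0 := by
      have := hz (fun i => i.elim0)
      rwa [h0, map_zero, add_zero] at this
    refine ⟨hz0, ?_⟩
    rw [carlitzPsi_zero]
    rw [Finset.sum_congr rfl fun f _ => by rw [h0 f, map_zero, add_zero]]
    rw [Finset.sum_const, Finset.card_univ]
    have hcard : Fintype.card (Fin 0 → Fq) = 1 := by simp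
    rw [hcard, one_smul]
  | succ d ih =>
    intro z hz
    set ι := algebraMap Fq (RatFunc Fq) with hι
    have hsnoc : ∀ (c : Fq) (f : Fin d → Fq),
        algebraMap (Polynomial Fq) (RatFunc Fq) (carlitzE Fq (d + 1) (Fin.snoc f c))
          = ι c * RatFunc.X ^ d
            + algebraMap (Polynomial Fq) (RatFunc Fq) (carlitzE Fq d f) := by
      intro c f
      rw [carlitzE_snoc, map_add, map_mul, map_pow, RatFunc.algebraMap_X,
        RatFunc.algebraMap_C, hι, RatFunc.algebraMap_eq_C]
      ring
    have hz' : ∀ (c : Fq) (f : Fin d → Fq),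
        (z + ι c * RatFunc.X ^ d)
          + algebraMap (Polynomial Fq) (RatFunc Fq) (carlitzE Fq d f) ≠ 0 := by
      intro c f
      have h := hz (Fin.snoc f c)
      rw [hsnoc] at h
      rwa [add_assoc]
    have IHc := fun c : Fq => ih (z + ι c * RatFunc.X ^ d) (hz' c)
    have hpsilin : ∀ c : Fq, carlitzPsi Fq l d (z + ι c * RatFunc.X ^ d)
        = carlitzPsi Fq l d z + ι c * l d := by
      intro c
      rw [carlitzPsi_add, hι, carlitzPsi_c_mul, carlitzPsi_X_pow hl0 hl]
    have hB := carlitz_qsum (l d) (carlitzPsi Fq l d z) (hlne d) (fun c => by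
      rw [← hι, ← hpsilin c]
      exact (IHc c).1)
    refine ⟨by rw [carlitzPsi_succ]; exact hB.1, ?_⟩
    rw [carlitzPsi_succ, ← hB.2]
    rw [← Fintype.sum_equiv (Fin.snocEquiv (fun _ : Fin (d + 1) => Fq))
      (fun p => (z + algebraMap (Polynomial Fq) (RatFunc Fq)
        (carlitzE Fq (d + 1) (Fin.snoc p.2 p.1)))⁻¹)
      (fun h => (z + algebraMap (Polynomial Fq) (RatFunc Fq) (carlitzE Fq (d + 1) h))⁻¹)
      (fun p => rfl)]
    rw [Fintype.sum_prod_type]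
    refine Finset.sum_congr rfl fun c _ => ?_
    have hstep : ∀ f : Fin d → Fq,
        z + algebraMap (Polynomial Fq) (RatFunc Fq) (carlitzE Fq (d + 1) (Fin.snoc f c))
          = (z + ι c * RatFunc.X ^ d)
            + algebraMap (Polynomial Fq) (RatFunc Fq) (carlitzE Fq d f) := by
      intro f
      rw [hsnoc, add_assoc]
    rw [Finset.sum_congr rfl fun f _ => by rw [hstep f]]
    rw [(IHc c).2, hpsilin c, hι]

end Carlitz

/-- For all `d ≥ 0`, the power sum `S_d(1) = ∑_{a ∈ A⁺(d)} a⁻¹` equals `1 / l_d`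
in `K = F_q(θ)`. -/
theorem powerSum_one_eq_inv_l
    (Fq : Type) [Field Fq] [Fintype Fq] (q : ℕ) (hq : q = Fintype.card Fq)
    (θ : RatFunc Fq) (hθ : θ = RatFunc.X)
    (l : ℕ → RatFunc Fq) (hl0 : l 0 = 1)
    (hl : ∀ i, l (i + 1) = (θ - θ ^ q ^ (i + 1)) * l i)
    (d : ℕ) :
    ∑ᶠ a ∈ {a : Polynomial Fq | a.Monic ∧ a.natDegree = d},
      (algebraMap (Polynomial Fq) (RatFunc Fq) a)⁻¹ = (l d)⁻¹ := by
  subst hθ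
  subst hq
  classical
  have hset : {a : Polynomial Fq | a.Monic ∧ a.natDegree = d}
      = ↑((Finset.univ : Finset (Fin d → Fq)).image
          (fun f => Polynomial.X ^ d + carlitzE Fq d f)) := by
    ext a
    simp only [Set.mem_setOf_eq, Finset.coe_image, Set.mem_image, Finset.mem_coe,
      Finset.mem_univ, true_and]
    constructor
    · rintro ⟨hm, hd⟩
      refine ⟨fun i => a.coeff (i : ℕ), ?_⟩
      ext n
      rw [Polynomial.coeff_add, Polynomial.coeff_X_pow, carlitzE_coeff]
      rcases lt_trichotomy n d with h | h | h
      · rw [dif_pos h, if_neg h.ne, zero_add]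
      · subst h
        rw [dif_neg (lt_irrefl n), if_pos rfl, add_zero]
        rw [← hd]
        exact hm.coeff_natDegree.symm
      · rw [dif_neg (not_lt.mpr h.le), if_neg h.ne', add_zero]
        exact (Polynomial.coeff_eq_zero_of_natDegree_lt (hd ▸ h)).symm
    · rintro ⟨f, rfl⟩
      exact ⟨carlitz_monic d f, carlitz_natDegree d f⟩
  rw [hset, finsum_mem_coe_finset]
  have hinj : ∀ x ∈ (Finset.univ : Finset (Fin d → Fq)), ∀ y ∈ (Finset.univ : Finset (Fin d → Fq)),
      (fun f => Polynomial.X ^ d + carlitzE Fq d f) x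
        = (fun f => Polynomial.X ^ d + carlitzE Fq d f) y → x = y := by
    intro x _ y _ h
    simp only at h
    have h2 := add_left_cancel h
    funext i
    have h3 := congrArg (fun p => Polynomial.coeff p (i : ℕ)) h2
    simpa [carlitzE_coeff, i.isLt] using h3
  rw [Finset.sum_image hinj]
  have hz : ∀ f : Fin d → Fq, (RatFunc.X : RatFunc Fq) ^ d
      + algebraMap (Polynomial Fq) (RatFunc Fq) (carlitzE Fq d f) ≠ 0 := by
    intro f
    have h1 : (RatFunc.X : RatFunc Fq) ^ d
        + algebraMap (Polynomial Fq) (RatFunc Fq) (carlitzE Fq d f)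
        = algebraMap (Polynomial Fq) (RatFunc Fq) (Polynomial.X ^ d + carlitzE Fq d f) := by
      rw [map_add, map_pow, RatFunc.algebraMap_X]
    rw [h1]
    intro h0
    exact (carlitz_monic d f).ne_zero
      ((map_eq_zero_iff _ (RatFunc.algebraMap_injective Fq)).mp h0)
  have hmain := (carlitz_main hl0 hl d ((RatFunc.X : RatFunc Fq) ^ d) hz).2
  rw [Finset.sum_congr rfl (fun f _ => by rw [map_add, map_pow, RatFunc.algebraMap_X])]
  rw [hmain, carlitzPsi_X_pow hl0 hl]
end

section
/- For all d ≥ 0, the twisted power sum S_d(1; χ_t) := Σ_{a monic of degree d in F_q[θ]} a(t)/a equals b_d(t)/l_d in F_q(θ)[t], where a(t) denotes the polynomial a with θ replaced by the variable t. -/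
set_option autoImplicit false
set_option maxHeartbeats 1000000

open Polynomial

namespace TPS

variable {Fq : Type} [Field Fq] [Fintype Fq]

local notation "qq" => Fintype.card Fq
local notation "K" => RatFunc Fq

noncomputable def phi (Fq : Type) [Field Fq] [Fintype Fq] : Fq →+* RatFunc Fq :=
  (algebraMap (Polynomial Fq) (RatFunc Fq)).comp Polynomial.C

lemma phi_injective : Function.Injective (phi Fq) :=
  (RatFunc.algebraMap_injective Fq).comp Polynomial.C_injective

lemma char_pack : ∃ p n : ℕ, Nat.Prime p ∧ 0 < n ∧ Fintype.card Fq = p ^ n ∧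
    CharP (RatFunc Fq) p := by
  let p := ringChar Fq
  haveI : CharP Fq p := ringChar.charP Fq
  have hp : p.Prime := CharP.char_is_prime Fq p
  obtain ⟨n, -, hcard⟩ := FiniteField.card Fq p
  refine ⟨p, n, hp, n.2, hcard, charP_of_injective_ringHom phi_injective p⟩

lemma frob_add (m : ℕ) (x y : K) : (x + y) ^ qq ^ m = x ^ qq ^ m + y ^ qq ^ m := by
  obtain ⟨p, n, hp, hn, hc, hch⟩ := char_pack (Fq := Fq)
  haveI := Fact.mk hp; haveI := hch
  rw [hc, ← pow_mul]
  exact add_pow_char_pow x y p (n * m)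

lemma frob_sub (m : ℕ) (x y : K) : (x - y) ^ qq ^ m = x ^ qq ^ m - y ^ qq ^ m := by
  obtain ⟨p, n, hp, hn, hc, hch⟩ := char_pack (Fq := Fq)
  haveI := Fact.mk hp; haveI := hch
  rw [hc, ← pow_mul]
  exact sub_pow_char_pow x y (n * m)

lemma frob_add1 (x y : K) : (x + y) ^ qq = x ^ qq + y ^ qq := by
  simpa using frob_add 1 x y

lemma cast_q_pow_zero (d : ℕ) (hd : 0 < d) : ((qq ^ d : ℕ) : K) = 0 := by
  obtain ⟨p, n, hp, hn, hc, hch⟩ := char_pack (Fq := Fq)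
  haveI := Fact.mk hp; haveI := hch
  have hpz : ((p : ℕ) : K) = 0 := CharP.cast_eq_zero _ p
  rw [hc, ← pow_mul, Nat.cast_pow, hpz, zero_pow]
  positivity

lemma cast_q_zero : ((qq : ℕ) : K) = 0 := by simpa using cast_q_pow_zero 1 one_pos

lemma q_pos : 0 < qq := Fintype.card_pos
lemma q_ge_two : 2 ≤ qq := Fintype.one_lt_card

lemma phi_pow_pow (m : ℕ) (a : Fq) : (phi Fq a) ^ qq ^ m = phi Fq a := by
  rw [← map_pow, FiniteField.pow_card_pow]

lemma phi_pow (a : Fq) : (phi Fq a) ^ qq = phi Fq a := by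
  simpa using phi_pow_pow 1 a

lemma neg_pow_qm1 (x : K) : (-x) ^ (qq - 1) = x ^ (qq - 1) := by
  rcases Nat.even_or_odd qq with hq | hq
  · obtain ⟨p, n, hp, hn, hc, hch⟩ := char_pack (Fq := Fq)
    have h2 : 2 ∣ p ^ n := hc ▸ hq.two_dvd
    have hp2 : p = 2 := ((Nat.prime_dvd_prime_iff_eq Nat.prime_two hp).1
      (Nat.Prime.dvd_of_dvd_pow Nat.prime_two h2)).symm
    haveI : CharP (RatFunc Fq) 2 := hp2 ▸ hch
    rw [CharTwo.neg_eq]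
  · have : Even (qq - 1) := by
      rcases hq with ⟨k, hk⟩
      exact ⟨k, by omega⟩
    exact this.neg_pow x

/-- `∏ c : Fq, (z - φ c) = z ^ q - z` in `RatFunc Fq`. -/
lemma prod_sub_phi (z : K) : ∏ c : Fq, (z - phi Fq c) = z ^ qq - z := by
  classical
  have h1 : (∏ a : Fq, (X - C a) : Polynomial Fq) = X ^ qq - X := by
    have hmonic : (X ^ qq - X : Polynomial Fq).Monic := by
      apply monic_X_pow_sub
      calc (X : Polynomial Fq).degree = 1 := degree_X
        _ < (qq : WithBot ℕ) := by
          exact_mod_cast Nat.one_lt_cast.mpr q_ge_two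
    have hdeg : (X ^ qq - X : Polynomial Fq).natDegree = qq :=
      FiniteField.X_pow_card_sub_X_natDegree_eq Fq q_ge_two
    have hroots := FiniteField.roots_X_pow_card_sub_X Fq
    have hcard : Multiset.card (X ^ qq - X : Polynomial Fq).roots = (X ^ qq - X : Polynomial Fq).natDegree := by
      rw [hroots, hdeg]; simp [Finset.card_univ]
    have := prod_multiset_X_sub_C_of_monic_of_roots_card_eq hmonic hcard
    rw [hroots] at this
    rw [← this]
    rfl
  have h2 := congrArg (Polynomial.map (phi Fq)) h1
  simp only [Polynomial.map_prod, Polynomial.map_sub, Polynomial.map_pow, map_X, map_C] at h2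
  have h3 := congrArg (Polynomial.eval z) h2
  simpa [eval_prod] using h3

lemma prod_sub_phi_mul {u : K} (hu : u ≠ 0) (y : K) :
    ∏ c : Fq, (y - phi Fq c * u) = y ^ qq - u ^ (qq - 1) * y := by
  have h := prod_sub_phi (Fq := Fq) (y * u⁻¹)
  have key : ∀ c : Fq, y - phi Fq c * u = u * (y * u⁻¹ - phi Fq c) := by
    intro c; field_simp
  calc ∏ c : Fq, (y - phi Fq c * u) = ∏ c : Fq, u * (y * u⁻¹ - phi Fq c) := by
        exact Finset.prod_congr rfl fun c _ => key c
    _ = u ^ qq * ((y * u⁻¹) ^ qq - y * u⁻¹) := by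
        rw [Finset.prod_mul_distrib, Finset.prod_const, Finset.card_univ, h]
    _ = y ^ qq - u ^ (qq - 1) * y := by
        have h1 : u ^ qq * ((y * u⁻¹) ^ qq) = y ^ qq := by
          rw [mul_pow, ← mul_assoc, mul_comm (u ^ qq), mul_assoc, ← mul_pow, mul_inv_cancel₀ hu,
            one_pow, mul_one]
        have h2 : u ^ qq * (y * u⁻¹) = u ^ (qq - 1) * y := by
          have : u ^ qq = u ^ (qq - 1) * u := by
            conv_lhs => rw [show qq = (qq - 1) + 1 by have := q_pos (Fq := Fq); omega]
            ring
          rw [this]; field_simp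
        rw [mul_sub, h1, h2]


variable (w : ℕ → RatFunc Fq)

noncomputable def vs (d : ℕ) (c : Fin d → Fq) : RatFunc Fq :=
  ∑ j : Fin d, phi Fq (c j) * w (j : ℕ)

noncomputable def funE : ℕ → RatFunc Fq → RatFunc Fq
  | 0, x => x
  | d + 1, x => funE d x ^ qq - funE d (w d) ^ (qq - 1) * funE d x

@[simp] lemma funE_zero (x : K) : funE w 0 x = x := rfl

lemma funE_succ (d : ℕ) (x : K) :
    funE w (d + 1) x = funE w d x ^ qq - funE w d (w d) ^ (qq - 1) * funE w d x := rfl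

lemma funE_add (d : ℕ) (x y : K) : funE w d (x + y) = funE w d x + funE w d y := by
  induction d with
  | zero => rfl
  | succ d ih =>
    simp only [funE_succ, ih, frob_add1]
    ring

lemma funE_smul (d : ℕ) (a : Fq) (x : K) :
    funE w d (phi Fq a * x) = phi Fq a * funE w d x := by
  induction d with
  | zero => rfl
  | succ d ih =>
    simp only [funE_succ, ih, mul_pow, phi_pow]
    ring

lemma funE_sub (d : ℕ) (x y : K) : funE w d (x - y) = funE w d x - funE w d y := by
  have h := funE_add w d (x - y) y
  simp only [sub_add_cancel] at h
  linear_combination -h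

/-- snoc decomposition of `vs`. -/
lemma vs_snoc (d : ℕ) (c : Fin d → Fq) (a : Fq) :
    vs w (d + 1) (Fin.snoc c a) = vs w d c + phi Fq a * w d := by
  rw [vs, Fin.sum_univ_castSucc]
  simp [vs, Fin.snoc_castSucc]

lemma funE_prod (hw : ∀ e, ∀ c : Fin e → Fq, vs w e c ≠ w e) :
    ∀ d (x : K), funE w d x = ∏ c : Fin d → Fq, (x - vs w d c) := by
  intro d
  induction d with
  | zero =>
    intro x
    haveI : Unique (Fin 0 → Fq) := Pi.uniqueOfIsEmpty _
    rw [Fintype.prod_unique fun c : Fin 0 → Fq => x - vs w 0 c]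
    simp [vs]
  | succ d ih =>
    intro x
    have hmu : funE w d (w d) = ∏ c : Fin d → Fq, (w d - vs w d c) := ih (w d)
    have hmu_ne : funE w d (w d) ≠ 0 := by
      rw [hmu]
      exact Finset.prod_ne_zero_iff.2 fun c _ => sub_ne_zero.2 fun h => hw d c h.symm
    rw [funE_succ, ← prod_sub_phi_mul hmu_ne]
    have step : ∀ a : Fq, funE w d x - phi Fq a * funE w d (w d)
        = ∏ c : Fin d → Fq, (x - phi Fq a * w d - vs w d c) := by
      intro a
      rw [← funE_smul, ← funE_sub, ih]
    have e1 : ∏ a : Fq, (funE w d x - phi Fq a * funE w d (w d))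
        = ∏ a : Fq, ∏ c : Fin d → Fq, (x - phi Fq a * w d - vs w d c) :=
      Finset.prod_congr rfl fun a _ => step a
    have e2 : ∏ a : Fq, ∏ c : Fin d → Fq, (x - phi Fq a * w d - vs w d c)
        = ∏ p : Fq × (Fin d → Fq), (x - phi Fq p.1 * w d - vs w d p.2) :=
      (Fintype.prod_prod_type' fun a c => x - phi Fq a * w d - vs w d c).symm
    have e3 : ∏ p : Fq × (Fin d → Fq), (x - phi Fq p.1 * w d - vs w d p.2)
        = ∏ c : Fin (d + 1) → Fq, (x - vs w (d + 1) c) := by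
      refine Fintype.prod_equiv
        ⟨fun p => (Fin.snoc p.2 p.1 : Fin (d + 1) → Fq),
         fun c => (c (Fin.last d), Fin.init c),
         fun p => by simp [Fin.init_snoc, Fin.snoc_last],
         fun c => by simp [Fin.snoc_init_self]⟩
        (fun p => x - phi Fq p.1 * w d - vs w d p.2)
        (fun c => x - vs w (d + 1) c) (fun p => ?_)
      simp only [Equiv.coe_fn_mk]
      rw [vs_snoc]
      ring
    rw [e1, e2, e3]

section Theta

variable (Fq)

noncomputable def thw : ℕ → RatFunc Fq := fun j => RatFunc.X ^ j

noncomputable def Gw : ℕ → RatFunc Fq := fun j => RatFunc.X ^ (j + 1)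

variable {Fq}

noncomputable def vpoly (d : ℕ) (c : Fin d → Fq) : Polynomial Fq :=
  ∑ j : Fin d, Polynomial.C (c j) * X ^ (j : ℕ)

lemma coeff_vpoly (d : ℕ) (c : Fin d → Fq) (k : ℕ) :
    (vpoly d c).coeff k = if h : k < d then c ⟨k, h⟩ else 0 := by
  classical
  rw [vpoly, finset_sum_coeff]
  split
  next h =>
    rw [Finset.sum_eq_single (⟨k, h⟩ : Fin d)]
    · simp
    · intro j _ hj
      have hne : k ≠ (j : ℕ) := by
        intro hk
        exact hj (Fin.ext hk.symm)
      simp [coeff_C_mul, coeff_X_pow, hne]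
    · intro h'; exact absurd (Finset.mem_univ _) h'
  next h =>
    apply Finset.sum_eq_zero
    intro j _
    have hne : k ≠ (j : ℕ) := by have := j.isLt; omega
    simp [coeff_C_mul, coeff_X_pow, hne]

lemma vpoly_coeff_self (d : ℕ) (c : Fin d → Fq) : (vpoly d c).coeff d = 0 := by
  simp [coeff_vpoly]

noncomputable def vth (d : ℕ) (c : Fin d → Fq) : RatFunc Fq :=
  algebraMap (Polynomial Fq) (RatFunc Fq) (vpoly d c)

lemma vs_thw (d : ℕ) (c : Fin d → Fq) : vs (thw Fq) d c = vth d c := by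
  rw [vs, vth, vpoly, map_sum]
  refine Finset.sum_congr rfl fun j _ => ?_
  rw [map_mul, map_pow, RatFunc.algebraMap_X, thw, phi]
  rfl

lemma vs_Gw (d : ℕ) (c : Fin d → Fq) : vs (Gw Fq) d c = RatFunc.X * vth d c := by
  rw [← vs_thw, vs, vs, Finset.mul_sum]
  refine Finset.sum_congr rfl fun j _ => ?_
  rw [thw, Gw]
  ring

lemma vpoly_ne_X_pow (e : ℕ) (c : Fin e → Fq) : vpoly e c ≠ X ^ e := by
  intro h
  have := congrArg (fun p => Polynomial.coeff p e) h
  simp [vpoly_coeff_self, coeff_X_pow] at this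

lemma hw_thw : ∀ e, ∀ c : Fin e → Fq, vs (thw Fq) e c ≠ thw Fq e := by
  intro e c h
  rw [vs_thw, thw] at h
  have hX : (RatFunc.X : RatFunc Fq) ^ e
      = algebraMap (Polynomial Fq) (RatFunc Fq) (X ^ e) := by
    rw [map_pow, RatFunc.algebraMap_X]
  rw [vth, hX] at h
  exact vpoly_ne_X_pow e c (RatFunc.algebraMap_injective Fq h)

lemma hw_Gw : ∀ e, ∀ c : Fin e → Fq, vs (Gw Fq) e c ≠ Gw Fq e := by
  intro e c h
  rw [vs_Gw, Gw] at h
  have h1 : algebraMap (Polynomial Fq) (RatFunc Fq) (X * vpoly e c)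
      = algebraMap (Polynomial Fq) (RatFunc Fq) (X ^ (e + 1)) := by
    rw [map_mul, map_pow, RatFunc.algebraMap_X, ← vth]
    exact h
  have h2 : (X : Polynomial Fq) * vpoly e c = X ^ (e + 1) :=
    RatFunc.algebraMap_injective Fq h1
  rw [pow_succ, mul_comm ((X : Polynomial Fq) ^ e) X] at h2
  exact vpoly_ne_X_pow e c (mul_left_cancel₀ X_ne_zero h2)

lemma vth_injective (d : ℕ) : Function.Injective (vth (Fq := Fq) d) := by
  intro c c' h
  have h1 : vpoly d c = vpoly d c' := RatFunc.algebraMap_injective Fq h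
  funext j
  have := congrArg (fun p => Polynomial.coeff p (j : ℕ)) h1
  simpa [coeff_vpoly, j.isLt] using this

lemma vth_sub_ne (d : ℕ) (c : Fin d → Fq) :
    (RatFunc.X : RatFunc Fq) ^ d - vth d c ≠ 0 := by
  rw [sub_ne_zero]
  intro h
  exact hw_thw d c (by rw [vs_thw, thw]; exact h.symm)

lemma one_sub_X_vth_ne (d : ℕ) (c : Fin d → Fq) :
    (1 : RatFunc Fq) - RatFunc.X * vth d c ≠ 0 := by
  rw [sub_ne_zero]
  intro h
  have h1 : algebraMap (Polynomial Fq) (RatFunc Fq) (1 : Polynomial Fq)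
      = algebraMap (Polynomial Fq) (RatFunc Fq) (X * vpoly d c) := by
    rw [map_one, map_mul, RatFunc.algebraMap_X, ← vth]; exact h
  have h2 := RatFunc.algebraMap_injective Fq h1
  have := congrArg (fun p => Polynomial.coeff p 0) h2
  simp [mul_coeff_zero] at this

variable (Fq)

noncomputable def mu (d : ℕ) : RatFunc Fq := funE (thw Fq) d (RatFunc.X ^ d)

noncomputable def gam (d : ℕ) : RatFunc Fq := funE (Gw Fq) d 1

variable {Fq}

lemma Eprod (d : ℕ) (x : RatFunc Fq) :
    funE (thw Fq) d x = ∏ c : Fin d → Fq, (x - vth d c) := by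
  rw [funE_prod (thw Fq) hw_thw d x]
  exact Finset.prod_congr rfl fun c _ => by rw [vs_thw]

lemma Gprod (d : ℕ) (x : RatFunc Fq) :
    funE (Gw Fq) d x = ∏ c : Fin d → Fq, (x - RatFunc.X * vth d c) := by
  rw [funE_prod (Gw Fq) hw_Gw d x]
  exact Finset.prod_congr rfl fun c _ => by rw [vs_Gw]

lemma mu_prod (d : ℕ) : mu Fq d = ∏ c : Fin d → Fq, (RatFunc.X ^ d - vth d c) := by
  rw [mu, Eprod]

lemma mu_ne (d : ℕ) : mu Fq d ≠ 0 := by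
  rw [mu_prod]
  exact Finset.prod_ne_zero_iff.2 fun c _ => vth_sub_ne d c

lemma gam_ne (d : ℕ) : gam Fq d ≠ 0 := by
  rw [gam, Gprod]
  exact Finset.prod_ne_zero_iff.2 fun c _ => one_sub_X_vth_ne d c

lemma card_tuple (d : ℕ) : Fintype.card (Fin d → Fq) = qq ^ d := by
  simp [Fintype.card_fun]

lemma Gtheta (d : ℕ) (y : RatFunc Fq) :
    funE (Gw Fq) d (RatFunc.X * y) = RatFunc.X ^ (qq ^ d) * funE (thw Fq) d y := by
  rw [Gprod, Eprod, ← card_tuple (Fq := Fq) d, ← Finset.card_univ, ← Finset.prod_const,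
    ← Finset.prod_mul_distrib]
  exact Finset.prod_congr rfl fun c _ => by ring

lemma Gw_eval (d : ℕ) : Gw Fq d = RatFunc.X * RatFunc.X ^ d := by
  rw [Gw, pow_succ]; ring

lemma G_at_top (d : ℕ) :
    funE (Gw Fq) d (RatFunc.X ^ (d + 1)) = RatFunc.X ^ (qq ^ d) * mu Fq d := by
  have : (RatFunc.X : RatFunc Fq) ^ (d + 1) = RatFunc.X * RatFunc.X ^ d := by
    rw [pow_succ]; ring
  rw [this, Gtheta, mu]

lemma Estep_viaG (d : ℕ) (x : RatFunc Fq) :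
    funE (thw Fq) (d + 1) x
      = funE (Gw Fq) d x ^ qq - gam Fq d ^ (qq - 1) * funE (Gw Fq) d x := by
  have lhs : funE (thw Fq) (d + 1) x = ∏ c : Fin (d + 1) → Fq, (x - vs (thw Fq) (d + 1) c) :=
    funE_prod (thw Fq) hw_thw (d + 1) x
  have cons_eq : ∀ (a : Fq) (c : Fin d → Fq),
      vs (thw Fq) (d + 1) (Fin.cons a c) = phi Fq a + RatFunc.X * vth d c := by
    intro a c
    rw [← vs_Gw, vs, vs, Fin.sum_univ_succ]
    simp only [Fin.cons_zero, Fin.cons_succ, thw, Gw, Fin.val_succ, Fin.val_zero, pow_zero, mul_one]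
  have split : ∏ c : Fin (d + 1) → Fq, (x - vs (thw Fq) (d + 1) c)
      = ∏ a : Fq, ∏ c : Fin d → Fq, (x - phi Fq a - RatFunc.X * vth d c) := by
    rw [← Fintype.prod_prod_type' fun a c => x - phi Fq a - RatFunc.X * vth d c]
    refine (Fintype.prod_equiv
      ⟨fun p => (Fin.cons p.1 p.2 : Fin (d + 1) → Fq),
       fun c => (c 0, Fin.tail c),
       fun p => by simp [Fin.tail_cons],
       fun c => by simp [Fin.cons_self_tail]⟩
      (fun p => x - phi Fq p.1 * 1 - RatFunc.X * vth d p.2)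
      (fun c => x - vs (thw Fq) (d + 1) c) (fun p => ?_)).symm.trans ?_
    · simp only [Equiv.coe_fn_mk]
      rw [cons_eq]
      ring
    · exact Finset.prod_congr rfl fun p _ => by ring
  have inner : ∀ a : Fq, ∏ c : Fin d → Fq, (x - phi Fq a - RatFunc.X * vth d c)
      = funE (Gw Fq) d x - phi Fq a * gam Fq d := by
    intro a
    rw [← Gprod, show x - phi Fq a = x - phi Fq a * 1 by ring, funE_sub, funE_smul, ← gam]
  rw [lhs, split, Finset.prod_congr rfl fun a _ => inner a, prod_sub_phi_mul (gam_ne d)]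

lemma Gstep (d : ℕ) (x : RatFunc Fq) :
    funE (Gw Fq) (d + 1) x
      = funE (Gw Fq) d x ^ qq
        - (RatFunc.X ^ (qq ^ d) * mu Fq d) ^ (qq - 1) * funE (Gw Fq) d x := by
  rw [funE_succ, show Gw Fq d = RatFunc.X ^ (d + 1) from rfl, G_at_top]

end Theta

section Numeric

lemma mu_zero : mu Fq 0 = 1 := by
  rw [mu, funE_zero, pow_zero]

lemma gam_zero : gam Fq 0 = 1 := rfl

lemma q_sub_one_add_one : qq - 1 + 1 = qq := by
  have := q_pos (Fq := Fq); omega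

lemma qpow_sub_one_add_one (d : ℕ) : qq ^ d - 1 + 1 = qq ^ d := by
  have : 0 < qq ^ d := pow_pos (q_pos (Fq := Fq)) d
  omega

lemma pow_q_eq (y : RatFunc Fq) : y ^ qq = y ^ (qq - 1) * y := by
  conv_lhs => rw [← q_sub_one_add_one (Fq := Fq), pow_succ]

lemma X_pow_qd (d : ℕ) :
    (RatFunc.X : RatFunc Fq) ^ (qq ^ d) = RatFunc.X ^ (qq ^ d - 1) * RatFunc.X := by
  conv_lhs => rw [← qpow_sub_one_add_one (Fq := Fq) d, pow_succ]

lemma X_pow_qd1 (d : ℕ) :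
    (RatFunc.X : RatFunc Fq) ^ (qq ^ (d + 1))
      = (RatFunc.X ^ (qq ^ d - 1)) ^ (qq - 1) * RatFunc.X ^ (qq ^ d - 1)
        * RatFunc.X ^ (qq - 1) * RatFunc.X := by
  rw [← pow_mul, ← pow_add, ← pow_add, ← pow_succ]
  congr 1
  have h1 : 1 ≤ qq := q_pos (Fq := Fq)
  have h2 : 1 ≤ qq ^ d := Nat.one_le_pow _ _ (q_pos (Fq := Fq))
  have h3 : qq ^ (d + 1) = qq ^ d * qq := pow_succ qq d
  rw [h3]
  zify [h1, h2]
  ring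

lemma mu_succ_viaG (d : ℕ) :
    mu Fq (d + 1)
      = (RatFunc.X ^ (qq ^ d) * mu Fq d) ^ qq
        - gam Fq d ^ (qq - 1) * (RatFunc.X ^ (qq ^ d) * mu Fq d) := by
  rw [mu, Estep_viaG, G_at_top]

lemma CfromN (d : ℕ)
    (hN : gam Fq d ^ (qq - 1) * RatFunc.X ^ (qq ^ d - 1) = mu Fq d ^ (qq - 1)) :
    mu Fq (d + 1) = (RatFunc.X ^ (qq ^ (d + 1)) - RatFunc.X) * mu Fq d ^ qq := by
  rw [mu_succ_viaG, mul_pow, ← pow_mul, ← pow_succ, X_pow_qd1, pow_q_eq (mu Fq d),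
    X_pow_qd d]
  linear_combination (-(RatFunc.X * mu Fq d)) * hN

lemma gam_succ (d : ℕ) :
    gam Fq (d + 1)
      = gam Fq d ^ qq - (RatFunc.X ^ (qq ^ d) * mu Fq d) ^ (qq - 1) * gam Fq d := by
  rw [gam, Gstep, ← gam]

lemma Nlem : ∀ d : ℕ,
    gam Fq d ^ (qq - 1) * RatFunc.X ^ (qq ^ d - 1) = mu Fq d ^ (qq - 1) := by
  intro d
  induction d with
  | zero => simp [gam_zero, mu_zero]
  | succ d ih =>
    have hC := CfromN d ih
    have key : RatFunc.X ^ (qq ^ d) * gam Fq (d + 1) * mu Fq d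
        = -(mu Fq (d + 1)) * gam Fq d := by
      rw [gam_succ, hC, pow_q_eq (gam Fq d), pow_q_eq (mu Fq d), X_pow_qd1, X_pow_qd d]
      linear_combination (norm := ring_nf) (RatFunc.X * gam Fq d * mu Fq d) * ih
    have key3 : (RatFunc.X ^ (qq ^ d)) ^ (qq - 1) * gam Fq (d + 1) ^ (qq - 1)
        * mu Fq d ^ (qq - 1) = mu Fq (d + 1) ^ (qq - 1) * gam Fq d ^ (qq - 1) := by
      have h := congrArg (fun y : RatFunc Fq => y ^ (qq - 1)) key
      simp only [neg_mul] at h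
      rw [mul_pow, mul_pow, neg_pow_qm1, mul_pow] at h
      exact h
    have he : qq ^ d * (qq - 1) + (qq ^ d - 1) = qq ^ (d + 1) - 1 := by
      have h1 : 1 ≤ qq := q_pos (Fq := Fq)
      have h2 : 1 ≤ qq ^ d := Nat.one_le_pow _ _ (q_pos (Fq := Fq))
      have h4 : 1 ≤ qq ^ (d + 1) := Nat.one_le_pow _ _ (q_pos (Fq := Fq))
      zify [h1, h2, h4]
      ring
    have hsplit : (RatFunc.X : RatFunc Fq) ^ (qq ^ (d + 1) - 1)
        = (RatFunc.X ^ (qq ^ d)) ^ (qq - 1) * RatFunc.X ^ (qq ^ d - 1) := by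
      rw [← pow_mul, ← pow_add, he]
    apply mul_right_cancel₀ (pow_ne_zero (qq - 1) (mu_ne d))
    rw [hsplit]
    linear_combination RatFunc.X ^ (qq ^ d - 1) * key3 + mu Fq (d + 1) ^ (qq - 1) * ih

lemma Clem (d : ℕ) :
    mu Fq (d + 1) = (RatFunc.X ^ (qq ^ (d + 1)) - RatFunc.X) * mu Fq d ^ qq :=
  CfromN d (Nlem d)

variable (Fq)

noncomputable def cP (d : ℕ) : RatFunc Fq :=
  ∏ e ∈ Finset.range d, (-(mu Fq e ^ (qq - 1)))

variable {Fq}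

lemma cP_zero : cP Fq 0 = 1 := by rw [cP, Finset.prod_range_zero]

lemma cP_succ (d : ℕ) : cP Fq (d + 1) = cP Fq d * (-(mu Fq d ^ (qq - 1))) := by
  rw [cP, Finset.prod_range_succ, ← cP]

lemma cP_ne (d : ℕ) : cP Fq d ≠ 0 := by
  rw [cP]
  exact Finset.prod_ne_zero_iff.2 fun e _ =>
    neg_ne_zero.2 (pow_ne_zero _ (mu_ne e))

lemma mu_eq_l_mul_cP (l : ℕ → RatFunc Fq) (hl0 : l 0 = 1)
    (hl : ∀ i, l (i + 1) = (RatFunc.X - RatFunc.X ^ qq ^ (i + 1)) * l i) :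
    ∀ d, mu Fq d = l d * cP Fq d := by
  intro d
  induction d with
  | zero => rw [mu_zero, hl0, cP_zero, one_mul]
  | succ d ih =>
    rw [Clem, hl, cP_succ, pow_q_eq (mu Fq d)]
    linear_combination ((RatFunc.X ^ (qq ^ (d + 1)) - RatFunc.X) * mu Fq d ^ (qq - 1)) * ih

end Numeric

section PolyLevel

lemma derivative_finset_prod {R : Type} [CommRing R] {ι : Type} [DecidableEq ι]
    (s : Finset ι) (f : ι → R) :
    derivative (∏ i ∈ s, (X - C (f i))) = ∑ i ∈ s, ∏ j ∈ s.erase i, (X - C (f j)) := by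
  induction s using Finset.induction_on with
  | empty => simp
  | insert a s h ih =>
    rw [Finset.prod_insert h, derivative_mul, derivative_sub, derivative_X, derivative_C,
      sub_zero, one_mul, ih, Finset.sum_insert h, Finset.erase_insert h, Finset.mul_sum]
    congr 1
    refine Finset.sum_congr rfl fun i hi => ?_
    have hia : a ≠ i := fun hai => h (hai ▸ hi)
    rw [Finset.erase_insert_of_ne hia, Finset.prod_insert
      (fun hmem => h (Finset.mem_of_mem_erase hmem))]

lemma infinite_K : Infinite (RatFunc Fq) :=
  Infinite.of_injective (algebraMap (Polynomial Fq) (RatFunc Fq))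
    (RatFunc.algebraMap_injective Fq)

variable (Fq)

noncomputable def Ppoly (d : ℕ) : Polynomial (RatFunc Fq) :=
  ∏ c : Fin d → Fq, (X - C (vth d c))

variable {Fq}

lemma eval_Ppoly (d : ℕ) (z : RatFunc Fq) :
    eval z (Ppoly Fq d) = ∏ c : Fin d → Fq, (z - vth d c) := by
  rw [Ppoly, eval_prod]
  exact Finset.prod_congr rfl fun c _ => by rw [eval_sub, eval_X, eval_C]

lemma Ppoly_zero : Ppoly Fq 0 = X := by
  haveI : Unique (Fin 0 → Fq) := Pi.uniqueOfIsEmpty _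
  rw [Ppoly, Fintype.prod_unique fun c : Fin 0 → Fq => (X - C (vth 0 c))]
  have : vth (Fq := Fq) 0 default = 0 := by
    rw [vth, vpoly]
    simp
  rw [this, map_zero, sub_zero]

lemma Ppoly_rec (d : ℕ) :
    Ppoly Fq (d + 1) = Ppoly Fq d ^ qq - C (mu Fq d ^ (qq - 1)) * Ppoly Fq d := by
  haveI := infinite_K (Fq := Fq)
  apply Polynomial.funext
  intro z
  rw [eval_Ppoly, ← Eprod, funE_succ, show thw Fq d = RatFunc.X ^ d from rfl, ← mu]
  rw [eval_sub, eval_pow, eval_mul, eval_C, eval_Ppoly, ← Eprod]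

lemma deriv_Ppoly : ∀ d : ℕ, derivative (Ppoly Fq d) = C (cP Fq d) := by
  intro d
  induction d with
  | zero => rw [Ppoly_zero, cP_zero, derivative_X, C_1]
  | succ d ih =>
    rw [Ppoly_rec, derivative_sub, derivative_pow, derivative_C_mul, ih, cast_q_zero,
      C_0, zero_mul, zero_mul, zero_sub, ← C_mul, ← C_neg]
    congr 1
    rw [cP_succ]
    ring

lemma sum_prod_erase (d : ℕ) [DecidableEq (Fin d → Fq)] (z : RatFunc Fq) :
    ∑ c : Fin d → Fq, ∏ c' ∈ Finset.univ.erase c, (z - vth d c') = cP Fq d := by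
  have h1 : derivative (Ppoly Fq d)
      = ∑ c : Fin d → Fq, ∏ c' ∈ Finset.univ.erase c, (X - C (vth d c')) := by
    rw [Ppoly, derivative_finset_prod]
  have h2 : (C (cP Fq d) : Polynomial (RatFunc Fq))
      = ∑ c : Fin d → Fq, ∏ c' ∈ Finset.univ.erase c, (X - C (vth d c')) := by
    rw [← deriv_Ppoly d, h1]
  have h3 := congrArg (eval z) h2
  simp only [eval_C, eval_finset_sum, eval_prod, eval_sub, eval_X] at h3
  exact h3.symm

lemma prod_erase_self (d : ℕ) [DecidableEq (Fin d → Fq)] (c₀ : Fin d → Fq) :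
    ∏ c' ∈ Finset.univ.erase c₀, (vth d c₀ - vth d c') = cP Fq d := by
  have h := sum_prod_erase d (vth (Fq := Fq) d c₀)
  rw [Finset.sum_eq_single c₀] at h
  · exact h
  · intro c _ hc
    refine Finset.prod_eq_zero (Finset.mem_erase.2 ⟨hc.symm, Finset.mem_univ _⟩) ?_
    rw [sub_self]
  · intro hc; exact absurd (Finset.mem_univ _) hc

lemma sum_pow_prod_erase (d j : ℕ) [DecidableEq (Fin d → Fq)] (hj : j < d) (z : RatFunc Fq) :
    ∑ c : Fin d → Fq, (vth d c) ^ (qq ^ j) * ∏ c' ∈ Finset.univ.erase c, (z - vth d c')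
      = cP Fq d * z ^ (qq ^ j) := by
  classical
  set Sp : Polynomial (RatFunc Fq) :=
    ∑ c : Fin d → Fq, C ((vth d c) ^ (qq ^ j)) * ∏ c' ∈ Finset.univ.erase c, (X - C (vth d c'))
    with hSp
  have hzero : Sp - C (cP Fq d) * X ^ (qq ^ j) = 0 := by
    by_contra hne
    set Rp := Sp - C (cP Fq d) * X ^ (qq ^ j) with hRp
    have hdeg : Rp.natDegree ≤ qq ^ d - 1 := by
      refine le_trans (natDegree_sub_le _ _) (max_le ?_ ?_)
      · refine natDegree_sum_le_of_forall_le _ _ fun c _ => ?_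
        refine le_trans (natDegree_C_mul_le _ _) ?_
        refine le_trans (natDegree_prod_le _ _) (le_of_eq ?_)
        calc ∑ c' ∈ Finset.univ.erase c, (X - C (vth d c')).natDegree
            = ∑ c' ∈ Finset.univ.erase c, 1 :=
              Finset.sum_congr rfl fun c' _ => natDegree_X_sub_C _
          _ = (Finset.univ.erase c).card := by rw [Finset.sum_const, smul_eq_mul, mul_one]
          _ = qq ^ d - 1 := by
              rw [Finset.card_erase_of_mem (Finset.mem_univ _), Finset.card_univ, card_tuple]
      · refine le_trans (natDegree_C_mul_le _ _) ?_
        rw [natDegree_X_pow]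
        have h1 : qq ^ j ≤ qq ^ (d - 1) :=
          Nat.pow_le_pow_right (q_pos (Fq := Fq)) (by omega)
        have h2 : qq ^ (d - 1) * 2 ≤ qq ^ (d - 1) * qq :=
          Nat.mul_le_mul_left _ (q_ge_two (Fq := Fq))
        have h3 : qq ^ (d - 1) * qq = qq ^ d := by
          rw [← pow_succ]
          congr 1
          omega
        omega
    have hroots : ∀ c₀ : Fin d → Fq, Rp.IsRoot (vth d c₀) := by
      intro c₀
      have heval : eval (vth d c₀) Sp = (vth d c₀) ^ (qq ^ j) * cP Fq d := by
        rw [hSp, eval_finset_sum, Finset.sum_eq_single c₀]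
        · rw [eval_mul, eval_C, eval_prod]
          congr 1
          rw [← prod_erase_self d c₀]
          exact Finset.prod_congr rfl fun c' _ => by rw [eval_sub, eval_X, eval_C]
        · intro c _ hc
          rw [eval_mul, eval_prod]
          refine mul_eq_zero_of_right _ ?_
          refine Finset.prod_eq_zero (Finset.mem_erase.2 ⟨hc.symm, Finset.mem_univ _⟩) ?_
          rw [eval_sub, eval_X, eval_C, sub_self]
        · intro hc; exact absurd (Finset.mem_univ _) hc
      rw [IsRoot, hRp, eval_sub, heval, eval_mul, eval_C, eval_pow, eval_X]
      ring
    have hsub : Finset.univ.image (vth (Fq := Fq) d) ⊆ Rp.roots.toFinset := by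
      intro x hx
      obtain ⟨c₀, _, rfl⟩ := Finset.mem_image.1 hx
      rw [Multiset.mem_toFinset, mem_roots hne]
      exact hroots c₀
    have hcard1 : (Finset.univ.image (vth (Fq := Fq) d)).card = qq ^ d := by
      rw [Finset.card_image_of_injective _ (vth_injective d), Finset.card_univ, card_tuple]
    have hcard2 : Rp.roots.toFinset.card ≤ qq ^ d - 1 :=
      le_trans (Multiset.toFinset_card_le _) (le_trans (card_roots' Rp) hdeg)
    have := Finset.card_le_card hsub
    have hq1 : 1 ≤ qq ^ d := Nat.one_le_pow _ _ (q_pos (Fq := Fq))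
    omega
    
  have heq : Sp = C (cP Fq d) * X ^ (qq ^ j) := by
    have := sub_eq_zero.1 hzero
    exact this
  have h3 := congrArg (eval z) heq
  rw [hSp, eval_finset_sum, eval_mul, eval_C, eval_pow, eval_X] at h3
  rw [← h3]
  refine Finset.sum_congr rfl fun c _ => ?_
  rw [eval_mul, eval_C, eval_prod]
  congr 1
  exact Finset.prod_congr rfl fun c' _ => by rw [eval_sub, eval_X, eval_C]

lemma inv_eq_prod_erase (d : ℕ) [DecidableEq (Fin d → Fq)] (c : Fin d → Fq) :
    (RatFunc.X ^ d - vth d c)⁻¹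
      = (∏ c' ∈ Finset.univ.erase c, (RatFunc.X ^ d - vth d c')) * (mu Fq d)⁻¹ := by
  have hmu : mu Fq d = (RatFunc.X ^ d - vth d c) *
      ∏ c' ∈ Finset.univ.erase c, (RatFunc.X ^ d - vth d c') := by
    rw [mu_prod]
    exact (Finset.mul_prod_erase _ _ (Finset.mem_univ c)).symm
  have hprodne : (∏ c' ∈ Finset.univ.erase c, (RatFunc.X ^ d - vth d c')) ≠ 0 :=
    Finset.prod_ne_zero_iff.2 fun c' _ => vth_sub_ne d c'
  rw [hmu, mul_inv, mul_comm ((RatFunc.X ^ d - vth d c)⁻¹) _, ← mul_assoc,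
    mul_inv_cancel₀ hprodne, one_mul]

lemma sum_inv (d : ℕ) :
    ∑ c : Fin d → Fq, (RatFunc.X ^ d - vth d c)⁻¹ = cP Fq d * (mu Fq d)⁻¹ := by
  classical
  apply mul_right_cancel₀ (mu_ne (Fq := Fq) d)
  rw [Finset.sum_mul]
  have : ∀ c : Fin d → Fq, (RatFunc.X ^ d - vth d c)⁻¹ * mu Fq d
      = ∏ c' ∈ Finset.univ.erase c, (RatFunc.X ^ d - vth d c') := by
    intro c
    rw [inv_eq_prod_erase]
    field_simp [mu_ne (Fq := Fq) d]
  rw [Finset.sum_congr rfl fun c _ => this c, sum_prod_erase]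
  rw [mul_assoc, inv_mul_cancel₀ (mu_ne (Fq := Fq) d), mul_one]

lemma sum_pow_qj_sub_one (d j : ℕ) (hj1 : 1 ≤ j) (hjd : j < d) :
    ∑ c : Fin d → Fq, (RatFunc.X ^ d - vth d c) ^ (qq ^ j - 1) = 0 := by
  classical
  have hterm : ∀ c : Fin d → Fq, (RatFunc.X ^ d - vth d c) ^ (qq ^ j - 1)
      = ((RatFunc.X ^ d) ^ (qq ^ j) * ∏ c' ∈ Finset.univ.erase c, (RatFunc.X ^ d - vth d c')
        - (vth d c) ^ (qq ^ j) * ∏ c' ∈ Finset.univ.erase c, (RatFunc.X ^ d - vth d c'))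
        * (mu Fq d)⁻¹ := by
    intro c
    have hx : RatFunc.X ^ d - vth d c ≠ 0 := vth_sub_ne d c
    have h1 : (RatFunc.X ^ d - vth d c) ^ (qq ^ j - 1)
        = (RatFunc.X ^ d - vth d c) ^ (qq ^ j) * (RatFunc.X ^ d - vth d c)⁻¹ := by
      have := pow_sub₀ (RatFunc.X ^ d - vth d c) hx
        (Nat.one_le_pow j qq (q_pos (Fq := Fq)))
      rw [this, pow_one]
    rw [h1, frob_sub j, inv_eq_prod_erase]
    ring
  rw [Finset.sum_congr rfl fun c _ => hterm c, ← Finset.sum_mul, Finset.sum_sub_distrib,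
    ← Finset.mul_sum, sum_prod_erase, sum_pow_prod_erase d j hjd, mul_comm (cP Fq d) _,
    sub_self, zero_mul]

end PolyLevel

section Twist

lemma eval2_frob (j : ℕ) (a : Polynomial Fq) :
    Polynomial.eval₂ (phi Fq) (RatFunc.X ^ (qq ^ j)) a
      = (algebraMap (Polynomial Fq) (RatFunc Fq) a) ^ (qq ^ j) := by
  induction a using Polynomial.induction_on' with
  | add p r hp hr => rw [eval₂_add, map_add, frob_add, hp, hr]
  | monomial n r =>
    rw [eval₂_monomial]
    have halg : algebraMap (Polynomial Fq) (RatFunc Fq) (monomial n r)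
        = phi Fq r * RatFunc.X ^ n := by
      rw [← C_mul_X_pow_eq_monomial, map_mul, map_pow, RatFunc.algebraMap_X]
      rfl
    rw [halg, mul_pow, phi_pow_pow, ← pow_mul, ← pow_mul, mul_comm n (qq ^ j)]

lemma eval_twist (j : ℕ) (a : Polynomial Fq) :
    eval (RatFunc.X ^ (qq ^ j)) (Polynomial.map (phi Fq) a)
      = (algebraMap (Polynomial Fq) (RatFunc Fq) a) ^ (qq ^ j) := by
  rw [eval_map]
  exact eval2_frob j a

lemma eval2_eq_map (a : Polynomial Fq) :
    a.eval₂ (Polynomial.C.comp ((algebraMap (Polynomial Fq) (RatFunc Fq)).comp Polynomial.C))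
      (X : Polynomial (RatFunc Fq)) = Polynomial.map (phi Fq) a := rfl

lemma Xpow_injective : Function.Injective (fun i : ℕ => (RatFunc.X : RatFunc Fq) ^ (qq ^ i)) := by
  intro i j h
  simp only at h
  have h1 : algebraMap (Polynomial Fq) (RatFunc Fq) (X ^ (qq ^ i))
      = algebraMap (Polynomial Fq) (RatFunc Fq) (X ^ (qq ^ j)) := by
    rw [map_pow, map_pow, RatFunc.algebraMap_X]
    exact h
  have h2 := RatFunc.algebraMap_injective Fq h1
  have h3 := congrArg Polynomial.natDegree h2
  rw [natDegree_X_pow, natDegree_X_pow] at h3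
  exact Nat.pow_right_injective (q_ge_two (Fq := Fq)) h3

noncomputable def pa (d : ℕ) (c : Fin d → Fq) : Polynomial Fq :=
  X ^ d - vpoly d c

lemma degree_vpoly_lt (d : ℕ) (c : Fin d → Fq) : (vpoly d c).degree < (d : ℕ) := by
  rw [vpoly]
  refine lt_of_le_of_lt (degree_sum_le _ _) ?_
  rw [Finset.sup_lt_iff (by exact WithBot.bot_lt_coe _)]
  intro j _
  refine lt_of_le_of_lt (degree_C_mul_X_pow_le _ _) ?_
  exact_mod_cast WithBot.coe_lt_coe.2 j.isLt

lemma pa_monic (d : ℕ) (c : Fin d → Fq) : (pa d c).Monic :=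
  monic_X_pow_sub (degree_vpoly_lt d c)

lemma pa_natDegree (d : ℕ) (c : Fin d → Fq) : (pa d c).natDegree = d := by
  have hdeg : (pa d c).degree = (d : ℕ) := by
    rw [pa, degree_sub_eq_left_of_degree_lt, degree_X_pow]
    rw [degree_X_pow]
    exact degree_vpoly_lt d c
  exact natDegree_eq_of_degree_eq_some hdeg

lemma pa_coeff_top (d : ℕ) (c : Fin d → Fq) : (pa d c).coeff d = 1 := by
  have := (pa_monic d c).coeff_natDegree
  rwa [pa_natDegree] at this

lemma alg_pa (d : ℕ) (c : Fin d → Fq) :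
    algebraMap (Polynomial Fq) (RatFunc Fq) (pa d c) = RatFunc.X ^ d - vth d c := by
  rw [pa, map_sub, map_pow, RatFunc.algebraMap_X, vth]

lemma vpoly_injective (d : ℕ) : Function.Injective (vpoly (Fq := Fq) d) := by
  intro c c' h
  funext j
  have := congrArg (fun p => Polynomial.coeff p (j : ℕ)) h
  simpa [coeff_vpoly, j.isLt] using this

lemma pa_injective (d : ℕ) : Function.Injective (pa (Fq := Fq) d) := by
  intro c c' h
  rw [pa, pa] at h
  exact vpoly_injective d (sub_right_injective h)

lemma image_pa (d : ℕ) [DecidableEq (Polynomial Fq)] :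
    {a : Polynomial Fq | a.Monic ∧ a.natDegree = d}
      = ↑(Finset.image (pa (Fq := Fq) d) Finset.univ) := by
  ext a
  simp only [Set.mem_setOf_eq, Finset.coe_image, Set.mem_image, Finset.mem_coe]
  constructor
  · rintro ⟨hm, hd⟩
    refine ⟨fun j => -(a.coeff (j : ℕ)), Finset.mem_coe.2 (Finset.mem_univ _), ?_⟩
    have hsum : a = X ^ d + ∑ i ∈ Finset.range d, C (a.coeff i) * X ^ i := by
      conv_lhs => rw [hm.as_sum]
      rw [hd]
    rw [pa, vpoly, Fin.sum_univ_eq_sum_range (fun i => C (-a.coeff i) * X ^ i) d]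
    conv_rhs => rw [hsum]
    simp only [map_neg, neg_mul, Finset.sum_neg_distrib, sub_neg_eq_add]
  · rintro ⟨c, -, rfl⟩
    exact ⟨pa_monic d c, pa_natDegree d c⟩

end Twist

end TPS

open TPS in
/-- For all `d ≥ 0`, the twisted power sum `S_d(1; χ_t) = ∑_{a ∈ A⁺(d)} a(t)/a`
equals `b_d(t)/l_d` in `F_q(θ)[t]`, where `a(t)` is `a` with `θ` replaced by `t`. -/
theorem twistedPowerSum_one_chi
    (Fq : Type) [Field Fq] [Fintype Fq] (q : ℕ) (hq : q = Fintype.card Fq)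
    (θ : RatFunc Fq) (hθ : θ = RatFunc.X)
    (l : ℕ → RatFunc Fq) (hl0 : l 0 = 1)
    (hl : ∀ i, l (i + 1) = (θ - θ ^ q ^ (i + 1)) * l i)
    (b : ℕ → Polynomial (RatFunc Fq)) (hb0 : b 0 = 1)
    (hb : ∀ i, b (i + 1) = b i * (X - C (θ ^ q ^ i)))
    (d : ℕ) :
    ∑ᶠ a ∈ {a : Polynomial Fq | a.Monic ∧ a.natDegree = d},
      C (algebraMap (Polynomial Fq) (RatFunc Fq) a)⁻¹ *
        a.eval₂ (C.comp ((algebraMap (Polynomial Fq) (RatFunc Fq)).comp Polynomial.C)) X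
      = C (l d)⁻¹ * b d := by
  subst hq hθ
  classical
  -- facts about b
  have hbprod : ∀ e, b e
      = ∏ i ∈ Finset.range e, (X - C ((RatFunc.X : RatFunc Fq) ^ (Fintype.card Fq) ^ i)) := by
    intro e
    induction e with
    | zero => simpa using hb0
    | succ e ih => rw [hb, ih, Finset.prod_range_succ]
  have hbmonic : (b d).Monic := by
    rw [hbprod]
    exact monic_prod_of_monic _ _ fun i _ => monic_X_sub_C _
  have hbdeg : (b d).natDegree = d := by
    rw [hbprod, natDegree_prod _ _ fun i _ => (monic_X_sub_C _).ne_zero]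
    simp only [natDegree_X_sub_C]
    rw [Finset.sum_const, Finset.card_range, smul_eq_mul, mul_one]
  have hbcoeff : (b d).coeff d = 1 := by
    have h := hbmonic.coeff_natDegree
    rwa [hbdeg] at h
  have hbeval : ∀ i < d,
      eval ((RatFunc.X : RatFunc Fq) ^ (Fintype.card Fq) ^ i) (b d) = 0 := by
    intro i hi
    rw [hbprod, eval_prod]
    refine Finset.prod_eq_zero (Finset.mem_range.2 hi) ?_
    rw [eval_sub, eval_X, eval_C, sub_self]
  -- mu facts
  have hM : ∀ e, TPS.mu Fq e = l e * TPS.cP Fq e := TPS.mu_eq_l_mul_cP l hl0 hl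
  have hlne : l d ≠ 0 := by
    intro h
    exact TPS.mu_ne (Fq := Fq) d (by rw [hM d, h, zero_mul])
  -- convert the finsum to a sum over tuples
  rw [TPS.image_pa d, finsum_mem_coe_finset,
    Finset.sum_image (fun c _ c' _ h => TPS.pa_injective d h)]
  have hsummand : ∀ c : Fin d → Fq,
      C (algebraMap (Polynomial Fq) (RatFunc Fq) (TPS.pa d c))⁻¹ *
        (TPS.pa d c).eval₂
          (C.comp ((algebraMap (Polynomial Fq) (RatFunc Fq)).comp Polynomial.C)) X
      = C ((RatFunc.X ^ d - TPS.vth d c)⁻¹) * Polynomial.map (TPS.phi Fq) (TPS.pa d c) := by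
    intro c
    rw [TPS.eval2_eq_map, TPS.alg_pa]
  rw [Finset.sum_congr rfl fun c _ => hsummand c]
  set SP : Polynomial (RatFunc Fq) :=
    ∑ c : Fin d → Fq,
      C ((RatFunc.X ^ d - TPS.vth d c)⁻¹) * Polynomial.map (TPS.phi Fq) (TPS.pa d c) with hSP
  -- degree, coefficient, evaluation facts for SP
  have hSPdeg : SP.natDegree ≤ d := by
    rw [hSP]
    refine natDegree_sum_le_of_forall_le _ _ fun c _ => ?_
    refine le_trans (natDegree_C_mul_le _ _) (le_trans natDegree_map_le ?_)
    rw [TPS.pa_natDegree]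
  have hSPcoeff : SP.coeff d = TPS.cP Fq d * (TPS.mu Fq d)⁻¹ := by
    rw [hSP, finset_sum_coeff, ← TPS.sum_inv (Fq := Fq) d]
    refine Finset.sum_congr rfl fun c _ => ?_
    rw [coeff_C_mul, coeff_map, TPS.pa_coeff_top, map_one, mul_one]
  have hSPeval : ∀ i < d,
      eval ((RatFunc.X : RatFunc Fq) ^ (Fintype.card Fq) ^ i) SP = 0 := by
    intro i hi
    have hterm : ∀ c : Fin d → Fq,
        eval ((RatFunc.X : RatFunc Fq) ^ (Fintype.card Fq) ^ i)
          (C ((RatFunc.X ^ d - TPS.vth d c)⁻¹) * Polynomial.map (TPS.phi Fq) (TPS.pa d c))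
        = (RatFunc.X ^ d - TPS.vth d c) ^ ((Fintype.card Fq) ^ i - 1) := by
      intro c
      rw [eval_mul, eval_C, TPS.eval_twist, TPS.alg_pa,
        pow_sub₀ _ (TPS.vth_sub_ne d c) (Nat.one_le_pow _ _ (TPS.q_pos (Fq := Fq))), pow_one]
      ring
    rw [hSP, eval_finset_sum, Finset.sum_congr rfl fun c _ => hterm c]
    rcases Nat.eq_zero_or_pos i with hi0 | hi1
    · subst hi0
      simp only [pow_zero, Nat.sub_self]
      rw [Finset.sum_const, Finset.card_univ, TPS.card_tuple, nsmul_eq_mul, mul_one,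
        TPS.cast_q_pow_zero d hi]
    · exact TPS.sum_pow_qj_sub_one d i hi1 hi
  -- the interpolation argument
  have hkey : C (l d) * SP = b d := by
    have hΔcoeff : (C (l d) * SP - b d).coeff d = 0 := by
      rw [coeff_sub, coeff_C_mul, hSPcoeff, hbcoeff, ← mul_assoc, ← hM d,
        mul_inv_cancel₀ (TPS.mu_ne (Fq := Fq) d), sub_self]
    have hΔdeg : (C (l d) * SP - b d).natDegree ≤ d :=
      le_trans (natDegree_sub_le _ _)
        (max_le (le_trans (natDegree_C_mul_le _ _) hSPdeg) (le_of_eq hbdeg))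
    have hΔeval : ∀ i < d,
        eval ((RatFunc.X : RatFunc Fq) ^ (Fintype.card Fq) ^ i) (C (l d) * SP - b d) = 0 := by
      intro i hi
      rw [eval_sub, eval_mul, eval_C, hSPeval i hi, hbeval i hi, mul_zero, sub_zero]
    by_contra hne
    have hne' : C (l d) * SP - b d ≠ 0 := sub_ne_zero.2 hne
    rcases Nat.eq_zero_or_pos d with hd0 | hd0
    · subst hd0
      apply hne'
      rw [Polynomial.eq_C_of_natDegree_le_zero hΔdeg, hΔcoeff, C_0]
    · have hnd : (C (l d) * SP - b d).natDegree < d := by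
        rcases lt_or_eq_of_le hΔdeg with h | h
        · exact h
        · exfalso
          apply hne'
          apply leadingCoeff_eq_zero.1
          rw [leadingCoeff, h, hΔcoeff]
      have hsub : (Finset.range d).image
            (fun i => (RatFunc.X : RatFunc Fq) ^ (Fintype.card Fq) ^ i)
          ⊆ (C (l d) * SP - b d).roots.toFinset := by
        intro x hx
        obtain ⟨i, hi, rfl⟩ := Finset.mem_image.1 hx
        rw [Multiset.mem_toFinset, mem_roots hne']
        exact hΔeval i (Finset.mem_range.1 hi)
      have hc1 : ((Finset.range d).image
          fun i => (RatFunc.X : RatFunc Fq) ^ (Fintype.card Fq) ^ i).card = d := by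
        rw [Finset.card_image_of_injective _ (TPS.Xpow_injective (Fq := Fq)),
          Finset.card_range]
      have hc2 := Finset.card_le_card hsub
      rw [hc1] at hc2
      have hc3 : (C (l d) * SP - b d).roots.toFinset.card < d :=
        lt_of_le_of_lt (le_trans (Multiset.toFinset_card_le _) (card_roots' _)) hnd
      omega
  calc SP = C ((l d)⁻¹) * (C (l d) * SP) := by
        rw [← mul_assoc, ← C_mul, inv_mul_cancel₀ hlne, C_1, one_mul]
    _ = C (l d)⁻¹ * b d := by rw [hkey]
end

section
/- For all d ≥ 0, the twisted power sum Σ_{a monic of degree d} a(t_1)a(t_2)/a equals b_d(t_1) b_d(t_2) / l_d in F_q(θ)[t_1, t_2], provided q > 2. -/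
set_option linter.unusedSectionVars false
open scoped Classical

set_option autoImplicit false
set_option maxHeartbeats 1000000

open Polynomial

section DDStep

variable {R : Type*} [CommRing R]

noncomputable def ddStep (a : R) (m : R[X]) : R[X] := m /ₘ (X - C a)

lemma ddStep_spec (a : R) (m : R[X]) :
    (X - C a) * ddStep a m + C (m.eval a) = m := by
  have h := modByMonic_add_div m (X - C a)
  rw [modByMonic_X_sub_C_eq_C_eval] at h
  rw [ddStep]; linear_combination h

lemma ddStep_eval (a x : R) (m : R[X]) :
    m.eval x - m.eval a = (x - a) * (ddStep a m).eval x := by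
  have h := congrArg (Polynomial.eval x) (ddStep_spec a m)
  simp only [eval_add, eval_mul, eval_sub, eval_X, eval_C] at h
  linear_combination -h

variable [IsDomain R]

lemma X_sub_C_mul_cancel {a : R} {u v : R[X]} {r s : R}
    (h : (X - C a) * u + C r = (X - C a) * v + C s) : u = v := by
  by_contra hne
  have h2 : (X - C a) * (u - v) = C s - C r := by ring_nf; linear_combination h
  have h3 : ((X - C a) * (u - v)).natDegree = 0 := by
    rw [h2, ← C_sub, natDegree_C]
  rw [natDegree_mul (X_sub_C_ne_zero a) (sub_ne_zero.mpr hne), natDegree_X_sub_C] at h3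
  omega

lemma ddStep_add (a : R) (m n : R[X]) :
    ddStep a (m + n) = ddStep a m + ddStep a n := by
  apply X_sub_C_mul_cancel (a := a) (r := (m + n).eval a) (s := m.eval a + n.eval a)
  rw [ddStep_spec, mul_add]
  have h1 := ddStep_spec a m
  have h2 := ddStep_spec a n
  rw [C_add]; linear_combination -h1 - h2

lemma ddStep_C_mul (a : R) (r : R) (m : R[X]) :
    ddStep a (C r * m) = C r * ddStep a m := by
  apply X_sub_C_mul_cancel (a := a) (r := (C r * m).eval a) (s := r * m.eval a)
  rw [ddStep_spec]
  have h1 := ddStep_spec a m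
  rw [C_mul]; linear_combination -(C r) * h1

lemma ddStep_comm (a b : R) (m : R[X]) :
    ddStep a (ddStep b m) = ddStep b (ddStep a m) := by
  by_contra hne
  have h1 : (X - C b) * ((X - C a) * ddStep a (ddStep b m) + C ((ddStep b m).eval a))
      + C (m.eval b) = m := by rw [ddStep_spec, ddStep_spec]
  have h2 : (X - C a) * ((X - C b) * ddStep b (ddStep a m) + C ((ddStep a m).eval b))
      + C (m.eval a) = m := by rw [ddStep_spec, ddStep_spec]
  have h3 : (X - C a) * (X - C b) * (ddStep a (ddStep b m) - ddStep b (ddStep a m))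
      = (X - C a) * C ((ddStep a m).eval b) + C (m.eval a)
        - (X - C b) * C ((ddStep b m).eval a) - C (m.eval b) := by
    linear_combination h1 - h2
  have hR : ((X - C a) * C ((ddStep a m).eval b) + C (m.eval a)
        - (X - C b) * C ((ddStep b m).eval a) - C (m.eval b)).natDegree ≤ 1 := by
    compute_degree
  have hL : ((X - C a) * (X - C b) *
      (ddStep a (ddStep b m) - ddStep b (ddStep a m))).natDegree = 2 +
      (ddStep a (ddStep b m) - ddStep b (ddStep a m)).natDegree := by
    rw [natDegree_mul (mul_ne_zero (X_sub_C_ne_zero a) (X_sub_C_ne_zero b))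
      (sub_ne_zero.mpr hne), natDegree_mul (X_sub_C_ne_zero a) (X_sub_C_ne_zero b),
      natDegree_X_sub_C, natDegree_X_sub_C]
  rw [h3] at hL
  omega

lemma ddStep_swap {a b : R} (hab : a ≠ b) (m : R[X]) :
    (ddStep a m).eval b = (ddStep b m).eval a := by
  have h1 := ddStep_eval a b m
  have h2 := ddStep_eval b a m
  have hba : b - a ≠ 0 := sub_ne_zero.mpr (Ne.symm hab)
  apply mul_left_cancel₀ hba
  rw [← h1]
  linear_combination -h2

lemma ddStep_monic {m : R[X]} (hm : m.Monic) (h1 : 1 ≤ m.natDegree) (a : R) :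
    (ddStep a m).Monic ∧ (ddStep a m).natDegree = m.natDegree - 1 := by
  have hdeg : (ddStep a m).natDegree = m.natDegree - 1 := by
    rw [ddStep, natDegree_divByMonic m (monic_X_sub_C a), natDegree_X_sub_C]
  have hne : ddStep a m ≠ 0 := by
    rw [ddStep, Ne, divByMonic_eq_zero_iff (monic_X_sub_C a), degree_X_sub_C, not_lt]
    calc (1 : WithBot ℕ) ≤ (m.natDegree : WithBot ℕ) := by exact_mod_cast h1
    _ = m.degree := (degree_eq_natDegree hm.ne_zero).symm
  refine ⟨?_, hdeg⟩
  have hmulne : (X - C a) * ddStep a m ≠ 0 := mul_ne_zero (X_sub_C_ne_zero a) hne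
  have hnd : ((X - C a) * ddStep a m).natDegree = m.natDegree := by
    rw [natDegree_mul (X_sub_C_ne_zero a) hne, natDegree_X_sub_C, hdeg]; omega
  have hdegC : ((C (m.eval a)) : R[X]).degree < ((X - C a) * ddStep a m).degree := by
    apply lt_of_le_of_lt degree_C_le
    rw [degree_eq_natDegree hmulne, hnd]
    exact_mod_cast (by omega : 0 < m.natDegree)
  have key : m.leadingCoeff = (ddStep a m).leadingCoeff := by
    conv_lhs => rw [← ddStep_spec a m]
    rw [leadingCoeff_add_of_degree_lt' hdegC, leadingCoeff_monic_mul (monic_X_sub_C a)]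
  rw [Monic, ← key]; exact hm

end DDStep

section FqLevel

variable (Fq : Type) [Field Fq] [Fintype Fq]

/-- the node `θ^{q^j}` as a polynomial in `θ`. -/
noncomputable def nodeP (j : ℕ) : Polynomial Fq := X ^ (Fintype.card Fq) ^ j

/-- iterated divided differences with nodes `θ^{q^s}, θ^{q^{s+1}}, ...`. -/
noncomputable def ddIter (s : ℕ) : ℕ → Polynomial (Polynomial Fq) → Polynomial (Polynomial Fq)
  | 0, m => m
  | k + 1, m => ddStep (nodeP Fq (s + k)) (ddIter s k m)

/-- coefficientwise `q`-power Frobenius on `Fq[θ]`, i.e. `h ↦ h^q`. -/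
noncomputable def frq : Polynomial Fq →+* Polynomial Fq :=
  (Polynomial.expand Fq (Fintype.card Fq)).toRingHom

lemma frq_apply (h : Polynomial Fq) : frq Fq h = h ^ (Fintype.card Fq) := by
  have := FiniteField.expand_card h
  simpa [frq] using this

lemma frq_nodeP (j : ℕ) : frq Fq (nodeP Fq j) = nodeP Fq (j + 1) := by
  simp only [frq, nodeP, AlgHom.toRingHom_eq_coe, RingHom.coe_coe, map_pow, Polynomial.expand_X]
  rw [← pow_mul, ← pow_succ']

lemma frq_C (c : Fq) : frq Fq (Polynomial.C c) = Polynomial.C c := by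
  simp [frq]

lemma nodeP_ne {i j : ℕ} (hq : 2 ≤ Fintype.card Fq) (h : i ≠ j) : nodeP Fq i ≠ nodeP Fq j := by
  intro he
  apply h
  have := congrArg Polynomial.natDegree he
  rw [nodeP, nodeP, natDegree_X_pow, natDegree_X_pow] at this
  exact Nat.pow_right_injective hq this

lemma ddIter_succ (s k : ℕ) (m : Polynomial (Polynomial Fq)) :
    ddIter Fq s (k + 1) m = ddStep (nodeP Fq (s + k)) (ddIter Fq s k m) := rfl

lemma ddIter_add (s k : ℕ) (m n : Polynomial (Polynomial Fq)) :
    ddIter Fq s k (m + n) = ddIter Fq s k m + ddIter Fq s k n := by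
  induction k with
  | zero => rfl
  | succ k ih => rw [ddIter_succ, ddIter_succ, ddIter_succ, ih, ddStep_add]

lemma ddIter_C_mul (s k : ℕ) (r : Polynomial Fq) (m : Polynomial (Polynomial Fq)) :
    ddIter Fq s k (Polynomial.C r * m) = Polynomial.C r * ddIter Fq s k m := by
  induction k with
  | zero => rfl
  | succ k ih => rw [ddIter_succ, ddIter_succ, ih, ddStep_C_mul]

lemma ddIter_monic (s : ℕ) {m : Polynomial (Polynomial Fq)} (hm : m.Monic) :
    ∀ k, k ≤ m.natDegree →
      (ddIter Fq s k m).Monic ∧ (ddIter Fq s k m).natDegree = m.natDegree - k := by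
  intro k
  induction k with
  | zero => intro _; exact ⟨hm, by simp [ddIter]⟩
  | succ k ih =>
    intro hk
    obtain ⟨h1, h2⟩ := ih (by omega)
    have := ddStep_monic h1 (by omega) (nodeP Fq (s + k))
    rw [← ddIter_succ] at this
    exact ⟨this.1, by rw [this.2, h2]; omega⟩

lemma ddIter_shift (s k : ℕ) (m : Polynomial (Polynomial Fq)) :
    ddIter Fq s (k + 1) m = ddStep (nodeP Fq s) (ddIter Fq (s + 1) k m) := by
  induction k with
  | zero => simp [ddIter]
  | succ k ih =>
    rw [ddIter_succ, ih, ddIter_succ, ← ddStep_comm]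
    have : s + (k + 1) = s + 1 + k := by omega
    rw [this]

lemma ddIter_sym (hq : 2 ≤ Fintype.card Fq) (k : ℕ) (m : Polynomial (Polynomial Fq)) :
    (ddIter Fq 1 k m).eval (nodeP Fq 0) = (ddIter Fq 0 k m).eval (nodeP Fq k) := by
  cases k with
  | zero => rfl
  | succ k =>
    rw [ddIter_succ, ddStep_swap (nodeP_ne Fq hq (by omega)) (ddIter Fq 1 k m)]
    have h1 : ddStep (nodeP Fq 0) (ddIter Fq 1 k m) = ddIter Fq 0 (k + 1) m := by
      exact (ddIter_shift Fq 0 k m).symm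
    rw [h1, show 1 + k = k + 1 by omega]

lemma ddIter_map_frq (s k : ℕ) (m : Polynomial (Polynomial Fq)) :
    (ddIter Fq s k m).map (frq Fq) = ddIter Fq (s + 1) k (m.map (frq Fq)) := by
  induction k with
  | zero => rfl
  | succ k ih =>
    rw [ddIter_succ, ddIter_succ, ← ih, ddStep, ddStep,
      Polynomial.map_divByMonic _ (monic_X_sub_C _)]
    have hx : ((X - Polynomial.C (nodeP Fq (s + k))).map (frq Fq))
        = X - Polynomial.C (nodeP Fq (s + 1 + k)) := by
      rw [Polynomial.map_sub, Polynomial.map_X, Polynomial.map_C, frq_nodeP,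
        show s + k + 1 = s + 1 + k by omega]
    rw [hx]

end FqLevel

section FqLevel2

open scoped Classical

variable (Fq : Type) [Field Fq] [Fintype Fq]

lemma card_two_le : 2 ≤ Fintype.card Fq := Fintype.one_lt_card

lemma step_identity (m : Polynomial (Polynomial Fq)) (hfix : m.map (frq Fq) = m) (k : ℕ) :
    (nodeP Fq (k + 1) - nodeP Fq 0) * ((ddIter Fq 0 (k + 1) m).eval (nodeP Fq (k + 1)))
      = frq Fq ((ddIter Fq 0 k m).eval (nodeP Fq k))
        - (ddIter Fq 0 k m).eval (nodeP Fq k) := by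
  have hB : ddIter Fq 1 k m = (ddIter Fq 0 k m).map (frq Fq) := by
    rw [ddIter_map_frq, hfix]
  have hBval : (ddIter Fq 1 k m).eval (nodeP Fq (k + 1))
      = frq Fq ((ddIter Fq 0 k m).eval (nodeP Fq k)) := by
    rw [hB, ← frq_nodeP, Polynomial.eval_map, Polynomial.eval₂_at_apply]
  have heval := ddStep_eval (nodeP Fq 0) (nodeP Fq (k + 1)) (ddIter Fq 1 k m)
  have hshift : ddIter Fq 0 (k + 1) m = ddStep (nodeP Fq 0) (ddIter Fq 1 k m) :=
    ddIter_shift Fq 0 k m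
  rw [hshift, ← heval, hBval, ddIter_sym Fq (card_two_le Fq) k m]

lemma val_deg (m : Polynomial (Polynomial Fq)) (hfix : m.map (frq Fq) = m)
    (h00 : m.eval (nodeP Fq 0) ≠ 0)
    (h0d : (m.eval (nodeP Fq 0)).natDegree = m.natDegree) :
    ∀ k, k ≤ m.natDegree →
      (ddIter Fq 0 k m).eval (nodeP Fq k) ≠ 0 ∧
        ((ddIter Fq 0 k m).eval (nodeP Fq k)).natDegree
          = (Fintype.card Fq) ^ k * (m.natDegree - k) := by
  intro k
  induction k with
  | zero =>
    intro _
    refine ⟨h00, ?_⟩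
    show (m.eval (nodeP Fq 0)).natDegree = (Fintype.card Fq) ^ 0 * (m.natDegree - 0)
    rw [h0d]; ring_nf; omega
  | succ k ih =>
    intro hk
    obtain ⟨hne, hdeg⟩ := ih (by omega)
    set q' := Fintype.card Fq with hq'
    have hq2 : 2 ≤ q' := card_two_le Fq
    set w := (ddIter Fq 0 k m).eval (nodeP Fq k) with hw
    have he1 : 1 ≤ w.natDegree := by
      rw [hdeg]
      have h1 : 0 < q' ^ k := Nat.pow_pos (by omega)
      have h2 : 0 < m.natDegree - k := by omega
      exact Nat.one_le_iff_ne_zero.mpr (Nat.mul_ne_zero (by omega) (by omega))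
    have hlt : w.natDegree < (w ^ q').natDegree := by
      rw [natDegree_pow]; nlinarith
    have hsubne : w ^ q' - w ≠ 0 := by
      refine sub_ne_zero.mpr (fun h => ?_)
      rw [h] at hlt; omega
    have hsubdeg : (w ^ q' - w).natDegree = q' * w.natDegree := by
      rw [natDegree_sub_eq_left_of_natDegree_lt hlt, natDegree_pow]
    have hid := step_identity Fq m hfix k
    rw [frq_apply, ← hw] at hid
    have hνne : nodeP Fq (k + 1) - nodeP Fq 0 ≠ 0 :=
      sub_ne_zero.mpr (nodeP_ne Fq hq2 (by omega))
    have hνdeg : (nodeP Fq (k + 1) - nodeP Fq 0).natDegree = q' ^ (k + 1) := by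
      have hlt2 : (nodeP Fq 0).natDegree < (nodeP Fq (k + 1)).natDegree := by
        rw [nodeP, nodeP, natDegree_X_pow, natDegree_X_pow, pow_zero]
        exact Nat.one_lt_pow (by omega) hq2
      rw [natDegree_sub_eq_left_of_natDegree_lt hlt2, nodeP, natDegree_X_pow]
    set w' := (ddIter Fq 0 (k + 1) m).eval (nodeP Fq (k + 1)) with hw'
    have hw'ne : w' ≠ 0 := by
      intro h
      rw [h, mul_zero] at hid
      exact hsubne hid.symm
    refine ⟨hw'ne, ?_⟩
    have hcong := congrArg Polynomial.natDegree hid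
    rw [natDegree_mul hνne hw'ne, hνdeg, hsubdeg, hdeg] at hcong
    have harith : q' * (q' ^ k * (m.natDegree - k))
        = q' ^ (k + 1) * (m.natDegree - (k + 1)) + q' ^ (k + 1) := by
      rw [← mul_assoc, ← pow_succ']
      rw [show m.natDegree - k = (m.natDegree - (k + 1)) + 1 by omega, Nat.mul_add,
        Nat.mul_one]
    omega

/-- the set of monic polynomials of degree `d`, as a `Finset`. -/
noncomputable def Fd : ℕ → Finset (Polynomial Fq)
  | 0 => {1}
  | d + 1 => ((Fd d) ×ˢ (Finset.univ : Finset Fq)).image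
      (fun p => X * p.1 + Polynomial.C p.2)

lemma mem_Fd : ∀ d (a : Polynomial Fq), a ∈ Fd Fq d ↔ (a.Monic ∧ a.natDegree = d) := by
  intro d
  induction d with
  | zero =>
    intro a
    simp only [Fd, Finset.mem_singleton]
    constructor
    · rintro rfl; exact ⟨monic_one, natDegree_one⟩
    · rintro ⟨hm, h0⟩; exact hm.natDegree_eq_zero.mp h0
  | succ d ih =>
    intro a
    simp only [Fd, Finset.mem_image, Finset.mem_product]
    constructor
    · rintro ⟨⟨g, c⟩, ⟨hg, -⟩, rfl⟩
      obtain ⟨hgm, hgd⟩ := (ih g).mp hg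
      have hXg : (X * g).Monic := monic_X.mul hgm
      have hXgdeg : (X * g).natDegree = d + 1 := by
        rw [monic_X.natDegree_mul hgm, natDegree_X]; omega
      refine ⟨?_, ?_⟩
      · refine hXg.add_of_left ?_
        refine lt_of_le_of_lt degree_C_le ?_
        rw [degree_eq_natDegree hXg.ne_zero, hXgdeg]
        exact_mod_cast Nat.succ_pos d
      · rw [natDegree_add_C, hXgdeg]
    · rintro ⟨hm, hd⟩
      refine ⟨⟨a.divX, a.coeff 0⟩, ⟨?_, Finset.mem_univ _⟩, X_mul_divX_add a⟩
      have h1 : a.divX.natDegree = d := by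
        rw [natDegree_divX_eq_natDegree_tsub_one, hd]; omega
      refine (ih a.divX).mpr ⟨?_, h1⟩
      have h2 : a.divX.coeff d = 1 := by
        rw [coeff_divX, ← hd]
        exact hm.coeff_natDegree
      rw [Monic, leadingCoeff, h1]
      exact h2

lemma XgC_inj (p1 p2 : Polynomial Fq × Fq)
    (h : X * p1.1 + Polynomial.C p1.2 = X * p2.1 + Polynomial.C p2.2) : p1 = p2 := by
  obtain ⟨g1, c1⟩ := p1
  obtain ⟨g2, c2⟩ := p2
  have hc : c1 = c2 := by
    have := congrArg (fun p => Polynomial.coeff p 0) h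
    simpa [coeff_add, mul_coeff_zero] using this
  subst hc
  have hg : g1 = g2 := by
    have hXg : X * g1 = X * g2 := by
      have := add_right_cancel h
      exact this
    exact mul_left_cancel₀ X_ne_zero hXg
  simp [hg]

end FqLevel2

section KLevel

variable (Fq : Type) [Field Fq] [Fintype Fq]

lemma prod_X_sub_C_univ :
    ∏ c : Fq, (X - Polynomial.C c) = X ^ (Fintype.card Fq) - X := by
  have hroots := FiniteField.roots_X_pow_card_sub_X Fq
  have hcard : Multiset.card (X ^ (Fintype.card Fq) - X : Polynomial Fq).roots
      = (X ^ (Fintype.card Fq) - X : Polynomial Fq).natDegree := by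
    rw [hroots, FiniteField.X_pow_card_sub_X_natDegree_eq Fq Fintype.one_lt_card]
    rfl
  have hmon : (X ^ (Fintype.card Fq) - X : Polynomial Fq).Monic := by
    apply monic_X_pow_sub
    rw [degree_X]
    exact_mod_cast Fintype.one_lt_card
  have hm := C_leadingCoeff_mul_prod_multiset_X_sub_C hcard
  rw [hmon.leadingCoeff, Polynomial.C_1, one_mul, hroots] at hm
  rw [← hm, Finset.prod_eq_multiset_prod]

lemma sum_univ_Fq (hq2 : 2 < Fintype.card Fq) : ∑ c : Fq, c = 0 := by
  obtain ⟨z, hz⟩ : ∃ z : Fq, z ∉ ({0, 1} : Finset Fq) := by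
    by_contra h
    push_neg at h
    have hsub : (Finset.univ : Finset Fq) ⊆ {0, 1} := fun z _ => h z
    have hle := Finset.card_le_card hsub
    have h01 : ({0, 1} : Finset Fq).card ≤ 2 := by
      refine le_trans (Finset.card_insert_le _ _) ?_
      simp
    rw [Finset.card_univ] at hle
    omega
  simp only [Finset.mem_insert, Finset.mem_singleton, not_or] at hz
  obtain ⟨hz0, hz1⟩ := hz
  have h2 : z * ∑ c : Fq, c = ∑ c : Fq, c := by
    rw [Finset.mul_sum]
    refine Fintype.sum_equiv (Equiv.mulLeft₀ z hz0) _ _ (fun c => ?_)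
    simp
  have h3 : (z - 1) * ∑ c : Fq, c = 0 := by
    rw [sub_mul, one_mul, h2, sub_self]
  rcases mul_eq_zero.mp h3 with h | h
  · exact absurd (by linear_combination h : z = 1) hz1
  · exact h

lemma lemmaR {K : Type} [Field K] (hq2 : 2 < Fintype.card Fq) (ιF : Fq →+* K) (u v x : K)
    (hx : x ^ (Fintype.card Fq) - x ≠ 0) :
    ∑ c : Fq, (u - ιF c) * (v - ιF c) / (x - ιF c)
      = -((u - x) * (v - x)) / (x ^ (Fintype.card Fq) - x) := by
  have hmapped : ∏ c : Fq, (X - Polynomial.C (ιF c)) = (X ^ (Fintype.card Fq) - X : Polynomial K) := by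
    have h := congrArg (Polynomial.map ιF) (prod_X_sub_C_univ Fq)
    rw [← Polynomial.coe_mapRingHom, map_prod] at h
    simpa using h
  have hprodx : ∏ c : Fq, (x - ιF c) = x ^ (Fintype.card Fq) - x := by
    have h := congrArg (Polynomial.eval x) hmapped
    simpa [Polynomial.eval_prod] using h
  have hne : ∀ c : Fq, x - ιF c ≠ 0 := by
    intro c hc
    exact hx (hprodx ▸ Finset.prod_eq_zero (Finset.mem_univ c) hc)
  have hq0 : ((Fintype.card Fq : ℕ) : K) = 0 := by
    have h0 : ((Fintype.card Fq : ℕ) : Fq) = 0 := FiniteField.cast_card_eq_zero Fq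
    rw [← map_natCast ιF, h0, map_zero]
  have hder : ∑ c : Fq, ∏ c' ∈ Finset.univ.erase c, (x - ιF c') = -1 := by
    have hD : Polynomial.derivative (∏ c : Fq, (X - Polynomial.C (ιF c)))
        = ∑ c : Fq, ∏ c' ∈ Finset.univ.erase c, (X - Polynomial.C (ιF c')) := by
      rw [Finset.prod_eq_multiset_prod, Polynomial.derivative_prod]
      rw [Finset.sum_eq_multiset_sum]
      congr 1
      refine Multiset.map_congr rfl (fun c _ => ?_)
      rw [Polynomial.derivative_sub, Polynomial.derivative_X, Polynomial.derivative_C,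
        sub_zero, mul_one, Finset.prod_eq_multiset_prod, Finset.erase_val]
    have hD2 : Polynomial.derivative ((X ^ (Fintype.card Fq) - X : Polynomial K))
        = -1 := by
      rw [Polynomial.derivative_sub, Polynomial.derivative_X, Polynomial.derivative_X_pow,
        hq0]
      simp
    rw [hmapped, hD2] at hD
    have h := congrArg (Polynomial.eval x) hD.symm
    simpa [Polynomial.eval_finset_sum, Polynomial.eval_prod] using h
  have hsum1 : ∑ c : Fq, (x - ιF c)⁻¹ = -(x ^ (Fintype.card Fq) - x)⁻¹ := by
    have hstep : ∀ c : Fq, (x - ιF c)⁻¹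
        = (∏ c' ∈ Finset.univ.erase c, (x - ιF c')) / (x ^ (Fintype.card Fq) - x) := by
      intro c
      rw [eq_div_iff hx, ← hprodx,
        ← Finset.mul_prod_erase Finset.univ (fun c' => x - ιF c') (Finset.mem_univ c),
        ← mul_assoc, inv_mul_cancel₀ (hne c), one_mul]
    rw [Finset.sum_congr rfl (fun c _ => hstep c), ← Finset.sum_div, hder, neg_div]
    rw [one_div]
  have hsumc : ∑ c : Fq, ιF c = 0 := by
    rw [← map_sum, sum_univ_Fq Fq hq2, map_zero]
  have hexp : ∀ c : Fq, (u - ιF c) * (v - ιF c) / (x - ιF c)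
      = (u - x) * (v - x) * (x - ιF c)⁻¹ + ((u - x) + (v - x)) + (x - ιF c) := by
    intro c
    rw [div_eq_iff (hne c)]
    linear_combination -((u - x) * (v - x)) * (inv_mul_cancel₀ (hne c))
  rw [Finset.sum_congr rfl (fun c _ => hexp c)]
  rw [Finset.sum_add_distrib, Finset.sum_add_distrib, ← Finset.mul_sum, hsum1]
  rw [Finset.sum_const, Finset.sum_sub_distrib, hsumc, Finset.sum_const, Finset.card_univ]
  rw [nsmul_eq_mul, nsmul_eq_mul, hq0]
  rw [neg_div, div_eq_mul_inv]
  ring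

end KLevel

section Main

variable (Fq : Type) [Field Fq] [Fintype Fq]

noncomputable def PP (k : ℕ) (g : Polynomial Fq) : Polynomial (Polynomial Fq) :=
  ddIter Fq 0 k ((X : Polynomial (Polynomial Fq)) ^ k * g.map Polynomial.C)

lemma ddIter_X_pow (k : ℕ) : ddIter Fq 0 k ((X : Polynomial (Polynomial Fq)) ^ k) = 1 := by
  have hm : ((X : Polynomial (Polynomial Fq)) ^ k).Monic := monic_X_pow _
  have hd : ((X : Polynomial (Polynomial Fq)) ^ k).natDegree = k := natDegree_X_pow k
  obtain ⟨h1, h2⟩ := ddIter_monic Fq 0 hm k (by rw [hd])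
  rw [hd] at h2
  exact h1.natDegree_eq_zero.mp (by omega)

lemma PP_decomp (k : ℕ) (g : Polynomial Fq) (c : Fq) :
    PP Fq k (X * g + Polynomial.C c)
      = ddIter Fq 0 k ((X : Polynomial (Polynomial Fq)) ^ (k + 1) * g.map Polynomial.C)
        + Polynomial.C (Polynomial.C c) := by
  unfold PP
  have hmap : (X * g + Polynomial.C c).map (Polynomial.C : Fq →+* Polynomial Fq)
      = X * g.map Polynomial.C + Polynomial.C (Polynomial.C c) := by
    rw [Polynomial.map_add, Polynomial.map_mul, Polynomial.map_X, Polynomial.map_C]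
  rw [hmap]
  have hring : (X : Polynomial (Polynomial Fq)) ^ k
        * (X * g.map Polynomial.C + Polynomial.C (Polynomial.C c))
      = X ^ (k + 1) * g.map Polynomial.C
        + Polynomial.C (Polynomial.C c) * X ^ k := by ring
  rw [hring, ddIter_add, ddIter_C_mul, ddIter_X_pow, mul_one]

lemma m_fix (j : ℕ) (g : Polynomial Fq) :
    ((X : Polynomial (Polynomial Fq)) ^ j * g.map Polynomial.C).map (frq Fq)
      = (X : Polynomial (Polynomial Fq)) ^ j * g.map Polynomial.C := by
  rw [Polynomial.map_mul, Polynomial.map_pow, Polynomial.map_X, Polynomial.map_map,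
    show (frq Fq).comp (Polynomial.C : Fq →+* Polynomial Fq) = Polynomial.C from
      RingHom.ext (fun c => frq_C Fq c)]

lemma nodeP_zero : nodeP Fq 0 = X := by
  rw [nodeP, pow_zero, pow_one]

lemma m_eval_zero (j : ℕ) {g : Polynomial Fq} (hg : g.Monic) :
    ((X : Polynomial (Polynomial Fq)) ^ j * g.map Polynomial.C).eval (nodeP Fq 0)
      = X ^ j * g := by
  rw [nodeP_zero, Polynomial.eval_mul, Polynomial.eval_pow, Polynomial.eval_X,
    Polynomial.eval_map, Polynomial.eval₂_C_X]

lemma m_natDegree (j : ℕ) {g : Polynomial Fq} (hg : g.Monic) :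
    ((X : Polynomial (Polynomial Fq)) ^ j * g.map Polynomial.C).natDegree
      = j + g.natDegree := by
  rw [(monic_X_pow j).natDegree_mul (hg.map _), natDegree_X_pow, hg.natDegree_map]

lemma main_sum {K : Type} [Field K] (hq2 : 2 < Fintype.card Fq)
    (ι : Polynomial Fq →+* K) (hinj : Function.Injective ι) (t₁ t₂ : K) (d : ℕ) : ∀ k : ℕ,
    ∑ g ∈ Fd Fq d,
      (Polynomial.eval₂ ι t₁ (PP Fq k g) * Polynomial.eval₂ ι t₂ (PP Fq k g)
        / Polynomial.eval₂ ι (ι (nodeP Fq k)) (PP Fq k g))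
      = ∏ j ∈ Finset.range d,
          (-((t₁ - ι (nodeP Fq (k + j))) * (t₂ - ι (nodeP Fq (k + j))))
            / (ι (nodeP Fq (k + j + 1)) - ι (nodeP Fq 0))) := by
  induction d with
  | zero =>
    intro k
    rw [show Fd Fq 0 = {1} from rfl, Finset.sum_singleton]
    have h1 : PP Fq k 1 = 1 := by
      unfold PP
      rw [Polynomial.map_one, mul_one, ddIter_X_pow]
    rw [h1]
    simp
  | succ d ih =>
    intro k
    rw [show Fd Fq (d + 1)
        = ((Fd Fq d) ×ˢ (Finset.univ : Finset Fq)).image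
          (fun p => X * p.1 + Polynomial.C p.2) from rfl]
    rw [Finset.sum_image (fun p1 _ p2 _ he => XgC_inj Fq p1 p2 he), Finset.sum_product]
    have hstep : ∀ g ∈ Fd Fq d,
        (∑ c : Fq, (Polynomial.eval₂ ι t₁ (PP Fq k (X * g + Polynomial.C c))
            * Polynomial.eval₂ ι t₂ (PP Fq k (X * g + Polynomial.C c))
            / Polynomial.eval₂ ι (ι (nodeP Fq k)) (PP Fq k (X * g + Polynomial.C c))))
        = (-((t₁ - ι (nodeP Fq k)) * (t₂ - ι (nodeP Fq k)))
            / (ι (nodeP Fq (k + 1)) - ι (nodeP Fq 0)))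
          * (Polynomial.eval₂ ι t₁ (PP Fq (k + 1) g) * Polynomial.eval₂ ι t₂ (PP Fq (k + 1) g)
            / Polynomial.eval₂ ι (ι (nodeP Fq (k + 1))) (PP Fq (k + 1) g)) := by
      intro g hg
      obtain ⟨hgm, hgd⟩ := (mem_Fd Fq d g).mp hg
      set m : Polynomial (Polynomial Fq)
        := (X : Polynomial (Polynomial Fq)) ^ (k + 1) * g.map Polynomial.C with hmdef
      have hfix : m.map (frq Fq) = m := m_fix Fq (k + 1) g
      have hmdeg : m.natDegree = (k + 1) + d := by rw [hmdef, m_natDegree Fq _ hgm, hgd]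
      have h00 : m.eval (nodeP Fq 0) ≠ 0 := by
        rw [hmdef, m_eval_zero Fq _ hgm]
        exact mul_ne_zero (pow_ne_zero _ X_ne_zero) hgm.ne_zero
      have h0d : (m.eval (nodeP Fq 0)).natDegree = m.natDegree := by
        rw [hmdef, m_eval_zero Fq _ hgm, hmdeg,
          natDegree_mul (pow_ne_zero _ X_ne_zero) hgm.ne_zero, natDegree_X_pow, hgd]
      set H : Polynomial (Polynomial Fq) := ddIter Fq 0 k m with hHdef
      set w : Polynomial Fq := H.eval (nodeP Fq k) with hwdef
      obtain ⟨hwne, hwdeg⟩ := val_deg Fq m hfix h00 h0d k (by omega)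
      rw [← hHdef, ← hwdef] at hwne hwdeg
      have hw1 : 1 ≤ w.natDegree := by
        rw [hwdeg, hmdeg]
        have h1 : 0 < (Fintype.card Fq) ^ k := Nat.pow_pos (by omega)
        have h2 : 0 < (k + 1) + d - k := by omega
        exact Nat.one_le_iff_ne_zero.mpr (Nat.mul_ne_zero (by omega) (by omega))
      have hwq : w ^ (Fintype.card Fq) ≠ w := by
        intro heq
        have hcong := congrArg Polynomial.natDegree heq
        rw [natDegree_pow] at hcong
        nlinarith
      have hxne : (ι w) ^ (Fintype.card Fq) - ι w ≠ 0 := by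
        rw [← map_pow, ← map_sub]
        intro h
        exact (sub_ne_zero.mpr hwq) (hinj (by rw [h, map_zero]))
      have hP' : PP Fq (k + 1) g = ddStep (nodeP Fq k) H := by
        show ddIter Fq 0 (k + 1) ((X : Polynomial (Polynomial Fq)) ^ (k + 1)
          * g.map Polynomial.C) = ddStep (nodeP Fq k) H
        rw [ddIter_succ, Nat.zero_add, ← hmdef, ← hHdef]
      -- rewrite each summand
      have hsummand : ∀ c : Fq,
          Polynomial.eval₂ ι t₁ (PP Fq k (X * g + Polynomial.C c))
            * Polynomial.eval₂ ι t₂ (PP Fq k (X * g + Polynomial.C c))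
            / Polynomial.eval₂ ι (ι (nodeP Fq k)) (PP Fq k (X * g + Polynomial.C c))
          = (Polynomial.eval₂ ι t₁ H + (ι.comp Polynomial.C) c)
            * (Polynomial.eval₂ ι t₂ H + (ι.comp Polynomial.C) c)
            / (ι w + (ι.comp Polynomial.C) c) := by
        intro c
        rw [PP_decomp, ← hmdef, ← hHdef]
        simp only [Polynomial.eval₂_add, Polynomial.eval₂_C, Polynomial.eval₂_at_apply]
        rw [← hwdef]
        rfl
      rw [Finset.sum_congr rfl (fun c _ => hsummand c)]
      have hreindex : ∑ c : Fq,
          (Polynomial.eval₂ ι t₁ H + (ι.comp Polynomial.C) c)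
            * (Polynomial.eval₂ ι t₂ H + (ι.comp Polynomial.C) c)
            / (ι w + (ι.comp Polynomial.C) c)
          = ∑ c : Fq,
          (Polynomial.eval₂ ι t₁ H - (ι.comp Polynomial.C) c)
            * (Polynomial.eval₂ ι t₂ H - (ι.comp Polynomial.C) c)
            / (ι w - (ι.comp Polynomial.C) c) := by
        refine Fintype.sum_equiv (Equiv.neg Fq) _ _ (fun c => ?_)
        simp [sub_neg_eq_add]
      rw [hreindex, lemmaR Fq hq2 (ι.comp Polynomial.C)
        (Polynomial.eval₂ ι t₁ H) (Polynomial.eval₂ ι t₂ H) (ι w) hxne]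
      -- now rewrite numerator and denominator
      have hHsub : H - Polynomial.C w = (X - Polynomial.C (nodeP Fq k)) * PP Fq (k + 1) g := by
        rw [hP']
        linear_combination -(ddStep_spec (nodeP Fq k) H)
      have hu : ∀ t : K, Polynomial.eval₂ ι t H - ι w
          = (t - ι (nodeP Fq k)) * Polynomial.eval₂ ι t (PP Fq (k + 1) g) := by
        intro t
        have h1 : Polynomial.eval₂ ι t H - ι w = Polynomial.eval₂ ι t (H - Polynomial.C w) := by
          rw [Polynomial.eval₂_sub, Polynomial.eval₂_C]
        rw [h1, hHsub, Polynomial.eval₂_mul, Polynomial.eval₂_sub, Polynomial.eval₂_X,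
          Polynomial.eval₂_C]
      have hx2 : (ι w) ^ (Fintype.card Fq) - ι w
          = (ι (nodeP Fq (k + 1)) - ι (nodeP Fq 0))
            * Polynomial.eval₂ ι (ι (nodeP Fq (k + 1))) (PP Fq (k + 1) g) := by
        rw [← map_pow, ← map_sub, ← frq_apply, hwdef, hHdef,
          ← step_identity Fq m hfix k, map_mul, map_sub]
        congr 1
        rw [Polynomial.eval₂_at_apply]
        rfl
      rw [hu t₁, hu t₂, hx2, div_mul_div_comm]
      congr 1
      ring
    rw [Finset.sum_congr rfl hstep, ← Finset.mul_sum, ih (k + 1)]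
    rw [Finset.prod_range_succ' (fun j => -((t₁ - ι (nodeP Fq (k + j))) * (t₂ - ι (nodeP Fq (k + j))))
            / (ι (nodeP Fq (k + j + 1)) - ι (nodeP Fq 0))) d]
    rw [show (∏ j ∈ Finset.range d,
          -((t₁ - ι (nodeP Fq (k + (j + 1)))) * (t₂ - ι (nodeP Fq (k + (j + 1)))))
            / (ι (nodeP Fq (k + (j + 1) + 1)) - ι (nodeP Fq 0)))
        = ∏ j ∈ Finset.range d,
          -((t₁ - ι (nodeP Fq (k + 1 + j))) * (t₂ - ι (nodeP Fq (k + 1 + j))))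
            / (ι (nodeP Fq (k + 1 + j + 1)) - ι (nodeP Fq 0)) from
      Finset.prod_congr rfl (fun j _ => by rw [show k + (j + 1) = k + 1 + j by omega])]
    rw [Nat.add_zero]
    exact mul_comm _ _

end Main

lemma fieldhelp {K : Type*} [Field K] (p1 p2 r s t u v : K) (hv : v = -u) :
    p1 * p2 / r * (-(s * t) / u) = p1 * s * (p2 * t) / (v * r) := by
  subst hv
  rw [div_mul_div_comm]
  ring

/-- For `q > 2` and all `d ≥ 0`, `∑_{a ∈ A⁺(d)} a(t₁)a(t₂)/a = b_d(t₁)b_d(t₂)/l_d`. -/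
theorem twistedPowerSum_one_two_vars
    (Fq : Type) [Field Fq] [Fintype Fq] (q : ℕ) (hq : q = Fintype.card Fq) (hq2 : 2 < q)
    (θ t₁ t₂ : RatFunc (RatFunc (RatFunc Fq)))
    (hθ : θ = RatFunc.C (RatFunc.C (RatFunc.X : RatFunc Fq)))
    (ht₁ : t₁ = RatFunc.C (RatFunc.X : RatFunc (RatFunc Fq))) (ht₂ : t₂ = RatFunc.X)
    (ι : Polynomial Fq →+* RatFunc (RatFunc (RatFunc Fq)))
    (hι : ι = RatFunc.C.comp (RatFunc.C.comp (algebraMap (Polynomial Fq) (RatFunc Fq))))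
    (l : ℕ → RatFunc (RatFunc (RatFunc Fq))) (hl0 : l 0 = 1)
    (hl : ∀ i, l (i + 1) = (θ - θ ^ q ^ (i + 1)) * l i)
    (b₁ b₂ : ℕ → RatFunc (RatFunc (RatFunc Fq))) (hb₁0 : b₁ 0 = 1) (hb₂0 : b₂ 0 = 1)
    (hb₁ : ∀ i, b₁ (i + 1) = b₁ i * (t₁ - θ ^ q ^ i))
    (hb₂ : ∀ i, b₂ (i + 1) = b₂ i * (t₂ - θ ^ q ^ i))
    (d : ℕ) :
    ∑ᶠ a ∈ {a : Polynomial Fq | a.Monic ∧ a.natDegree = d},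
      a.eval₂ (ι.comp Polynomial.C) t₁ * a.eval₂ (ι.comp Polynomial.C) t₂ / ι a
      = b₁ d * b₂ d / l d := by
  have hq2' : 2 < Fintype.card Fq := hq ▸ hq2
  have hιX : ι Polynomial.X = θ := by
    rw [hι, hθ]
    simp [RingHom.comp_apply, RatFunc.algebraMap_X]
  have hinj : Function.Injective ι := by
    rw [hι]
    simp only [RingHom.coe_comp]
    exact (RingHom.injective _).comp ((RingHom.injective _).comp
      (RatFunc.algebraMap_injective Fq))
  have hnode : ∀ j : ℕ, ι (nodeP Fq j) = θ ^ q ^ j := by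
    intro j
    rw [nodeP, map_pow, hιX, hq]
  have hset : {a : Polynomial Fq | a.Monic ∧ a.natDegree = d} = ↑(Fd Fq d) := by
    ext a
    simp [mem_Fd]
  rw [hset, finsum_mem_coe_finset]
  have hsummand : ∀ a : Polynomial Fq,
      a.eval₂ (ι.comp Polynomial.C) t₁ * a.eval₂ (ι.comp Polynomial.C) t₂ / ι a
      = Polynomial.eval₂ ι t₁ (PP Fq 0 a) * Polynomial.eval₂ ι t₂ (PP Fq 0 a)
        / Polynomial.eval₂ ι (ι (nodeP Fq 0)) (PP Fq 0 a) := by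
    intro a
    have hPP0 : PP Fq 0 a = a.map Polynomial.C := by
      show ddIter Fq 0 0 ((X : Polynomial (Polynomial Fq)) ^ 0 * a.map Polynomial.C)
        = a.map Polynomial.C
      rw [pow_zero, one_mul]
      rfl
    rw [hPP0, Polynomial.eval₂_map, Polynomial.eval₂_map, Polynomial.eval₂_at_apply,
      nodeP_zero, Polynomial.eval_map, Polynomial.eval₂_C_X]
  rw [Finset.sum_congr rfl (fun a _ => hsummand a), main_sum Fq hq2' ι hinj t₁ t₂ d 0]
  have hprod : ∀ nn : ℕ, ∏ j ∈ Finset.range nn,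
      (-((t₁ - ι (nodeP Fq (0 + j))) * (t₂ - ι (nodeP Fq (0 + j))))
        / (ι (nodeP Fq (0 + j + 1)) - ι (nodeP Fq 0)))
      = b₁ nn * b₂ nn / l nn := by
    intro nn
    induction nn with
    | zero => rw [Finset.range_zero, Finset.prod_empty, hb₁0, hb₂0, hl0]; norm_num
    | succ n ihn =>
      rw [Finset.prod_range_succ, ihn, hb₁, hb₂, hl, hnode, hnode, hnode]
      simp only [Nat.zero_add]
      rw [pow_zero, pow_one]
      exact fieldhelp (b₁ n) (b₂ n) (l n) (t₁ - θ ^ q ^ n) (t₂ - θ ^ q ^ n)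
        (θ ^ q ^ (n + 1) - θ) (θ - θ ^ q ^ (n + 1)) (by ring)
  exact hprod d
end

section
/- For all d ≥ 0, Σ_{a monic of degree d in F_q[θ]} 1/a^2 = 1/l_d^2. -/
set_option autoImplicit false
set_option maxHeartbeats 1000000
set_option linter.unusedSectionVars false

open Polynomial

namespace PowerSumAux

variable {Fq : Type} [Field Fq] [Fintype Fq]

local notation "K" => RatFunc Fq
local notation "q" => Fintype.card Fq
local notation "θ" => (RatFunc.X : RatFunc Fq)
local notation "ε" => algebraMap Fq (RatFunc Fq)

lemma q1 : 1 < q := Fintype.one_lt_card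

lemma exists_pm : ∃ p m : ℕ, Nat.Prime p ∧ 0 < m ∧ Fintype.card Fq = p ^ m ∧ CharP Fq p := by
  obtain ⟨n, hp, hcard⟩ := FiniteField.card Fq (ringChar Fq)
  exact ⟨ringChar Fq, n, hp, n.2, hcard, inferInstance⟩

lemma qK0 : ((q : ℕ) : K) = 0 := by
  obtain ⟨p, m, hp, hm, hcard, hc⟩ := exists_pm (Fq := Fq)
  haveI := hc
  haveI : CharP K p := charP_of_injective_algebraMap
    (algebraMap Fq (RatFunc Fq)).injective p
  rw [hcard]
  push_cast
  rw [CharP.cast_eq_zero K p, zero_pow hm.ne']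

lemma frobK (x y : K) : (x + y) ^ q = x ^ q + y ^ q := by
  obtain ⟨p, m, hp, hm, hcard, hc⟩ := exists_pm (Fq := Fq)
  haveI := hc
  haveI : CharP K p := charP_of_injective_algebraMap
    (algebraMap Fq (RatFunc Fq)).injective p
  haveI : Fact p.Prime := ⟨hp⟩
  rw [hcard]
  exact add_pow_char_pow ..

lemma frobP (x y : Polynomial K) : (x + y) ^ q = x ^ q + y ^ q := by
  obtain ⟨p, m, hp, hm, hcard, hc⟩ := exists_pm (Fq := Fq)
  haveI := hc
  haveI : CharP K p := charP_of_injective_algebraMap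
    (algebraMap Fq (RatFunc Fq)).injective p
  haveI : CharP (Polynomial K) p := inferInstance
  haveI : Fact p.Prime := ⟨hp⟩
  rw [hcard]
  exact add_pow_char_pow ..

lemma frobSumP {ι : Type} (s : Finset ι) (f : ι → Polynomial K) :
    (∑ i ∈ s, f i) ^ q = ∑ i ∈ s, f i ^ q := by
  obtain ⟨p, m, hp, hm, hcard, hc⟩ := exists_pm (Fq := Fq)
  haveI := hc
  haveI : CharP K p := charP_of_injective_algebraMap
    (algebraMap Fq (RatFunc Fq)).injective p
  haveI : CharP (Polynomial K) p := inferInstance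
  haveI : Fact p.Prime := ⟨hp⟩
  rw [hcard]
  exact sum_pow_char_pow ..

lemma frob_alg (s : Fq) : (ε s) ^ q = ε s := by
  rw [← map_pow, FiniteField.pow_card]

lemma pow_qsub1 (x : K) : x ^ (q - 1) * x = x ^ q := by
  rw [← pow_succ, Nat.sub_add_cancel (le_of_lt q1)]

lemma infK : Infinite K := Infinite.of_injective
  (algebraMap (Polynomial Fq) (RatFunc Fq)) (RatFunc.algebraMap_injective Fq)

lemma prod_X_sub_C_Fq : (∏ a : Fq, (X - C a)) = X ^ q - X := by
  classical
  set D : Polynomial Fq := (X ^ q - X) - ∏ a : Fq, (X - C a) with hD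
  have hmon : (∏ a : Fq, (X - C a)).Monic :=
    monic_prod_of_monic _ _ (fun a _ => monic_X_sub_C a)
  have hdeg : (∏ a : Fq, (X - C a)).natDegree = q := by
    rw [natDegree_prod_of_monic _ _ (fun a _ => monic_X_sub_C a)]
    simp [natDegree_X_sub_C]
  have hmon2 : (X ^ q - X : Polynomial Fq).Monic := by
    apply monic_X_pow_sub
    simpa using (Nat.one_lt_cast.mpr q1 : (1 : WithBot ℕ) < (q : ℕ))
  have hcoeff : D.coeff q = 0 := by
    have h1 : (∏ a : Fq, (X - C a)).coeff q = 1 := by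
      have := hmon.coeff_natDegree
      rwa [hdeg] at this
    have h2 : (X ^ q - X : Polynomial Fq).coeff q = 1 := by
      have := hmon2.coeff_natDegree
      rwa [FiniteField.X_pow_card_sub_X_natDegree_eq Fq q1] at this
    simp [hD, h1, h2]
  have hdegD : D.natDegree ≤ q := by
    apply le_trans (natDegree_sub_le _ _)
    simp [hdeg, FiniteField.X_pow_card_sub_X_natDegree_eq Fq q1,
      natDegree_X_pow]
  have hroots : ∀ a : Fq, D.eval a = 0 := by
    intro a
    simp only [hD, eval_sub, eval_pow, eval_X, eval_prod]
    rw [Finset.prod_eq_zero (Finset.mem_univ a) (by simp)]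
    rw [FiniteField.pow_card]
    ring
  have hD0 : D = 0 := by
    rcases eq_or_ne D 0 with h0 | h0
    · exact h0
    exfalso
    have hlt : D.natDegree < q := by
      rcases lt_or_eq_of_le hdegD with h | h
      · exact h
      · have hlc : D.coeff q ≠ 0 := by
          rw [← h, ← Polynomial.leadingCoeff]
          exact Polynomial.leadingCoeff_ne_zero.mpr h0
        exact absurd hcoeff hlc
    have := Polynomial.eq_zero_of_natDegree_lt_card_of_eval_eq_zero D
      Function.injective_id (fun a => hroots a) (by simpa using hlt)
    exact h0 this
  have := sub_eq_zero.mp (hD ▸ hD0 : (X ^ q - X : Polynomial Fq) - ∏ a : Fq, (X - C a) = 0)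
  exact this.symm


lemma base_prod (z : K) : (∏ e : Fq, (z - ε e)) = z ^ q - z := by
  have h := prod_X_sub_C_Fq (Fq := Fq)
  have h2 := congrArg (Polynomial.eval₂RingHom (algebraMap Fq (RatFunc Fq)) z) h
  simp only [map_prod, coe_eval₂RingHom, eval₂_sub, eval₂_X, eval₂_C, eval₂_pow] at h2
  exact h2

lemma prodFq (y α : K) : (∏ e : Fq, (y + ε e * α)) = y ^ q - α ^ (q - 1) * y := by
  rcases eq_or_ne α 0 with rfl | hα
  · simp only [mul_zero, add_zero, Finset.prod_const, Finset.card_univ]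
    rw [zero_pow (by have := q1 (Fq := Fq); omega : q - 1 ≠ 0)]
    ring
  · have h1 : (∏ e : Fq, (y + ε e * α)) = ∏ e : Fq, (y - ε e * α) := by
      apply Fintype.prod_equiv (Equiv.neg Fq)
      intro x
      simp only [Equiv.neg_apply, map_neg]
      ring
    have h2 : (∏ e : Fq, (y - ε e * α)) = α ^ q * ∏ e : Fq, (y / α - ε e) :=
      calc (∏ e : Fq, (y - ε e * α)) = ∏ e : Fq, (α * (y / α - ε e)) :=
            Finset.prod_congr rfl (fun e _ => by field_simp)
        _ = (∏ _e : Fq, α) * ∏ e : Fq, (y / α - ε e) := Finset.prod_mul_distrib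
        _ = α ^ q * ∏ e : Fq, (y / α - ε e) := by
            rw [Finset.prod_const, Finset.card_univ]
    rw [h1, h2, base_prod]
    rw [mul_sub]
    congr 1
    · rw [div_pow]
      field_simp
    · rw [← pow_qsub1 α]
      field_simp

lemma polyL1 (α : K) :
    (∏ e : Fq, (X + C (ε e * α))) = X ^ q - C (α ^ (q - 1)) * X := by
  haveI := infK (Fq := Fq)
  apply Polynomial.funext
  intro t
  rw [eval_prod]
  simp only [eval_add, eval_X, eval_C, eval_sub, eval_mul, eval_pow]
  exact prodFq t α

lemma sumFq (y α : K) (hα : α ≠ 0) (h : ∀ e : Fq, y + ε e * α ≠ 0) :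
    (∑ e : Fq, (y + ε e * α)⁻¹) = -α ^ (q - 1) * (y ^ q - α ^ (q - 1) * y)⁻¹ := by
  classical
  have hprod : (∏ e : Fq, (y + ε e * α)) = y ^ q - α ^ (q - 1) * y := prodFq y α
  have hne : (∏ e : Fq, (y + ε e * α)) ≠ 0 := Finset.prod_ne_zero_iff.mpr (fun e _ => h e)
  have hterm : ∀ e : Fq, (y + ε e * α)⁻¹ =
      (∏ e' ∈ Finset.univ.erase e, (y + ε e' * α)) * (∏ e' : Fq, (y + ε e' * α))⁻¹ := by
    intro e
    have he : (∏ e' ∈ Finset.univ.erase e, (y + ε e' * α)) ≠ 0 :=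
      Finset.prod_ne_zero_iff.mpr (fun e' _ => h e')
    rw [← Finset.mul_prod_erase Finset.univ _ (Finset.mem_univ e), mul_inv,
      mul_comm ((y + ε e * α)⁻¹), ← mul_assoc, mul_inv_cancel₀ he, one_mul]
  rw [Finset.sum_congr rfl (fun e _ => hterm e), ← Finset.sum_mul, hprod]
  congr 1
  -- it remains: ∑ e, ∏_{e' ≠ e} (y + ε e' * α) = -α^(q-1)
  have hG := polyL1 (Fq := Fq) α
  have h1 : ∑ e : Fq, ∏ e' ∈ Finset.univ.erase e, (y + ε e' * α) =
      Polynomial.eval y (Polynomial.derivative (∏ e : Fq, (X + C (ε e * α)))) := by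
    rw [Finset.prod_eq_multiset_prod, Polynomial.derivative_prod]
    rw [show (Polynomial.eval y : Polynomial K → K) = ⇑(Polynomial.evalRingHom y) from rfl,
      map_multiset_sum]
    rw [Finset.sum_eq_multiset_sum, Multiset.map_map]
    apply congrArg Multiset.sum
    apply Multiset.map_congr rfl
    intro e _
    simp only [Function.comp_apply, derivative_X_add_C, mul_one, Polynomial.coe_evalRingHom]
    rw [← Finset.erase_val, ← Finset.prod_eq_multiset_prod, eval_prod]
    simp
  rw [h1, hG, derivative_sub, derivative_X_pow, derivative_C_mul, derivative_X, mul_one]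
  simp [qK0]


/-! ### tuples and their polynomials -/

noncomputable def pv (d : ℕ) (c : Fin d → Fq) : Polynomial Fq :=
  ∑ i : Fin d, Polynomial.C (c i) * Polynomial.X ^ (i : ℕ)

noncomputable def vv (d : ℕ) (c : Fin d → Fq) : RatFunc Fq :=
  algebraMap (Polynomial Fq) (RatFunc Fq) (pv d c)

lemma pv_coeff_lt (d : ℕ) (c : Fin d → Fq) (k : ℕ) (hk : k < d) :
    (pv d c).coeff k = c ⟨k, hk⟩ := by
  classical
  rw [pv, Polynomial.finset_sum_coeff]
  rw [Finset.sum_eq_single (⟨k, hk⟩ : Fin d)]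
  · simp
  · intro i _ hi
    rw [Polynomial.coeff_C_mul, Polynomial.coeff_X_pow, if_neg, mul_zero]
    exact fun h => hi (Fin.ext h.symm)
  · simp

lemma pv_coeff_ge (d : ℕ) (c : Fin d → Fq) (k : ℕ) (hk : d ≤ k) :
    (pv d c).coeff k = 0 := by
  classical
  rw [pv, Polynomial.finset_sum_coeff]
  apply Finset.sum_eq_zero
  intro i _
  rw [Polynomial.coeff_C_mul, Polynomial.coeff_X_pow, if_neg, mul_zero]
  exact fun h => absurd (h ▸ i.2) (by omega)

lemma pv_add (d : ℕ) (c c' : Fin d → Fq) : pv d (c + c') = pv d c + pv d c' := by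
  rw [pv, pv, pv, ← Finset.sum_add_distrib]
  apply Finset.sum_congr rfl
  intro i _
  simp [add_mul]

lemma pv_neg (d : ℕ) (c : Fin d → Fq) : pv d (-c) = -pv d c := by
  rw [pv, pv, ← Finset.sum_neg_distrib]
  apply Finset.sum_congr rfl
  intro i _
  simp

lemma pv_zero (d : ℕ) : pv d (0 : Fin d → Fq) = 0 := by
  simp [pv]

lemma pv_inj (d : ℕ) : Function.Injective (pv d (Fq := Fq)) := by
  intro c c' h
  funext i
  have := congrArg (fun P => Polynomial.coeff P (i : ℕ)) h
  simpa [pv_coeff_lt d _ _ i.2] using this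

lemma vv_add (d : ℕ) (c c' : Fin d → Fq) : vv d (c + c') = vv d c + vv d c' := by
  rw [vv, vv, vv, pv_add, map_add]

lemma vv_neg (d : ℕ) (c : Fin d → Fq) : vv d (-c) = -vv d c := by
  rw [vv, vv, pv_neg, map_neg]

lemma vv_zero (d : ℕ) : vv d (0 : Fin d → Fq) = 0 := by
  rw [vv, pv_zero, map_zero]

lemma vv_inj (d : ℕ) : Function.Injective (vv d (Fq := Fq)) :=
  fun _ _ h => pv_inj d (RatFunc.algebraMap_injective Fq h)

lemma vv_ne (d : ℕ) (c : Fin d → Fq) (hc : c ≠ 0) : vv d c ≠ 0 := by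
  intro h
  exact hc (vv_inj d (h.trans (vv_zero d).symm))

lemma eps_eq (e : Fq) : ε e = algebraMap (Polynomial Fq) (RatFunc Fq) (Polynomial.C e) := rfl

lemma vv_snoc (n : ℕ) (c' : Fin n → Fq) (e : Fq) :
    vv (n + 1) (Fin.snoc c' e) = vv n c' + ε e * θ ^ n := by
  rw [vv, vv, pv, pv, Fin.sum_univ_castSucc]
  simp only [Fin.snoc_castSucc, Fin.snoc_last, Fin.coe_castSucc, Fin.val_last]
  rw [map_add, map_mul, map_pow, RatFunc.algebraMap_X, ← eps_eq]

lemma vv_cons0 (n : ℕ) (c : Fin n → Fq) :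
    vv (n + 1) (Fin.cons 0 c) = θ * vv n c := by
  rw [vv, vv, pv, pv, Fin.sum_univ_succ]
  simp only [Fin.cons_zero, Fin.cons_succ, Fin.val_succ, Fin.val_zero, Polynomial.C_0,
    zero_mul, zero_add, pow_zero]
  have h : (∑ x : Fin n, Polynomial.C (c x) * Polynomial.X ^ ((x : ℕ) + 1) : Polynomial Fq)
      = Polynomial.X * ∑ i : Fin n, Polynomial.C (c i) * Polynomial.X ^ (i : ℕ) := by
    rw [Finset.mul_sum]
    apply Finset.sum_congr rfl
    intro i _
    ring
  rw [h, map_mul, RatFunc.algebraMap_X]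

lemma vv_pad (n : ℕ) (c : Fin n → Fq) :
    vv (n + 1) (Fin.snoc c 0) = vv n c := by
  rw [vv_snoc, map_zero, zero_mul, add_zero]

lemma vv_unit (n : ℕ) :
    vv (n + 1) (Fin.snoc (0 : Fin n → Fq) 1) = θ ^ n := by
  rw [vv_snoc, vv_zero, map_one, one_mul, zero_add]


/-! ### the additive polynomials e_n -/

noncomputable def eC : ℕ → Polynomial (RatFunc Fq)
  | 0 => X
  | n+1 => eC n ^ q - C ((Polynomial.eval (θ ^ n) (eC n)) ^ (q - 1)) * eC n

noncomputable def uC (n : ℕ) : RatFunc Fq := Polynomial.eval (θ ^ n) (eC n)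

noncomputable def kC (n : ℕ) : RatFunc Fq := Polynomial.coeff (eC n) 1

lemma eC_succ (n : ℕ) : eC (Fq := Fq) (n+1) = eC n ^ q - C (uC n ^ (q - 1)) * eC n := rfl

lemma eval_eC_succ (n : ℕ) (x : K) :
    Polynomial.eval x (eC (n+1)) =
      (Polynomial.eval x (eC n)) ^ q - (uC n) ^ (q - 1) * Polynomial.eval x (eC n) := by
  rw [eC_succ, eval_sub, eval_mul, eval_pow, eval_C]

lemma eval_eC_add (n : ℕ) (x y : K) :
    Polynomial.eval (x + y) (eC n) =
      Polynomial.eval x (eC n) + Polynomial.eval y (eC n) := by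
  induction n with
  | zero => simp [eC]
  | succ n ih =>
    rw [eval_eC_succ, eval_eC_succ, eval_eC_succ, ih, frobK]
    ring

lemma eval_eC_smul (n : ℕ) (s : Fq) (x : K) :
    Polynomial.eval (ε s * x) (eC n) = ε s * Polynomial.eval x (eC n) := by
  induction n with
  | zero => simp [eC]
  | succ n ih =>
    rw [eval_eC_succ, eval_eC_succ, ih, mul_pow, frob_alg]
    ring

lemma prod_split {M : Type} [CommMonoid M] (n : ℕ) (F : (Fin (n+1) → Fq) → M) :
    (∏ c, F c) = ∏ e : Fq, ∏ c' : Fin n → Fq, F (Fin.snoc c' e) := by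
  rw [← Equiv.prod_comp (Fin.snocEquiv (fun _ => Fq)) F]
  rw [Fintype.prod_prod_type]
  rfl

lemma sum_split {M : Type} [AddCommMonoid M] (n : ℕ) (F : (Fin (n+1) → Fq) → M) :
    (∑ c, F c) = ∑ e : Fq, ∑ c' : Fin n → Fq, F (Fin.snoc c' e) := by
  rw [← Equiv.sum_comp (Fin.snocEquiv (fun _ => Fq)) F]
  rw [Fintype.sum_prod_type]
  rfl

lemma eval_eC_eq_prod (n : ℕ) (t : K) :
    Polynomial.eval t (eC n) = ∏ c : Fin n → Fq, (t + vv n c) := by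
  induction n generalizing t with
  | zero =>
    rw [Fintype.prod_subsingleton _ (0 : Fin 0 → Fq), vv_zero, add_zero]
    simp [eC]
  | succ n ih =>
    rw [prod_split n (fun c => t + vv (n+1) c)]
    have hinner : ∀ e : Fq, (∏ c' : Fin n → Fq, (t + vv (n+1) (Fin.snoc c' e))) =
        Polynomial.eval t (eC n) + ε e * uC n := by
      intro e
      have : ∀ c' : Fin n → Fq, t + vv (n+1) (Fin.snoc c' e) = (t + ε e * θ ^ n) + vv n c' := by
        intro c'
        rw [vv_snoc]
        ring
      rw [Finset.prod_congr rfl (fun c' _ => this c'), ← ih]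
      rw [eval_eC_add, eval_eC_smul]
      rfl
    rw [Finset.prod_congr rfl (fun e _ => hinner e), prodFq, eval_eC_succ]

lemma theta_pow_add_vv_ne (d : ℕ) (c : Fin d → Fq) : θ ^ d + vv d c ≠ 0 := by
  have h : θ ^ d + vv d c =
      algebraMap (Polynomial Fq) (RatFunc Fq) (X ^ d + pv d c) := by
    rw [map_add, map_pow, RatFunc.algebraMap_X, vv]
  rw [h]
  intro h0
  have h1 : (X ^ d + pv d c : Polynomial Fq) = 0 := by
    apply RatFunc.algebraMap_injective Fq
    rw [h0, map_zero]
  have h2 := congrArg (fun P => Polynomial.coeff P d) h1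
  simp only [Polynomial.coeff_add, Polynomial.coeff_X_pow, if_pos rfl,
    Polynomial.coeff_zero] at h2
  rw [pv_coeff_ge d c d le_rfl] at h2
  simpa using h2

lemma uC_ne (n : ℕ) : uC (n : ℕ) ≠ (0 : RatFunc Fq) := by
  rw [uC, eval_eC_eq_prod]
  exact Finset.prod_ne_zero_iff.mpr (fun c _ => theta_pow_add_vv_ne n c)


/-! ### coefficient extraction for q-power sums -/

lemma coeff_qsum (a : ℕ → K) (m k : ℕ) :
    Polynomial.coeff (∑ i ∈ Finset.range m, C (a i) * X ^ (q ^ i)) k =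
      ∑ i ∈ Finset.range m, if k = q ^ i then a i else 0 := by
  rw [Polynomial.finset_sum_coeff]
  apply Finset.sum_congr rfl
  intro i _
  rw [Polynomial.coeff_C_mul, Polynomial.coeff_X_pow]
  by_cases h : k = q ^ i <;> simp [h]

lemma coeff_qsum_ne (a : ℕ → K) (m k : ℕ) (h : ∀ i, i < m → q ^ i ≠ k) :
    Polynomial.coeff (∑ i ∈ Finset.range m, C (a i) * X ^ (q ^ i)) k = 0 := by
  rw [coeff_qsum]
  apply Finset.sum_eq_zero
  intro i hi
  rw [if_neg (fun h' => h i (Finset.mem_range.mp hi) h'.symm)]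

lemma coeff_qsum_eq (a : ℕ → K) (m j : ℕ) (hj : j < m) :
    Polynomial.coeff (∑ i ∈ Finset.range m, C (a i) * X ^ (q ^ i)) (q ^ j) = a j := by
  rw [coeff_qsum]
  rw [Finset.sum_eq_single j]
  · rw [if_pos rfl]
  · intro i _ hi
    rw [if_neg]
    intro h'
    exact hi (Nat.pow_right_injective q1 h'.symm)
  · intro h
    exact absurd (Finset.mem_range.mpr hj) h

/-! ### the q-power representation of e_n -/

lemma shift_sum (g : ℕ → K) (m : ℕ) :
    (∑ i ∈ Finset.range (m+1), C (if i = 0 then (0:K) else g (i-1)) * X ^ (q ^ i)) =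
      ∑ i ∈ Finset.range m, C (g i) * X ^ (q ^ (i+1)) := by
  rw [Finset.sum_range_succ' (fun i => C (if i = 0 then (0:K) else g (i-1)) * X ^ (q ^ i)) m]
  simp [Nat.succ_ne_zero]

lemma pow_q_eC (n : ℕ) : ∀ a : ℕ → K,
    eC (Fq := Fq) n = ∑ i ∈ Finset.range (n+1), C (a i) * X ^ (q ^ i) →
    eC (Fq := Fq) n ^ q = ∑ i ∈ Finset.range (n+1), C (a i ^ q) * X ^ (q ^ (i+1)) := by
  intro a ha
  rw [ha, frobSumP]
  apply Finset.sum_congr rfl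
  intro i _
  rw [mul_pow, ← map_pow, ← pow_mul, ← pow_succ]

lemma rep (n : ℕ) : ∃ a : ℕ → K,
    eC (Fq := Fq) n = ∑ i ∈ Finset.range (n+1), C (a i) * X ^ (q ^ i) ∧ a n = 1 := by
  induction n with
  | zero =>
    refine ⟨fun _ => 1, ?_, rfl⟩
    simp [eC]
  | succ n ih =>
    obtain ⟨a, ha, hatop⟩ := ih
    have hq := pow_q_eC n a ha
    refine ⟨fun i => (if i = 0 then 0 else a (i-1) ^ q) -
        (if i ≤ n then uC n ^ (q-1) * a i else 0), ?_, ?_⟩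
    · rw [eC_succ, hq]
      have hsplit : ∀ i : ℕ, C ((if i = 0 then (0:K) else a (i-1) ^ q) -
            (if i ≤ n then uC n ^ (q-1) * a i else 0)) * X ^ (q ^ i)
          = C (if i = 0 then (0:K) else a (i-1) ^ q) * X ^ (q ^ i)
            - C (if i ≤ n then uC n ^ (q-1) * a i else 0) * X ^ (q ^ i) := by
        intro i
        rw [map_sub, sub_mul]
      rw [Finset.sum_congr rfl (fun i _ => hsplit i), Finset.sum_sub_distrib]
      congr 1
      · exact (shift_sum (fun i => a i ^ q) (n+1)).symm
      · rw [Finset.sum_range_succ]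
        rw [if_neg (by omega : ¬ (n+1 ≤ n)), map_zero, zero_mul, add_zero]
        rw [ha, Finset.mul_sum]
        apply Finset.sum_congr rfl
        intro i hi
        rw [if_pos (Nat.lt_succ_iff.mp (Finset.mem_range.mp hi)), map_mul, mul_assoc]
    · show (if n + 1 = 0 then (0:K) else a (n+1-1) ^ q) -
        (if n + 1 ≤ n then uC n ^ (q-1) * a (n+1) else 0) = 1
      rw [if_neg (Nat.succ_ne_zero n), if_neg (by omega : ¬ (n+1 ≤ n)), Nat.add_sub_cancel,
        hatop, one_pow, sub_zero]

lemma repq (n : ℕ) : ∃ b : ℕ → K,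
    eC (Fq := Fq) n ^ q = ∑ i ∈ Finset.range (n+2), C (b i) * X ^ (q ^ i) ∧
      b (n+1) = 1 ∧ b 0 = 0 := by
  obtain ⟨a, ha, hatop⟩ := rep (Fq := Fq) n
  refine ⟨fun i => if i = 0 then 0 else a (i-1) ^ q, ?_, ?_, rfl⟩
  · rw [pow_q_eC n a ha]
    exact (shift_sum (fun i => a i ^ q) (n+1)).symm
  · show (if n + 1 = 0 then (0:K) else a (n+1-1) ^ q) = 1
    rw [if_neg (Nat.succ_ne_zero n), Nat.add_sub_cancel, hatop, one_pow]

lemma coeff_eC_not (n k : ℕ) (h : ∀ i, i ≤ n → q ^ i ≠ k) :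
    Polynomial.coeff (eC (Fq := Fq) n) k = 0 := by
  obtain ⟨a, ha, -⟩ := rep (Fq := Fq) n
  rw [ha]
  exact coeff_qsum_ne a (n+1) k (fun i hi => h i (Nat.lt_succ_iff.mp hi))

lemma coeff_eC_top (n : ℕ) : Polynomial.coeff (eC (Fq := Fq) n) (q ^ n) = 1 := by
  obtain ⟨a, ha, hatop⟩ := rep (Fq := Fq) n
  rw [ha, coeff_qsum_eq a (n+1) n (Nat.lt_succ_self n), hatop]

lemma natDegree_eC_le (n : ℕ) : (eC (Fq := Fq) n).natDegree ≤ q ^ n := by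
  rw [Polynomial.natDegree_le_iff_coeff_eq_zero]
  intro k hk
  apply coeff_eC_not
  intro i hi
  exact Nat.ne_of_lt (lt_of_le_of_lt (Nat.pow_le_pow_right (Nat.lt_of_lt_of_le Nat.zero_lt_one (le_of_lt q1)) hi) hk)

lemma natDegree_eC (n : ℕ) : (eC (Fq := Fq) n).natDegree = q ^ n := by
  apply le_antisymm (natDegree_eC_le n)
  apply Polynomial.le_natDegree_of_ne_zero
  rw [coeff_eC_top]
  exact one_ne_zero

lemma kC_succ (n : ℕ) : kC (Fq := Fq) (n+1) = -(uC n ^ (q-1)) * kC n := by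
  obtain ⟨b, hb, -, hb0⟩ := repq (Fq := Fq) n
  rw [kC, kC, eC_succ, Polynomial.coeff_sub, Polynomial.coeff_C_mul, hb]
  have h1 : (1 : ℕ) = q ^ 0 := (pow_zero q).symm
  rw [h1, coeff_qsum_eq b (n+2) 0 (by omega), hb0]
  ring

lemma kC_zero : kC (Fq := Fq) 0 = 1 := by
  rw [kC]
  simp [eC]

lemma kC_ne (n : ℕ) : kC (Fq := Fq) n ≠ 0 := by
  induction n with
  | zero => rw [kC_zero]; exact one_ne_zero
  | succ n ih =>
    rw [kC_succ]
    exact mul_ne_zero (neg_ne_zero.mpr (pow_ne_zero _ (uC_ne n))) ih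


/-! ### roots of e_n -/

lemma eval_eC_vv (n : ℕ) (c : Fin n → Fq) :
    Polynomial.eval (vv n c) (eC n) = 0 := by
  induction n with
  | zero => simp [eC, vv, pv]
  | succ n ih =>
    rw [← Fin.snoc_init_self c, vv_snoc, eval_eC_succ, eval_eC_add, eval_eC_smul,
      ih (Fin.init c), zero_add]
    have hu : Polynomial.eval (θ ^ n) (eC (Fq := Fq) n) = uC n := rfl
    rw [hu, mul_pow, frob_alg]
    rw [← pow_qsub1 (uC (Fq := Fq) n)]
    ring

lemma eC_ne_zero (n : ℕ) : eC (Fq := Fq) n ≠ 0 := by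
  intro h
  have := coeff_eC_top (Fq := Fq) n
  rw [h] at this
  simp at this

lemma prod_dvd_of_roots (s : Finset K) : ∀ (P : Polynomial K),
    (∀ r ∈ s, Polynomial.eval r P = 0) → (∏ r ∈ s, (X - C r)) ∣ P := by
  classical
  induction s using Finset.induction_on with
  | empty => intro P _; simp
  | @insert r s hrs ih =>
    intro P hP
    obtain ⟨Q, hQ⟩ := (Polynomial.dvd_iff_isRoot).mpr (hP r (Finset.mem_insert_self r s))
    have hQroots : ∀ r' ∈ s, Polynomial.eval r' Q = 0 := by
      intro r' hr'
      have h0 := hP r' (Finset.mem_insert_of_mem hr')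
      rw [hQ, eval_mul, eval_sub, eval_X, eval_C] at h0
      have hne : r' - r ≠ 0 := sub_ne_zero.mpr (fun h => hrs (h ▸ hr'))
      exact (mul_eq_zero.mp h0).resolve_left hne
    rw [Finset.prod_insert hrs, hQ]
    exact mul_dvd_mul_left _ (ih Q hQroots)

lemma eC_prod (n : ℕ) : eC (Fq := Fq) n = ∏ c : Fin n → Fq, (X - C (vv n c)) := by
  haveI := infK (Fq := Fq)
  apply Polynomial.funext
  intro t
  rw [eval_prod]
  have h : ∀ c : Fin n → Fq, Polynomial.eval t (X - C (vv n c)) = t - vv n c := by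
    intro c
    rw [eval_sub, eval_X, eval_C]
  rw [Finset.prod_congr rfl (fun c _ => h c), eval_eC_eq_prod]
  apply Fintype.prod_equiv (Equiv.neg (Fin n → Fq))
  intro c
  rw [Equiv.neg_apply, vv_neg, sub_neg_eq_add]

/-! ### the Carlitz relation -/

lemma carlitz (n : ℕ) (x : K) :
    Polynomial.eval (θ * x) (eC (n+1)) = θ * Polynomial.eval x (eC (n+1)) +
      (θ ^ (q ^ (n+1)) - θ) * (Polynomial.eval x (eC n)) ^ q := by
  classical
  obtain ⟨a, ha, hatop⟩ := rep (Fq := Fq) (n+1)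
  obtain ⟨b, hb, hbtop, hb0⟩ := repq (Fq := Fq) n
  have ha0 : a 0 = Polynomial.coeff (eC (Fq := Fq) (n+1)) 1 := by
    have h := coeff_qsum_eq a (n+2) 0 (by omega)
    rw [pow_zero] at h
    rw [ha]
    exact h.symm
  have hatop' : a (n+1) = 1 := hatop
  set H : Polynomial K :=
    (∑ i ∈ Finset.range (n+2), C (a i * θ ^ (q ^ i)) * X ^ (q ^ i))
      - C θ * eC (n+1) - C (θ ^ (q ^ (n+1)) - θ) * eC n ^ q with hH
  have heval : ∀ y : K, Polynomial.eval y H =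
      Polynomial.eval (θ * y) (eC (n+1)) - θ * Polynomial.eval y (eC (n+1))
        - (θ ^ (q ^ (n+1)) - θ) * (Polynomial.eval y (eC n)) ^ q := by
    intro y
    rw [hH]
    simp only [eval_sub, eval_mul, eval_pow, eval_C]
    congr 1
    congr 1
    rw [Polynomial.eval_finset_sum]
    conv_rhs => rw [ha, Polynomial.eval_finset_sum]
    apply Finset.sum_congr rfl
    intro i _
    simp only [eval_mul, eval_pow, eval_C, eval_X]
    rw [mul_pow]
    ring
  have hroots : ∀ c : Fin n → Fq, Polynomial.eval (vv n c) H = 0 := by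
    intro c
    rw [heval]
    have h1 : θ * vv n c = vv (n+1) (Fin.cons 0 c) := (vv_cons0 n c).symm
    have h2 : vv n c = vv (n+1) (Fin.snoc c 0) := (vv_pad n c).symm
    rw [h1, eval_eC_vv]
    have h3 : Polynomial.eval (vv n c) (eC (Fq := Fq) (n+1)) = 0 := by
      rw [h2]
      exact eval_eC_vv (n+1) _
    rw [h3, eval_eC_vv n c]
    simp
  have hdeg : H.natDegree ≤ q ^ n := by
    rw [Polynomial.natDegree_le_iff_coeff_eq_zero]
    intro k hk
    have hcoeff : H.coeff k =
        Polynomial.coeff (∑ i ∈ Finset.range (n+2), C (a i * θ ^ (q ^ i)) * X ^ (q ^ i)) k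
          - θ * Polynomial.coeff (eC (n+1)) k
          - (θ ^ (q ^ (n+1)) - θ) * Polynomial.coeff (eC n ^ q) k := by
      rw [hH, Polynomial.coeff_sub, Polynomial.coeff_sub, Polynomial.coeff_C_mul,
        Polynomial.coeff_C_mul]
    rw [hcoeff]
    by_cases hk1 : k = q ^ (n+1)
    · subst hk1
      rw [coeff_qsum_eq _ (n+2) (n+1) (by omega), coeff_eC_top, hb,
        coeff_qsum_eq b (n+2) (n+1) (by omega), hbtop, hatop']
      ring
    · have hnot : ∀ i, i ≤ n + 1 → q ^ i ≠ k := by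
        intro i hi h'
        rcases Nat.lt_or_ge i (n+1) with h | h
        · have : q ^ i ≤ q ^ n :=
            Nat.pow_le_pow_right (Nat.lt_of_lt_of_le Nat.zero_lt_one (le_of_lt q1))
              (by omega)
          omega
        · have hieq : i = n + 1 := by omega
          exact hk1 (by rw [← h', hieq])
      rw [coeff_qsum_ne _ (n+2) k (fun i hi => hnot i (by omega)),
        coeff_eC_not (n+1) k hnot, hb,
        coeff_qsum_ne b (n+2) k (fun i hi => hnot i (by omega))]
      ring
  have hcoeff1 : H.coeff 1 = 0 := by
    have hcoeff : H.coeff 1 =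
        Polynomial.coeff (∑ i ∈ Finset.range (n+2), C (a i * θ ^ (q ^ i)) * X ^ (q ^ i)) 1
          - θ * Polynomial.coeff (eC (n+1)) 1
          - (θ ^ (q ^ (n+1)) - θ) * Polynomial.coeff (eC n ^ q) 1 := by
      rw [hH, Polynomial.coeff_sub, Polynomial.coeff_sub, Polynomial.coeff_C_mul,
        Polynomial.coeff_C_mul]
    rw [hcoeff, ← ha0, hb, ← pow_zero q,
      coeff_qsum_eq _ (n+2) 0 (by omega), coeff_qsum_eq b (n+2) 0 (by omega), hb0, pow_zero]
    ring
  have hzero : H = 0 := by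
    have himg : (∏ r ∈ Finset.univ.image (vv n), (X - C r)) =
        ∏ c : Fin n → Fq, (X - C (vv n c)) :=
      Finset.prod_image (fun c _ c' _ h => vv_inj n h)
    have hdvd := prod_dvd_of_roots (Finset.univ.image (vv n)) H (by
      intro r hr
      obtain ⟨c, -, rfl⟩ := Finset.mem_image.mp hr
      exact hroots c)
    rw [himg, ← eC_prod] at hdvd
    obtain ⟨Q, hQ⟩ := hdvd
    rcases eq_or_ne Q 0 with rfl | hQ0
    · rw [hQ, mul_zero]
    · have hnatQ : Q.natDegree = 0 := by
        have := Polynomial.natDegree_mul (eC_ne_zero (Fq := Fq) n) hQ0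
        rw [← hQ, natDegree_eC] at this
        omega
      obtain ⟨γ, rfl⟩ := Polynomial.natDegree_eq_zero.mp hnatQ
      have h1 : H.coeff 1 = (eC (Fq := Fq) n).coeff 1 * γ := by
        rw [hQ, Polynomial.coeff_mul_C]
      rw [hcoeff1] at h1
      have hγ : γ = 0 := by
        rcases mul_eq_zero.mp h1.symm with h | h
        · exact absurd h (kC_ne n)
        · exact h
      rw [hQ, hγ, map_zero, mul_zero]
  have := heval x
  rw [hzero] at this
  simp only [Polynomial.eval_zero] at this
  linear_combination -this

lemma uC_succ (n : ℕ) : uC (Fq := Fq) (n+1) = (θ ^ (q ^ (n+1)) - θ) * uC n ^ q := by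
  have h := carlitz (Fq := Fq) n (θ ^ n)
  rw [← pow_succ'] at h
  have hroot : Polynomial.eval (θ ^ n) (eC (Fq := Fq) (n+1)) = 0 := by
    rw [← vv_unit n, eval_eC_vv]
  rw [hroot, mul_zero, zero_add] at h
  rw [uC, uC, h]


/-! ### the sum formulas -/

lemma sum_inv (n : ℕ) (t : K) (h : ∀ c : Fin n → Fq, t + vv n c ≠ 0) :
    (∑ c : Fin n → Fq, (t + vv n c)⁻¹) = kC n * (Polynomial.eval t (eC n))⁻¹ := by
  induction n generalizing t with
  | zero =>
    rw [Fintype.sum_subsingleton _ (0 : Fin 0 → Fq), vv_zero, add_zero, kC_zero, one_mul]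
    simp [eC]
  | succ n ih =>
    rw [sum_split n (fun c => (t + vv (n+1) c)⁻¹)]
    have hinner : ∀ e : Fq, (∑ c' : Fin n → Fq, (t + vv (n+1) (Fin.snoc c' e))⁻¹) =
        kC n * (Polynomial.eval t (eC n) + ε e * uC n)⁻¹ := by
      intro e
      have heq : ∀ c' : Fin n → Fq,
          t + vv (n+1) (Fin.snoc c' e) = (t + ε e * θ ^ n) + vv n c' := by
        intro c'
        rw [vv_snoc]
        ring
      rw [Finset.sum_congr rfl (fun c' _ => by rw [heq c'])]
      rw [ih (t + ε e * θ ^ n) (fun c' => by rw [← heq c']; exact h _)]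
      rw [eval_eC_add, eval_eC_smul]
      rfl
    rw [Finset.sum_congr rfl (fun e _ => hinner e), ← Finset.mul_sum]
    have hden : ∀ e : Fq, Polynomial.eval t (eC (Fq := Fq) n) + ε e * uC n ≠ 0 := by
      intro e
      have heq : ∀ c' : Fin n → Fq,
          t + vv (n+1) (Fin.snoc c' e) = (t + ε e * θ ^ n) + vv n c' := by
        intro c'
        rw [vv_snoc]
        ring
      have : Polynomial.eval t (eC (Fq := Fq) n) + ε e * uC n =
          Polynomial.eval (t + ε e * θ ^ n) (eC (Fq := Fq) n) := by
        rw [eval_eC_add, eval_eC_smul]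
        rfl
      rw [this, eval_eC_eq_prod]
      apply Finset.prod_ne_zero_iff.mpr
      intro c' _
      rw [← heq c']
      exact h _
    rw [sumFq _ (uC n) (uC_ne n) hden]
    rw [kC_succ, eval_eC_succ]
    ring

lemma sum_inv_sq (n : ℕ) (t : K) (h : ∀ c : Fin n → Fq, t + vv n c ≠ 0) :
    (∑ c : Fin n → Fq, ((t + vv n c) ^ 2)⁻¹) =
      (∑ c : Fin n → Fq, (t + vv n c)⁻¹) ^ 2 := by
  classical
  set f : (Fin n → Fq) → K := fun c => (t + vv n c)⁻¹ with hf
  have hmap : ∀ c : Fin n → Fq,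
      (Finset.univ.erase (0 : Fin n → Fq)).map (addLeftEmbedding c) = Finset.univ.erase c := by
    intro c
    ext x
    simp only [Finset.mem_map, Finset.mem_erase, Finset.mem_univ, and_true,
      addLeftEmbedding_apply]
    constructor
    · rintro ⟨b, hb, rfl⟩
      exact fun hx => hb (by simpa using hx)
    · intro hx
      exact ⟨x - c, fun h0 => hx (by rw [← sub_eq_zero]; exact h0), by ring⟩
  have cross : (∑ c : Fin n → Fq, ∑ c' ∈ Finset.univ.erase c, f c * f c') = 0 := by
    have hre : ∀ c : Fin n → Fq, (∑ c' ∈ Finset.univ.erase c, f c * f c') =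
        ∑ b ∈ Finset.univ.erase (0 : Fin n → Fq), f c * f (c + b) := by
      intro c
      rw [← hmap c, Finset.sum_map]
      rfl
    rw [Finset.sum_congr rfl (fun c _ => hre c), Finset.sum_comm]
    apply Finset.sum_eq_zero
    intro b hb
    have hb0 : b ≠ 0 := (Finset.mem_erase.mp hb).1
    have hvb : vv n b ≠ 0 := vv_ne n b hb0
    have hterm : ∀ c : Fin n → Fq, f c * f (c + b) = (vv n b)⁻¹ * (f c - f (c + b)) := by
      intro c
      have h1 : t + vv n c ≠ 0 := h c
      have h2 : t + (vv n c + vv n b) ≠ 0 := by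
        rw [← vv_add]
        exact h (c + b)
      rw [hf]
      simp only []
      rw [vv_add]
      field_simp
      ring
    rw [Finset.sum_congr rfl (fun c _ => hterm c), ← Finset.mul_sum]
    rw [Finset.sum_sub_distrib]
    have hshift : (∑ x : Fin n → Fq, f (x + b)) = ∑ x : Fin n → Fq, f x :=
      Fintype.sum_equiv (Equiv.addRight b) _ _ (fun x => rfl)
    rw [hshift, sub_self, mul_zero]
  have hdiag : ∀ c : Fin n → Fq, ((t + vv n c) ^ 2)⁻¹ = f c * f c := by
    intro c
    rw [hf]
    simp only []
    rw [sq, mul_inv]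
  rw [Finset.sum_congr rfl (fun c _ => hdiag c), sq, Finset.sum_mul_sum]
  have hsplit : ∀ c : Fin n → Fq, (∑ c' : Fin n → Fq, f c * f c') =
      f c * f c + ∑ c' ∈ Finset.univ.erase c, f c * f c' := by
    intro c
    rw [Finset.add_sum_erase Finset.univ (fun c' => f c * f c') (Finset.mem_univ c)]
  rw [Finset.sum_congr rfl (fun c _ => hsplit c), Finset.sum_add_distrib, cross, add_zero]

end PowerSumAux

open PowerSumAux in
/-- For all `d ≥ 0`, `∑_{a ∈ A⁺(d)} 1/a² = 1/l_d²` in `K = F_q(θ)`. -/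
theorem powerSum_two_eq_inv_l_sq
    (Fq : Type) [Field Fq] [Fintype Fq] (q : ℕ) (hq : q = Fintype.card Fq)
    (θ : RatFunc Fq) (hθ : θ = RatFunc.X)
    (l : ℕ → RatFunc Fq) (hl0 : l 0 = 1)
    (hl : ∀ i, l (i + 1) = (θ - θ ^ q ^ (i + 1)) * l i)
    (d : ℕ) :
    ∑ᶠ a ∈ {a : Polynomial Fq | a.Monic ∧ a.natDegree = d},
      ((algebraMap (Polynomial Fq) (RatFunc Fq) a) ^ 2)⁻¹ = ((l d) ^ 2)⁻¹ := by
  subst hq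
  subst hθ
  classical
  -- the value of `l` in terms of `uC` and `kC`
  have hu0 : uC (Fq := Fq) 0 = 1 := by
    simp [uC, eC]
  have hlk : ∀ n : ℕ, uC (Fq := Fq) n = l n * kC n := by
    intro n
    induction n with
    | zero => rw [hu0, hl0, kC_zero, one_mul]
    | succ n ih =>
      rw [uC_succ, ih, hl n, kC_succ, ih, ← pow_qsub1 (l n * kC n)]
      ring
  have hlne : ∀ n : ℕ, l n ≠ 0 := by
    intro n h0
    exact uC_ne (Fq := Fq) n (by rw [hlk n, h0, zero_mul])
  -- the monic polynomials of degree d are the range of `g`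
  set g : (Fin d → Fq) → Polynomial Fq := fun c => Polynomial.X ^ d + pv d c with hg
  have hcoeffg : ∀ (c : Fin d → Fq) (k : ℕ),
      (g c).coeff k = (if k = d then 1 else 0) + (pv d c).coeff k := by
    intro c k
    rw [hg]
    simp only [Polynomial.coeff_add, Polynomial.coeff_X_pow]
  have hginj : Function.Injective g := by
    intro c c' hcc
    apply pv_inj d
    have h1 := congrArg (fun P => P - Polynomial.X ^ d) hcc
    simpa [hg] using h1
  have hrange : {a : Polynomial Fq | a.Monic ∧ a.natDegree = d} = Set.range g := by
    ext a
    simp only [Set.mem_setOf_eq, Set.mem_range]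
    constructor
    · rintro ⟨hmon, hdeg⟩
      refine ⟨fun i => a.coeff (i : ℕ), ?_⟩
      apply Polynomial.ext
      intro k
      rw [hcoeffg]
      rcases lt_trichotomy k d with hk | hk | hk
      · rw [if_neg (by omega), pv_coeff_lt d _ k hk, zero_add]
      · rw [if_pos hk, pv_coeff_ge d _ k (le_of_eq hk.symm), add_zero]
        have h2 := hmon.coeff_natDegree
        rw [hdeg] at h2
        rw [hk]
        exact h2.symm
      · rw [if_neg (by omega), pv_coeff_ge d _ k (by omega), add_zero]
        exact (Polynomial.coeff_eq_zero_of_natDegree_lt (by omega)).symm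
    · rintro ⟨c, rfl⟩
      have hdegpv : (pv d c).degree < (d : WithBot ℕ) := by
        rw [Polynomial.degree_lt_iff_coeff_zero]
        intro m hm
        exact pv_coeff_ge d c m (by exact_mod_cast hm)
      have hmon : (g c).Monic := Polynomial.monic_X_pow_add hdegpv
      refine ⟨hmon, ?_⟩
      have hdeg : (g c).degree = (d : WithBot ℕ) := by
        rw [hg]
        simp only []
        rw [Polynomial.degree_add_eq_left_of_degree_lt
          (by rwa [Polynomial.degree_X_pow]), Polynomial.degree_X_pow]
      exact Polynomial.natDegree_eq_of_degree_eq_some hdeg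
  rw [hrange, finsum_mem_range hginj, finsum_eq_sum_of_fintype]
  have halg : ∀ c : Fin d → Fq,
      algebraMap (Polynomial Fq) (RatFunc Fq) (g c) = RatFunc.X ^ d + vv d c := by
    intro c
    rw [hg]
    simp only []
    rw [map_add, map_pow, RatFunc.algebraMap_X, vv]
  have hne : ∀ c : Fin d → Fq, (RatFunc.X : RatFunc Fq) ^ d + vv d c ≠ 0 :=
    theta_pow_add_vv_ne d
  calc (∑ c : Fin d → Fq, ((algebraMap (Polynomial Fq) (RatFunc Fq) (g c)) ^ 2)⁻¹)
      = ∑ c : Fin d → Fq, (((RatFunc.X : RatFunc Fq) ^ d + vv d c) ^ 2)⁻¹ :=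
        Finset.sum_congr rfl (fun c _ => by rw [halg c])
    _ = (∑ c : Fin d → Fq, ((RatFunc.X : RatFunc Fq) ^ d + vv d c)⁻¹) ^ 2 :=
        sum_inv_sq d _ hne
    _ = (kC d * (Polynomial.eval ((RatFunc.X : RatFunc Fq) ^ d) (eC d))⁻¹) ^ 2 := by
        rw [sum_inv d _ hne]
    _ = (kC d * (uC (Fq := Fq) d)⁻¹) ^ 2 := rfl
    _ = ((l d) ^ 2)⁻¹ := by
        rw [hlk d, mul_inv, ← mul_assoc, mul_comm (kC (Fq := Fq) d), mul_assoc,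
          mul_inv_cancel₀ (kC_ne d), mul_one, ← inv_pow]
end

section
/- For all d ≥ 0, with S_d(n; σ) := Σ_{a monic of degree d} a(t)/a^n and S_d(n; 1) := Σ_{a monic of degree d} 1/a^n, the identity S_d(1;σ)·S_d(1;1) = S_d(2;σ) − S_d(1;1)·Σ_{i=0}^{d-1} S_i(1;σ) holds in F_q(θ)(t). -/
set_option autoImplicit false

open Polynomial

set_option maxHeartbeats 1000000

section Aux

variable {Fq : Type} [Field Fq] [Fintype Fq] [DecidableEq Fq]

/-- The finset of monic polynomials of natDegree `d`. -/
noncomputable def monicSet (Fq : Type) [Field Fq] [Fintype Fq] [DecidableEq Fq] (d : ℕ) :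
    Finset (Polynomial Fq) :=
  Finset.image (fun v : Fin d → Fq => X ^ d + ∑ i, C (v i) * X ^ (i : ℕ)) Finset.univ

theorem mem_monicSet {d : ℕ} {a : Polynomial Fq} :
    a ∈ monicSet Fq d ↔ a.Monic ∧ a.natDegree = d := by
  constructor
  · rintro h
    simp only [monicSet, Finset.mem_image, Finset.mem_univ, true_and] at h
    obtain ⟨v, rfl⟩ := h
    have hdeg : (∑ i : Fin d, C (v i) * X ^ (i : ℕ)).degree < (d : WithBot ℕ) :=
      degree_sum_fin_lt v
    refine ⟨monic_X_pow_add hdeg, ?_⟩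
    have h1 : (X ^ d + ∑ i : Fin d, C (v i) * X ^ (i : ℕ)).degree = (d : WithBot ℕ) := by
      rw [add_comm, degree_add_eq_right_of_degree_lt (by simpa using hdeg), degree_X_pow]
    exact natDegree_eq_of_degree_eq_some h1
  · rintro ⟨hm, rfl⟩
    simp only [monicSet, Finset.mem_image, Finset.mem_univ, true_and]
    set r : Polynomial Fq := a - X ^ a.natDegree with hr
    have hrd : r.degree < (a.natDegree : WithBot ℕ) := by
      have h2 := degree_sub_lt (p := a) (q := X ^ a.natDegree) ?_ hm.ne_zero ?_
      · rwa [degree_eq_natDegree hm.ne_zero] at h2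
      · rw [degree_eq_natDegree hm.ne_zero, degree_X_pow]
      · rw [hm.leadingCoeff, leadingCoeff_X_pow]
    refine ⟨fun i => r.coeff (i : ℕ), ?_⟩
    have hsum : (∑ i : Fin a.natDegree, C (r.coeff (i : ℕ)) * X ^ (i : ℕ)) = r := by
      rw [Fin.sum_univ_eq_sum_range (fun j => C (r.coeff j) * X ^ j) a.natDegree]
      by_cases hr0 : r = 0
      · simp [hr0]
      · simp_rw [C_mul_X_pow_eq_monomial]
        rw [← as_sum_range' r a.natDegree ((natDegree_lt_iff_degree_lt hr0).2 hrd)]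
    rw [hsum, hr]
    ring

/-- Nonzero polynomials of natDegree exactly `j`, as scalar multiples of monics. -/
noncomputable def ltPiece (Fq : Type) [Field Fq] [Fintype Fq] [DecidableEq Fq] (j : ℕ) :
    Finset (Polynomial Fq) :=
  Finset.image (fun p : Fq × Polynomial Fq => C p.1 * p.2)
    ((Finset.univ.filter (· ≠ (0 : Fq))) ×ˢ monicSet Fq j)

theorem mem_ltPiece {j : ℕ} {c : Polynomial Fq} :
    c ∈ ltPiece Fq j ↔ c ≠ 0 ∧ c.natDegree = j := by
  constructor
  · rintro h
    simp only [ltPiece, Finset.mem_image, Finset.mem_product, Finset.mem_filter,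
      Finset.mem_univ, true_and, Prod.exists] at h
    obtain ⟨l, m, ⟨hl, hm⟩, rfl⟩ := h
    obtain ⟨hm1, hm2⟩ := mem_monicSet.1 hm
    refine ⟨mul_ne_zero (by simpa using hl) hm1.ne_zero, ?_⟩
    rw [natDegree_C_mul hl, hm2]
  · rintro ⟨hc, rfl⟩
    simp only [ltPiece, Finset.mem_image, Finset.mem_product, Finset.mem_filter,
      Finset.mem_univ, true_and, Prod.exists]
    refine ⟨c.leadingCoeff, C c.leadingCoeff⁻¹ * c, ⟨leadingCoeff_ne_zero.2 hc, ?_⟩, ?_⟩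
    · refine mem_monicSet.2 ⟨?_, ?_⟩
      · unfold Monic
        rw [leadingCoeff_mul, leadingCoeff_C, inv_mul_cancel₀ (leadingCoeff_ne_zero.2 hc)]
      · rw [natDegree_C_mul (inv_ne_zero (leadingCoeff_ne_zero.2 hc))]
    · rw [← mul_assoc, ← C_mul, mul_inv_cancel₀ (leadingCoeff_ne_zero.2 hc), C_1, one_mul]

/-- Nonzero polynomials of natDegree `< d`. -/
noncomputable def ltSet (Fq : Type) [Field Fq] [Fintype Fq] [DecidableEq Fq] (d : ℕ) :
    Finset (Polynomial Fq) :=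
  (Finset.range d).biUnion (ltPiece Fq)

theorem mem_ltSet {d : ℕ} {c : Polynomial Fq} :
    c ∈ ltSet Fq d ↔ c ≠ 0 ∧ c.natDegree < d := by
  simp only [ltSet, Finset.mem_biUnion, Finset.mem_range, mem_ltPiece]
  constructor
  · rintro ⟨j, hj, hc, rfl⟩; exact ⟨hc, hj⟩
  · rintro ⟨hc, hj⟩; exact ⟨c.natDegree, hj, hc, rfl⟩

variable {K : Type} [Field K] {i s : Polynomial Fq →+* K}

theorem i_ne (hi : Function.Injective i) {a : Polynomial Fq} (ha : a ≠ 0) : i a ≠ 0 := by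
  intro h
  exact ha (hi (by rw [h, map_zero]))

theorem sum_ltPiece (hi : Function.Injective i) (hs : ∀ c : Fq, s (C c) = i (C c))
    (h0 : ((Fintype.card Fq : ℕ) : K) = 0) (j : ℕ) :
    ∑ c ∈ ltPiece Fq j, s c / i c = - ∑ m ∈ monicSet Fq j, s m / i m := by
  have hinj : ∀ p ∈ (Finset.univ.filter (· ≠ (0 : Fq))) ×ˢ monicSet Fq j,
      ∀ p' ∈ (Finset.univ.filter (· ≠ (0 : Fq))) ×ˢ monicSet Fq j,
      (fun p : Fq × Polynomial Fq => C p.1 * p.2) p =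
        (fun p : Fq × Polynomial Fq => C p.1 * p.2) p' → p = p' := by
    rintro ⟨l, m⟩ hp ⟨l', m'⟩ hp' h
    simp only [Finset.mem_product, Finset.mem_filter, Finset.mem_univ, true_and] at hp hp'
    obtain ⟨hl, hm⟩ := hp
    obtain ⟨hl', hm'⟩ := hp'
    simp only at h
    have hll : l = l' := by
      have := congrArg leadingCoeff h
      rwa [leadingCoeff_mul, leadingCoeff_mul, leadingCoeff_C, leadingCoeff_C,
        (mem_monicSet.1 hm).1.leadingCoeff, (mem_monicSet.1 hm').1.leadingCoeff,
        mul_one, mul_one] at this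
    subst hll
    have hmm : m = m' := by
      refine mul_left_cancel₀ (fun hC => hl (by simpa using congrArg (fun p => coeff p 0) hC)) h
    rw [hmm]
  rw [ltPiece, Finset.sum_image hinj, Finset.sum_product]
  have hterm : ∀ l : Fq, l ≠ 0 → ∀ m ∈ monicSet Fq j, s (C l * m) / i (C l * m) = s m / i m := by
    intro l hl m hm
    rw [map_mul, map_mul, hs]
    exact mul_div_mul_left _ _ (i_ne hi (by simpa using hl))
  have hrow : ∀ l ∈ Finset.univ.filter (· ≠ (0 : Fq)),
      (∑ m ∈ monicSet Fq j, s (C l * m) / i (C l * m)) = ∑ m ∈ monicSet Fq j, s m / i m := by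
    intro l hl
    exact Finset.sum_congr rfl (hterm l (by simpa using hl))
  rw [Finset.sum_congr rfl hrow, Finset.sum_const]
  have hcard : (Finset.univ.filter (· ≠ (0 : Fq))).card = Fintype.card Fq - 1 := by
    rw [Finset.filter_ne', Finset.card_erase_of_mem (Finset.mem_univ _), Finset.card_univ]
  rw [hcard, nsmul_eq_mul, Nat.cast_sub Fintype.card_pos, h0, Nat.cast_one]
  ring

theorem add_mem_monicSet {d : ℕ} {b c : Polynomial Fq} (hb : b ∈ monicSet Fq d)
    (hc : c.degree < (d : WithBot ℕ)) : b + c ∈ monicSet Fq d := by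
  obtain ⟨hb1, hb2⟩ := mem_monicSet.1 hb
  have hbd : b.degree = (d : WithBot ℕ) := by
    rw [degree_eq_natDegree hb1.ne_zero, hb2]
  have hcb : c.degree < b.degree := by rw [hbd]; exact hc
  refine mem_monicSet.2 ⟨hb1.add_of_left hcb, ?_⟩
  apply natDegree_eq_of_degree_eq_some
  rw [degree_add_eq_left_of_degree_lt hcb, hbd]

theorem sub_mem_monicSet {d : ℕ} {b c : Polynomial Fq} (hb : b ∈ monicSet Fq d)
    (hc : c.degree < (d : WithBot ℕ)) : b - c ∈ monicSet Fq d := by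
  rw [sub_eq_add_neg]
  exact add_mem_monicSet hb (by rwa [degree_neg])

theorem ltSet_degree_lt {d : ℕ} {c : Polynomial Fq} (hc : c ∈ ltSet Fq d) :
    c.degree < (d : WithBot ℕ) := by
  obtain ⟨h1, h2⟩ := mem_ltSet.1 hc
  exact lt_of_le_of_lt degree_le_natDegree (by exact_mod_cast h2)

theorem sub_mem_ltSet {d : ℕ} {a b : Polynomial Fq} (ha : a ∈ monicSet Fq d)
    (hb : b ∈ monicSet Fq d) (hab : a ≠ b) : a - b ∈ ltSet Fq d := by
  obtain ⟨ha1, ha2⟩ := mem_monicSet.1 ha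
  obtain ⟨hb1, hb2⟩ := mem_monicSet.1 hb
  have hne : a - b ≠ 0 := sub_ne_zero.2 hab
  have hdeg : (a - b).degree < a.degree := by
    refine degree_sub_lt ?_ ha1.ne_zero (by rw [ha1.leadingCoeff, hb1.leadingCoeff])
    rw [degree_eq_natDegree ha1.ne_zero, degree_eq_natDegree hb1.ne_zero, ha2, hb2]
  refine mem_ltSet.2 ⟨hne, ?_⟩
  rw [natDegree_lt_iff_degree_lt hne, ← ha2, ← degree_eq_natDegree ha1.ne_zero]
  exact hdeg

theorem innerSumEq (hi : Function.Injective i) {d : ℕ} {c : Polynomial Fq}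
    (hc : c ∈ ltSet Fq d) :
    ∑ b ∈ monicSet Fq d, s (b + c) / (i (b + c) * i b)
      = s c / i c * ∑ b ∈ monicSet Fq d, (i b)⁻¹ := by
  have hc0 : c ≠ 0 := (mem_ltSet.1 hc).1
  have hcd := ltSet_degree_lt hc
  have hne : ∀ b ∈ monicSet Fq d, b ≠ 0 := fun b hb => (mem_monicSet.1 hb).1.ne_zero
  have step1 : ∀ b ∈ monicSet Fq d,
      s (b + c) / (i (b + c) * i b)
        = s (b + c) / (i c * i b) - s (b + c) / (i c * i (b + c)) := by
    intro b hb
    have h1 : i b ≠ 0 := i_ne hi (hne b hb)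
    have h2 : i (b + c) ≠ 0 := i_ne hi (hne _ (add_mem_monicSet hb hcd))
    have h3 : i c ≠ 0 := i_ne hi hc0
    have hibc : i (b + c) = i b + i c := map_add i b c
    rw [hibc] at h2
    rw [hibc]
    field_simp
    ring
  rw [Finset.sum_congr rfl step1, Finset.sum_sub_distrib]
  have step2 : ∑ b ∈ monicSet Fq d, s (b + c) / (i c * i (b + c))
      = ∑ b ∈ monicSet Fq d, s b / (i c * i b) := by
    refine Finset.sum_bij' (fun b _ => b + c) (fun b _ => b - c) ?_ ?_ ?_ ?_ ?_
    · intro b hb; exact add_mem_monicSet hb hcd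
    · intro b hb; exact sub_mem_monicSet hb hcd
    · intro b _; ring
    · intro b _; ring
    · intro b _; rfl
  rw [step2]
  have step3 : ∀ b ∈ monicSet Fq d,
      s (b + c) / (i c * i b) = s b / (i c * i b) + s c / i c * (i b)⁻¹ := by
    intro b hb
    have h1 : i b ≠ 0 := i_ne hi (hne b hb)
    have h3 : i c ≠ 0 := i_ne hi hc0
    rw [map_add]
    field_simp
    try ring
  rw [Finset.sum_congr rfl step3, Finset.sum_add_distrib]
  rw [← Finset.mul_sum]
  ring

theorem core (hi : Function.Injective i) (hs : ∀ c : Fq, s (C c) = i (C c))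
    (h0 : ((Fintype.card Fq : ℕ) : K) = 0) (d : ℕ) :
    (∑ a ∈ monicSet Fq d, s a / i a) * (∑ b ∈ monicSet Fq d, (i b)⁻¹)
      = (∑ a ∈ monicSet Fq d, s a / (i a) ^ 2)
        - (∑ b ∈ monicSet Fq d, (i b)⁻¹)
            * ∑ j ∈ Finset.range d, ∑ a ∈ monicSet Fq j, s a / i a := by
  rw [Finset.sum_mul_sum]
  have e1 : ∀ a ∈ monicSet Fq d, (∑ b ∈ monicSet Fq d, s a / i a * (i b)⁻¹)
      = s a / (i a) ^ 2 + ∑ b ∈ (monicSet Fq d).erase a, s a / (i a * i b) := by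
    intro a ha
    have : ∀ b ∈ monicSet Fq d, s a / i a * (i b)⁻¹ = s a / (i a * i b) := by
      intro b _
      rw [div_eq_mul_inv, div_eq_mul_inv, mul_inv, mul_assoc]
    rw [Finset.sum_congr rfl this, ← Finset.add_sum_erase _ _ ha, sq]
  rw [Finset.sum_congr rfl e1, Finset.sum_add_distrib]
  have hT : ∑ a ∈ monicSet Fq d, ∑ b ∈ (monicSet Fq d).erase a, s a / (i a * i b)
      = ∑ c ∈ ltSet Fq d, ∑ b ∈ monicSet Fq d, s (b + c) / (i (b + c) * i b) := by
    rw [Finset.sum_sigma', Finset.sum_sigma']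
    refine Finset.sum_bij' (fun p _ => (⟨p.1 - p.2, p.2⟩ : Σ _ : Polynomial Fq, Polynomial Fq))
      (fun p _ => (⟨p.2 + p.1, p.2⟩ : Σ _ : Polynomial Fq, Polynomial Fq)) ?_ ?_ ?_ ?_ ?_
    · rintro ⟨a, b⟩ hp
      rw [Finset.mem_sigma] at hp ⊢
      obtain ⟨ha, hb⟩ := hp
      have hb' := Finset.mem_of_mem_erase hb
      exact ⟨sub_mem_ltSet ha hb' (Finset.ne_of_mem_erase hb).symm, hb'⟩
    · rintro ⟨c, b⟩ hp
      rw [Finset.mem_sigma] at hp ⊢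
      obtain ⟨hc, hb⟩ := hp
      refine ⟨add_mem_monicSet hb (ltSet_degree_lt hc), ?_⟩
      refine Finset.mem_erase.2 ⟨?_, hb⟩
      intro h
      exact (mem_ltSet.1 hc).1 (by linear_combination -h)
    · rintro ⟨a, b⟩ _
      simp only [Sigma.mk.inj_iff, heq_eq_eq]
      exact ⟨by ring, trivial⟩
    · rintro ⟨c, b⟩ _
      simp only [Sigma.mk.inj_iff, heq_eq_eq]
      exact ⟨by ring, trivial⟩
    · rintro ⟨a, b⟩ _
      simp only []
      rw [add_sub_cancel]
  rw [hT, Finset.sum_congr rfl (fun c hc => innerSumEq hi hc), ← Finset.sum_mul]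
  have hdisj : (↑(Finset.range d) : Set ℕ).PairwiseDisjoint (ltPiece Fq) := by
    intro j _ j' _ hjj'
    simp only [Function.onFun]
    rw [Finset.disjoint_left]
    intro c hc hc'
    exact hjj' ((mem_ltPiece.1 hc).2.symm.trans (mem_ltPiece.1 hc').2)
  have hlt : ∑ c ∈ ltSet Fq d, s c / i c
      = - ∑ j ∈ Finset.range d, ∑ a ∈ monicSet Fq j, s a / i a := by
    rw [ltSet, Finset.sum_biUnion hdisj,
      Finset.sum_congr rfl (fun j _ => sum_ltPiece hi hs h0 j)]
    rw [Finset.sum_neg_distrib]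
  rw [hlt]
  ring

end Aux


/-- For all `d ≥ 0`, `S_d(1;σ)·S_d(1;1) = S_d(2;σ) − S_d(1;1)·∑_{i=0}^{d-1} S_i(1;σ)`
in `F_q(θ)(t)`, where `S_d(n;σ) = ∑_{a ∈ A⁺(d)} a(t)/aⁿ` and
`S_d(n;1) = ∑_{a ∈ A⁺(d)} 1/aⁿ`. -/
theorem sumShuffle_depth_one
    (Fq : Type) [Field Fq] [Fintype Fq] (q : ℕ) (hq : q = Fintype.card Fq)
    (t : RatFunc (RatFunc Fq)) (ht : t = RatFunc.X)
    (ι : Polynomial Fq →+* RatFunc (RatFunc Fq))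
    (hι : ι = RatFunc.C.comp (algebraMap (Polynomial Fq) (RatFunc Fq)))
    (Sσ Sone : ℕ → ℕ → RatFunc (RatFunc Fq))
    (hSσ : ∀ n d, Sσ n d = ∑ᶠ a ∈ {a : Polynomial Fq | a.Monic ∧ a.natDegree = d},
      a.eval₂ (ι.comp Polynomial.C) t / (ι a) ^ n)
    (hSone : ∀ n d, Sone n d = ∑ᶠ a ∈ {a : Polynomial Fq | a.Monic ∧ a.natDegree = d},
      ((ι a) ^ n)⁻¹)
    (d : ℕ) :
    Sσ 1 d * Sone 1 d = Sσ 2 d - Sone 1 d * ∑ i ∈ Finset.range d, Sσ 1 i := by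
  classical
  have hιinj : Function.Injective ι := by
    rw [hι]
    exact RatFunc.C.injective.comp (IsFractionRing.injective (Polynomial Fq) (RatFunc Fq))
  set sh : Polynomial Fq →+* RatFunc (RatFunc Fq) := eval₂RingHom (ι.comp Polynomial.C) t
    with hsdef
  have hsh : ∀ a : Polynomial Fq, sh a = a.eval₂ (ι.comp Polynomial.C) t := by
    intro a; rw [hsdef, coe_eval₂RingHom]
  have hset : ∀ e : ℕ,
      {a : Polynomial Fq | a.Monic ∧ a.natDegree = e} = ↑(monicSet Fq e) := by
    intro e; ext a
    simp only [Set.mem_setOf_eq, Finset.coe_sort_coe, Finset.mem_coe, mem_monicSet]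
  have hSσ' : ∀ n e, Sσ n e = ∑ a ∈ monicSet Fq e, sh a / (ι a) ^ n := by
    intro n e
    rw [hSσ, hset, finsum_mem_coe_finset]
    exact Finset.sum_congr rfl fun a _ => by rw [hsh]
  have hSone' : ∀ e, Sone 1 e = ∑ b ∈ monicSet Fq e, (ι b)⁻¹ := by
    intro e
    rw [hSone, hset, finsum_mem_coe_finset]
    exact Finset.sum_congr rfl fun a _ => by rw [pow_one]
  have h0 : ((Fintype.card Fq : ℕ) : RatFunc (RatFunc Fq)) = 0 := by
    calc ((Fintype.card Fq : ℕ) : RatFunc (RatFunc Fq))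
        = (ι.comp Polynomial.C) ((Fintype.card Fq : ℕ) : Fq) := (map_natCast _ _).symm
      _ = 0 := by rw [Nat.cast_card_eq_zero, map_zero]
  have hs : ∀ c : Fq, sh (Polynomial.C c) = ι (Polynomial.C c) := by
    intro c
    rw [hsh, eval₂_C]
    rfl
  have hcore := core (i := ι) (s := sh) hιinj hs h0 d
  have hrange : ∑ i ∈ Finset.range d, Sσ 1 i
      = ∑ j ∈ Finset.range d, ∑ a ∈ monicSet Fq j, sh a / ι a := by
    refine Finset.sum_congr rfl fun j _ => ?_
    rw [hSσ' 1 j]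
    exact Finset.sum_congr rfl fun a _ => by rw [pow_one]
  rw [hSσ' 1 d, hSσ' 2 d, hSone' d, hrange]
  calc (∑ a ∈ monicSet Fq d, sh a / ι a ^ 1) * ∑ b ∈ monicSet Fq d, (ι b)⁻¹
      = (∑ a ∈ monicSet Fq d, sh a / ι a) * ∑ b ∈ monicSet Fq d, (ι b)⁻¹ := by
        rw [Finset.sum_congr rfl fun a _ => by rw [pow_one]]
    _ = _ := by rw [hcore]
end

section
/- For all d ≥ 0, the identity (Σ_{a monic, deg a = d} a(t_1)/a)·(Σ_{a monic, deg a = d} a(t_2)/a) = S_d(2; σψ) − S_d(1;ψ)·Σ_{i=0}^{d-1} S_i(1;σ) − S_d(1;σ)·Σ_{i=0}^{d-1} S_i(1;ψ) holds, where S_d(n; σψ) = Σ_{a monic, deg a = d} a(t_1)a(t_2)/a^n, S_d(1;σ) = Σ a(t_1)/a, S_d(1;ψ) = Σ a(t_2)/a, assuming q > 2. -/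
set_option autoImplicit false

open Polynomial Finset

section Aux

variable {Fq : Type} [Field Fq] [Fintype Fq] {K : Type} [Field K]

private lemma monic_deg_finite (Fq : Type) [Field Fq] [Fintype Fq] (d : ℕ) :
    {a : Polynomial Fq | a.Monic ∧ a.natDegree = d}.Finite := by
  have h2 : ((degreeLT Fq (d+1) : Submodule Fq (Polynomial Fq)) : Set (Polynomial Fq)).Finite :=
    have : Finite (degreeLT Fq (d+1)) := Finite.of_equiv _ (degreeLTEquiv Fq (d+1)).symm.toEquiv
    Set.toFinite _
  refine h2.subset ?_
  rintro a ⟨ha, hd⟩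
  simp only [SetLike.mem_coe, mem_degreeLT]
  calc a.degree ≤ a.natDegree := degree_le_natDegree
  _ < (d+1 : ℕ) := by exact_mod_cast Nat.lt_succ_of_le hd.le

private lemma nonzero_lt_finite (Fq : Type) [Field Fq] [Fintype Fq] (d : ℕ) :
    {c : Polynomial Fq | c ≠ 0 ∧ c.natDegree < d}.Finite := by
  have h2 : ((degreeLT Fq d : Submodule Fq (Polynomial Fq)) : Set (Polynomial Fq)).Finite :=
    have : Finite (degreeLT Fq d) := Finite.of_equiv _ (degreeLTEquiv Fq d).symm.toEquiv
    Set.toFinite _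
  refine h2.subset ?_
  rintro c ⟨hc, hd⟩
  simp only [SetLike.mem_coe, mem_degreeLT]
  calc c.degree ≤ c.natDegree := degree_le_natDegree
  _ < (d : ℕ) := by exact_mod_cast hd

private noncomputable def MF (Fq : Type) [Field Fq] [Fintype Fq] (d : ℕ) :
    Finset (Polynomial Fq) := (monic_deg_finite Fq d).toFinset

private noncomputable def NF (Fq : Type) [Field Fq] [Fintype Fq] (d : ℕ) :
    Finset (Polynomial Fq) := (nonzero_lt_finite Fq d).toFinset

private lemma mem_MF {d : ℕ} {a : Polynomial Fq} : a ∈ MF Fq d ↔ a.Monic ∧ a.natDegree = d := by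
  simp [MF]

private lemma mem_NF {d : ℕ} {c : Polynomial Fq} : c ∈ NF Fq d ↔ c ≠ 0 ∧ c.natDegree < d := by
  simp [NF]

/-- Bijection between `(MF d).erase b` and `NF d` via `a ↦ a - b`. -/
private lemma sum_erase_eq_sum_NF {M : Type} [AddCommMonoid M] [DecidableEq (Polynomial Fq)]
    {d : ℕ} {b : Polynomial Fq} (hb : b ∈ MF Fq d) (f : Polynomial Fq → M) :
    ∑ a ∈ (MF Fq d).erase b, f a = ∑ c ∈ NF Fq d, f (b + c) := by
  obtain ⟨hbm, hbd⟩ := mem_MF.mp hb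
  have hb0 : b ≠ 0 := hbm.ne_zero
  refine Finset.sum_nbij' (fun a => a - b) (fun c => b + c) ?_ ?_ ?_ ?_ ?_
  · intro a ha
    obtain ⟨hne, ham⟩ := Finset.mem_erase.mp ha
    obtain ⟨ham, had⟩ := mem_MF.mp ham
    have hsub : a - b ≠ 0 := sub_ne_zero.mpr hne
    have hdeg : (a - b).degree < a.degree := by
      refine degree_sub_lt ?_ ham.ne_zero ?_
      · rw [degree_eq_natDegree ham.ne_zero, degree_eq_natDegree hbm.ne_zero, had, hbd]
      · rw [ham.leadingCoeff, hbm.leadingCoeff]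
    refine mem_NF.mpr ⟨hsub, ?_⟩
    have := hdeg.trans_le (degree_le_natDegree (p := a))
    rw [had] at this
    exact (natDegree_lt_iff_degree_lt hsub).mpr this
  · intro c hc
    obtain ⟨hc0, hcd⟩ := mem_NF.mp hc
    have hdeg : c.degree < b.degree := by
      rw [degree_eq_natDegree hb0, hbd]
      calc c.degree ≤ c.natDegree := degree_le_natDegree
      _ < (d : ℕ) := by exact_mod_cast hcd
    have hmon : (b + c).Monic := hbm.add_of_left hdeg
    refine Finset.mem_erase.mpr ⟨?_, mem_MF.mpr ⟨hmon, ?_⟩⟩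
    · intro h; apply hc0; have := congrArg (· - b) h; simpa using this
    · have : (b + c).degree = b.degree := degree_add_eq_left_of_degree_lt hdeg
      have h2 : ((b + c).natDegree : WithBot ℕ) = (b.natDegree : WithBot ℕ) :=
        (degree_eq_natDegree hmon.ne_zero).symm.trans (this.trans (degree_eq_natDegree hb0))
      have h3 : (b + c).natDegree = b.natDegree := by exact_mod_cast h2
      rw [h3, hbd]
  · intro a _; ring
  · intro c _; ring
  · intro a _; rw [add_sub_cancel]

/-- Decomposing nonzero polynomials of degree `< d` as `C λ * m` with `m` monic. -/
private lemma sum_NF_eq {M : Type} [AddCommMonoid M] [DecidableEq Fq]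
    [DecidableEq (Polynomial Fq)] (d : ℕ) (f : Polynomial Fq → M) :
    ∑ c ∈ NF Fq d, f c
      = ∑ p ∈ (Finset.univ.erase (0:Fq)) ×ˢ ((Finset.range d).biUnion (MF Fq)),
          f (Polynomial.C p.1 * p.2) := by
  refine Finset.sum_nbij' (fun c => (c.leadingCoeff, Polynomial.C c.leadingCoeff⁻¹ * c))
    (fun p => Polynomial.C p.1 * p.2) ?_ ?_ ?_ ?_ ?_
  · intro c hc
    obtain ⟨hc0, hcd⟩ := mem_NF.mp hc
    have hlc : c.leadingCoeff ≠ 0 := leadingCoeff_ne_zero.mpr hc0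
    refine Finset.mem_product.mpr ⟨Finset.mem_erase.mpr ⟨hlc, Finset.mem_univ _⟩, ?_⟩
    refine Finset.mem_biUnion.mpr ⟨c.natDegree, Finset.mem_range.mpr hcd, mem_MF.mpr ⟨?_, ?_⟩⟩
    · unfold Polynomial.Monic
      rw [leadingCoeff_mul, leadingCoeff_C, inv_mul_cancel₀ hlc]
    · rw [natDegree_C_mul (inv_ne_zero hlc)]
  · intro p hp
    obtain ⟨hp1, hp2⟩ := Finset.mem_product.mp hp
    have hlam : p.1 ≠ 0 := (Finset.mem_erase.mp hp1).1
    obtain ⟨i, hi, hm⟩ := Finset.mem_biUnion.mp hp2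
    obtain ⟨hmon, hdeg⟩ := mem_MF.mp hm
    refine mem_NF.mpr ⟨mul_ne_zero (by simpa using hlam) hmon.ne_zero, ?_⟩
    rw [natDegree_C_mul hlam, hdeg]
    exact Finset.mem_range.mp hi
  · intro c hc
    obtain ⟨hc0, _⟩ := mem_NF.mp hc
    have hlc : c.leadingCoeff ≠ 0 := leadingCoeff_ne_zero.mpr hc0
    show Polynomial.C c.leadingCoeff * (Polynomial.C c.leadingCoeff⁻¹ * c) = c
    rw [← mul_assoc, ← Polynomial.C_mul, mul_inv_cancel₀ hlc, Polynomial.C_1, one_mul]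
  · intro p hp
    obtain ⟨hp1, hp2⟩ := Finset.mem_product.mp hp
    have hlam : p.1 ≠ 0 := (Finset.mem_erase.mp hp1).1
    obtain ⟨i, hi, hm⟩ := Finset.mem_biUnion.mp hp2
    obtain ⟨hmon, hdeg⟩ := mem_MF.mp hm
    have hlc : (Polynomial.C p.1 * p.2).leadingCoeff = p.1 := by
      rw [leadingCoeff_mul, leadingCoeff_C, hmon.leadingCoeff, mul_one]
    show ((Polynomial.C p.1 * p.2).leadingCoeff,
      Polynomial.C ((Polynomial.C p.1 * p.2).leadingCoeff)⁻¹ * (Polynomial.C p.1 * p.2)) = p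
    refine Prod.ext (by simp [hlc]) ?_
    simp only [hlc]
    rw [← mul_assoc, ← Polynomial.C_mul, inv_mul_cancel₀ hlam, Polynomial.C_1, one_mul]
  · intro c hc
    obtain ⟨hc0, _⟩ := mem_NF.mp hc
    have hlc : c.leadingCoeff ≠ 0 := leadingCoeff_ne_zero.mpr hc0
    show f c = f (Polynomial.C c.leadingCoeff * (Polynomial.C c.leadingCoeff⁻¹ * c))
    exact (congrArg f (by rw [← mul_assoc, ← Polynomial.C_mul, mul_inv_cancel₀ hlc,
      Polynomial.C_1, one_mul])).symm

private lemma sum_inv_erase_zero [DecidableEq Fq] (hq2 : 2 < Fintype.card Fq) :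
    ∑ x ∈ Finset.univ.erase (0:Fq), x⁻¹ = 0 := by
  have h1 : ∑ x ∈ Finset.univ.erase (0:Fq), x⁻¹ = ∑ x ∈ Finset.univ.erase (0:Fq), x := by
    refine Finset.sum_nbij' (fun x => x⁻¹) (fun x => x⁻¹) ?_ ?_ ?_ ?_ ?_ <;>
      simp +contextual [Finset.mem_erase]
  rw [h1]
  have h2 : ∑ x ∈ (Finset.univ : Finset Fq), x = 0 := by
    have := FiniteField.sum_pow_lt_card_sub_one (K := Fq) 1 (by omega)
    simpa using this
  have := Finset.add_sum_erase Finset.univ (fun x : Fq => x) (Finset.mem_univ (0:Fq))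
  rw [h2] at this
  simpa using this

private lemma card_erase_zero [DecidableEq Fq] :
    (Finset.univ.erase (0:Fq)).card = Fintype.card Fq - 1 := by
  rw [Finset.card_erase_of_mem (Finset.mem_univ _), Finset.card_univ]

private lemma sum_biUnion_MF {M : Type} [AddCommMonoid M] [DecidableEq (Polynomial Fq)]
    (d : ℕ) (g : Polynomial Fq → M) :
    ∑ m ∈ (Finset.range d).biUnion (MF Fq), g m = ∑ i ∈ Finset.range d, ∑ m ∈ MF Fq i, g m := by
  refine Finset.sum_biUnion ?_
  intro i _ j _ hij
  simp only [Function.onFun, Finset.disjoint_left]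
  intro a hai haj
  exact hij ((mem_MF.mp hai).2.symm.trans (mem_MF.mp haj).2)

private lemma sum_NF_inv [DecidableEq Fq] [DecidableEq (Polynomial Fq)]
    (hq2 : 2 < Fintype.card Fq) (ι : Polynomial Fq →+* K) (d : ℕ) :
    ∑ c ∈ NF Fq d, (ι c)⁻¹ = 0 := by
  rw [sum_NF_eq, Finset.sum_product]
  have : ∀ x : Fq, ∀ m : Polynomial Fq, (ι (Polynomial.C x * m))⁻¹
      = (ι (Polynomial.C x))⁻¹ * (ι m)⁻¹ := by
    intro x m; rw [map_mul, mul_inv]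
  simp only [this, ← Finset.mul_sum, ← Finset.sum_mul]
  have h0 : ∑ x ∈ Finset.univ.erase (0:Fq), (ι (Polynomial.C x))⁻¹ = 0 := by
    have hx : ∀ x ∈ Finset.univ.erase (0:Fq), (ι (Polynomial.C x))⁻¹
        = (ι.comp Polynomial.C) x⁻¹ := by
      intro x _
      have h : ι (Polynomial.C x) = (ι.comp Polynomial.C) x := rfl
      rw [h, ← map_inv₀]
    rw [Finset.sum_congr rfl hx, ← map_sum, sum_inv_erase_zero hq2, map_zero]
  rw [h0, zero_mul]

private lemma sum_NF_hom [DecidableEq Fq] [DecidableEq (Polynomial Fq)]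
    (hq2 : 2 < Fintype.card Fq) (hcard : (Fintype.card Fq : K) = 0)
    (ι σ : Polynomial Fq →+* K)
    (hinj : Function.Injective ι) (hconst : ∀ x : Fq, σ (Polynomial.C x) = ι (Polynomial.C x))
    (d : ℕ) :
    ∑ c ∈ NF Fq d, σ c / ι c = - ∑ i ∈ Finset.range d, ∑ m ∈ MF Fq i, σ m / ι m := by
  rw [sum_NF_eq, Finset.sum_product]
  have key : ∀ x ∈ Finset.univ.erase (0:Fq), ∀ m ∈ (Finset.range d).biUnion (MF Fq),
      σ (Polynomial.C x * m) / ι (Polynomial.C x * m) = σ m / ι m := by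
    intro x hx m hm
    have hx0 : x ≠ 0 := (Finset.mem_erase.mp hx).1
    have hCx : ι (Polynomial.C x) ≠ 0 := by
      intro h
      exact hx0 (by simpa using hinj (h.trans (map_zero ι).symm))
    rw [map_mul, map_mul, hconst, mul_div_mul_left _ _ hCx]
  rw [Finset.sum_congr rfl (fun x hx => Finset.sum_congr rfl (key x hx))]
  rw [Finset.sum_const, card_erase_zero, nsmul_eq_mul,
    Nat.cast_sub (by omega : 1 ≤ Fintype.card Fq), hcard, Nat.cast_one, zero_sub,
    sum_biUnion_MF, neg_one_mul]

private lemma sum_erase_comm {α M : Type} [DecidableEq α] [AddCommMonoid M]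
    (s : Finset α) (F : α → α → M) :
    ∑ a ∈ s, ∑ b ∈ s.erase a, F a b = ∑ b ∈ s, ∑ a ∈ s.erase b, F a b := by
  have h1 : ∀ a ∈ s, ∑ b ∈ s.erase a, F a b = ∑ b ∈ s, if b = a then 0 else F a b := by
    intro a _
    rw [← Finset.sum_erase s (f := fun b => if b = a then 0 else F a b) (a := a) (by simp)]
    exact Finset.sum_congr rfl fun b hb => by rw [if_neg (Finset.mem_erase.mp hb).1]
  have h2 : ∀ b ∈ s, ∑ a ∈ s.erase b, F a b = ∑ a ∈ s, if b = a then 0 else F a b := by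
    intro b _
    rw [← Finset.sum_erase s (f := fun a => if b = a then 0 else F a b) (a := b) (by simp)]
    exact Finset.sum_congr rfl fun a ha => by
      rw [if_neg (Ne.symm (Finset.mem_erase.mp ha).1)]
  rw [Finset.sum_congr rfl h1, Finset.sum_congr rfl h2, Finset.sum_comm]

private lemma key_identity [DecidableEq Fq] [DecidableEq (Polynomial Fq)]
    (hq2 : 2 < Fintype.card Fq) (hcard : (Fintype.card Fq : K) = 0)
    (ι σ ψ : Polynomial Fq →+* K) (hinj : Function.Injective ι)
    (hσc : ∀ x : Fq, σ (Polynomial.C x) = ι (Polynomial.C x))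
    (hψc : ∀ x : Fq, ψ (Polynomial.C x) = ι (Polynomial.C x)) (d : ℕ) :
    (∑ a ∈ MF Fq d, σ a / ι a) * (∑ b ∈ MF Fq d, ψ b / ι b)
      = (∑ a ∈ MF Fq d, σ a * ψ a / (ι a) ^ 2)
        - (∑ b ∈ MF Fq d, ψ b / ι b) * ∑ i ∈ Finset.range d, ∑ m ∈ MF Fq i, σ m / ι m
        - (∑ a ∈ MF Fq d, σ a / ι a) * ∑ i ∈ Finset.range d, ∑ m ∈ MF Fq i, ψ m / ι m := by
  have hι0 : ∀ a : Polynomial Fq, a ≠ 0 → ι a ≠ 0 := by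
    intro a ha h
    exact ha (hinj (h.trans (map_zero ι).symm))
  have hNc : ∀ c ∈ NF Fq d, ι c ≠ 0 := fun c hc => hι0 c (mem_NF.mp hc).1
  have hMne : ∀ a ∈ MF Fq d, ι a ≠ 0 := fun a ha => hι0 a (mem_MF.mp ha).1.ne_zero
  set Rσ := ∑ i ∈ Finset.range d, ∑ m ∈ MF Fq i, σ m / ι m with hRσ
  set Rψ := ∑ i ∈ Finset.range d, ∑ m ∈ MF Fq i, ψ m / ι m with hRψ
  have hZ : ∑ c ∈ NF Fq d, (ι c)⁻¹ = 0 := sum_NF_inv hq2 ι d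
  have hEσ : ∑ c ∈ NF Fq d, σ c / ι c = -Rσ := sum_NF_hom hq2 hcard ι σ hinj hσc d
  have hEψ : ∑ c ∈ NF Fq d, ψ c / ι c = -Rψ := sum_NF_hom hq2 hcard ι ψ hinj hψc d
  rw [Finset.sum_mul_sum]
  have hsplit : ∀ a ∈ MF Fq d,
      ∑ b ∈ MF Fq d, (σ a / ι a) * (ψ b / ι b)
        = σ a * ψ a / (ι a) ^ 2 + ∑ b ∈ (MF Fq d).erase a, (σ a / ι a) * (ψ b / ι b) := by
    intro a ha
    rw [← Finset.add_sum_erase _ _ ha]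
    congr 1
    rw [div_mul_div_comm, sq]
  rw [Finset.sum_congr rfl hsplit, Finset.sum_add_distrib]
  have hpf : ∀ a ∈ MF Fq d, ∀ b ∈ (MF Fq d).erase a,
      (σ a / ι a) * (ψ b / ι b)
        = σ a * ψ b / (ι (a - b) * ι b) - σ a * ψ b / (ι (a - b) * ι a) := by
    intro a ha b hb
    have hab : a ≠ b := fun h => (Finset.mem_erase.mp hb).1 h.symm
    have hx : ι a ≠ 0 := hMne a ha
    have hy : ι b ≠ 0 := hMne b (Finset.mem_erase.mp hb).2
    have hz : ι (a - b) ≠ 0 := hι0 _ (sub_ne_zero.mpr hab)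
    rw [map_sub] at hz ⊢
    field_simp
  have hoff : ∑ a ∈ MF Fq d, ∑ b ∈ (MF Fq d).erase a, (σ a / ι a) * (ψ b / ι b)
      = (∑ a ∈ MF Fq d, ∑ b ∈ (MF Fq d).erase a, σ a * ψ b / (ι (a - b) * ι b))
        - ∑ a ∈ MF Fq d, ∑ b ∈ (MF Fq d).erase a, σ a * ψ b / (ι (a - b) * ι a) := by
    rw [← Finset.sum_sub_distrib]
    refine Finset.sum_congr rfl fun a ha => ?_
    rw [← Finset.sum_sub_distrib]
    exact Finset.sum_congr rfl fun b hb => hpf a ha b hb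
  rw [hoff]
  have hD1 : ∑ a ∈ MF Fq d, ∑ b ∈ (MF Fq d).erase a, σ a * ψ b / (ι (a - b) * ι b)
      = -((∑ b ∈ MF Fq d, ψ b / ι b) * Rσ) := by
    refine (sum_erase_comm (MF Fq d) (fun a b => σ a * ψ b / (ι (a - b) * ι b))).trans ?_
    have hinner : ∀ b ∈ MF Fq d,
        ∑ a ∈ (MF Fq d).erase b, σ a * ψ b / (ι (a - b) * ι b)
          = (ψ b / ι b) * (-Rσ) := by
      intro b hb
      rw [sum_erase_eq_sum_NF hb (fun a => σ a * ψ b / (ι (a - b) * ι b))]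
      have hterm : ∀ c ∈ NF Fq d,
          σ (b + c) * ψ b / (ι ((b + c) - b) * ι b)
            = (σ b * ψ b / ι b) * (ι c)⁻¹ + (ψ b / ι b) * (σ c / ι c) := by
        intro c hc
        have hc0 : ι c ≠ 0 := hNc c hc
        have hb0 : ι b ≠ 0 := hMne b hb
        rw [add_sub_cancel_left, map_add]
        field_simp
      rw [Finset.sum_congr rfl hterm, Finset.sum_add_distrib, ← Finset.mul_sum,
        ← Finset.mul_sum, hZ, hEσ, mul_zero, zero_add]
    rw [Finset.sum_congr rfl hinner, ← Finset.sum_mul]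
    ring
  have hD2 : ∑ a ∈ MF Fq d, ∑ b ∈ (MF Fq d).erase a, σ a * ψ b / (ι (a - b) * ι a)
      = (∑ a ∈ MF Fq d, σ a / ι a) * Rψ := by
    have hinner : ∀ a ∈ MF Fq d,
        ∑ b ∈ (MF Fq d).erase a, σ a * ψ b / (ι (a - b) * ι a)
          = (σ a / ι a) * Rψ := by
      intro a ha
      rw [sum_erase_eq_sum_NF ha (fun b => σ a * ψ b / (ι (a - b) * ι a))]
      have hterm : ∀ c ∈ NF Fq d,
          σ a * ψ (a + c) / (ι (a - (a + c)) * ι a)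
            = -((σ a * ψ a / ι a) * (ι c)⁻¹ + (σ a / ι a) * (ψ c / ι c)) := by
        intro c hc
        have hc0 : ι c ≠ 0 := hNc c hc
        have ha0 : ι a ≠ 0 := hMne a ha
        have h1 : a - (a + c) = -c := by ring
        rw [h1, map_neg, map_add]
        field_simp
      rw [Finset.sum_congr rfl hterm, Finset.sum_neg_distrib, Finset.sum_add_distrib,
        ← Finset.mul_sum, ← Finset.mul_sum, hZ, hEψ, mul_zero, zero_add]
      ring
    rw [Finset.sum_congr rfl hinner, ← Finset.sum_mul]
  rw [hD1, hD2]
  ring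

end Aux

/-- For `q > 2` and all `d ≥ 0`,
`S_d(1;σ)·S_d(1;ψ) = S_d(2;σψ) − S_d(1;ψ)·∑_{i<d} S_i(1;σ) − S_d(1;σ)·∑_{i<d} S_i(1;ψ)`
in `F_q(θ)(t₁,t₂)`, where `σ : a ↦ a(t₁)`, `ψ : a ↦ a(t₂)`. -/
theorem sumShuffle_two_vars
    (Fq : Type) [Field Fq] [Fintype Fq] (q : ℕ) (hq : q = Fintype.card Fq) (hq2 : 2 < q)
    (t₁ t₂ : RatFunc (RatFunc (RatFunc Fq)))
    (ht₁ : t₁ = RatFunc.C (RatFunc.X : RatFunc (RatFunc Fq))) (ht₂ : t₂ = RatFunc.X)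
    (ι : Polynomial Fq →+* RatFunc (RatFunc (RatFunc Fq)))
    (hι : ι = RatFunc.C.comp (RatFunc.C.comp (algebraMap (Polynomial Fq) (RatFunc Fq))))
    (Sσ Sψ Sσψ : ℕ → ℕ → RatFunc (RatFunc (RatFunc Fq)))
    (hSσ : ∀ n d, Sσ n d = ∑ᶠ a ∈ {a : Polynomial Fq | a.Monic ∧ a.natDegree = d},
      a.eval₂ (ι.comp Polynomial.C) t₁ / (ι a) ^ n)
    (hSψ : ∀ n d, Sψ n d = ∑ᶠ a ∈ {a : Polynomial Fq | a.Monic ∧ a.natDegree = d},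
      a.eval₂ (ι.comp Polynomial.C) t₂ / (ι a) ^ n)
    (hSσψ : ∀ n d, Sσψ n d = ∑ᶠ a ∈ {a : Polynomial Fq | a.Monic ∧ a.natDegree = d},
      a.eval₂ (ι.comp Polynomial.C) t₁ * a.eval₂ (ι.comp Polynomial.C) t₂ / (ι a) ^ n)
    (d : ℕ) :
    Sσ 1 d * Sψ 1 d =
      Sσψ 2 d - Sψ 1 d * ∑ i ∈ Finset.range d, Sσ 1 i
        - Sσ 1 d * ∑ i ∈ Finset.range d, Sψ 1 i := by
  classical
  have hinj : Function.Injective ι := by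
    rw [hι]
    exact RatFunc.C.injective.comp (RatFunc.C.injective.comp (RatFunc.algebraMap_injective Fq))
  have hq2' : 2 < Fintype.card Fq := hq ▸ hq2
  have hcard : (Fintype.card Fq : RatFunc (RatFunc (RatFunc Fq))) = 0 := by
    have h1 : ((Fintype.card Fq : ℕ) : Fq) = 0 := FiniteField.cast_card_eq_zero Fq
    calc ((Fintype.card Fq : ℕ) : RatFunc (RatFunc (RatFunc Fq)))
        = (ι.comp Polynomial.C) ((Fintype.card Fq : ℕ) : Fq) :=
          (map_natCast (ι.comp Polynomial.C) _).symm
    _ = 0 := by rw [h1, map_zero]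
  let σ : Polynomial Fq →+* RatFunc (RatFunc (RatFunc Fq)) :=
    Polynomial.eval₂RingHom (ι.comp Polynomial.C) t₁
  let ψ : Polynomial Fq →+* RatFunc (RatFunc (RatFunc Fq)) :=
    Polynomial.eval₂RingHom (ι.comp Polynomial.C) t₂
  have hσc : ∀ x : Fq, σ (Polynomial.C x) = ι (Polynomial.C x) := fun x => by
    simp [σ]
  have hψc : ∀ x : Fq, ψ (Polynomial.C x) = ι (Polynomial.C x) := fun x => by
    simp [ψ]
  have hMS : ∀ n i, Sσ n i = ∑ a ∈ MF Fq i, σ a / (ι a) ^ n := by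
    intro n i
    rw [hSσ, finsum_mem_eq_finite_toFinset_sum _ (monic_deg_finite Fq i)]
    rfl
  have hMSψ : ∀ n i, Sψ n i = ∑ a ∈ MF Fq i, ψ a / (ι a) ^ n := by
    intro n i
    rw [hSψ, finsum_mem_eq_finite_toFinset_sum _ (monic_deg_finite Fq i)]
    rfl
  have hMSσψ : Sσψ 2 d = ∑ a ∈ MF Fq d, σ a * ψ a / (ι a) ^ 2 := by
    rw [hSσψ, finsum_mem_eq_finite_toFinset_sum _ (monic_deg_finite Fq d)]
    rfl
  simp only [hMS, hMSψ, hMSσψ, pow_one]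
  exact key_identity hq2' hcard ι σ ψ hinj hσc hψc d
end

section
/- For d ≥ 0, the finite sum Σ_{i=0}^{d-1} b_i(t)/l_i equals τ(b_{d-1}(t))/l_{d-1} = (b_d(t)/l_d)·(θ - θ^{q^d})/(t - θ), where τ replaces θ by θ^q; consequently S_d(1;1)·Σ_{i=0}^{d-1} S_i(1;σ) = (b_d(t)/l_d^2)·(θ - θ^{q^d})/(t - θ). -/
set_option autoImplicit false

open Polynomial

/-- For `d ≥ 1`: `∑_{i=0}^{d-1} b_i(t)/l_i = τ(b_{d-1}(t))/l_{d-1}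
 = (b_d(t)/l_d)·(θ-θ^{q^d})/(t-θ)`, and consequently
`S_d(1;1)·∑_{i<d} S_i(1;σ) = (b_d(t)/l_d²)·(θ-θ^{q^d})/(t-θ)` in `F_q(θ)(t)`. -/
theorem sum_b_div_l_eq
    (Fq : Type) [Field Fq] [Fintype Fq] (q : ℕ) (hq : q = Fintype.card Fq)
    (θ t : RatFunc (RatFunc Fq))
    (hθ : θ = RatFunc.C (RatFunc.X : RatFunc Fq)) (ht : t = RatFunc.X)
    (l : ℕ → RatFunc (RatFunc Fq)) (hl0 : l 0 = 1)
    (hl : ∀ i, l (i + 1) = (θ - θ ^ q ^ (i + 1)) * l i)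
    (b : ℕ → RatFunc (RatFunc Fq)) (hb0 : b 0 = 1)
    (hb : ∀ i, b (i + 1) = b i * (t - θ ^ q ^ i))
    (d : ℕ) (hd : 1 ≤ d) :
    (∑ i ∈ Finset.range d, b i / l i)
        = (∏ m ∈ Finset.range (d - 1), (t - θ ^ q ^ (m + 1))) / l (d - 1) ∧
    (∏ m ∈ Finset.range (d - 1), (t - θ ^ q ^ (m + 1))) / l (d - 1)
        = b d / l d * ((θ - θ ^ q ^ d) / (t - θ)) ∧
    (l d)⁻¹ * ∑ i ∈ Finset.range d, b i / l i
        = b d / (l d) ^ 2 * ((θ - θ ^ q ^ d) / (t - θ)) := by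
  have hq2 : 2 ≤ q := by rw [hq]; exact Fintype.one_lt_card
  -- X ≠ X^n in RatFunc Fq for n ≥ 2
  have hXpow : ∀ n : ℕ, 2 ≤ n → (RatFunc.X : RatFunc Fq) ≠ RatFunc.X ^ n := by
    intro n hn h
    have h2 : algebraMap (Polynomial Fq) (RatFunc Fq) Polynomial.X
        = algebraMap (Polynomial Fq) (RatFunc Fq) (Polynomial.X ^ n) := by
      rw [map_pow, RatFunc.algebraMap_X]; exact h
    have h3 : (Polynomial.X : Polynomial Fq) = Polynomial.X ^ n :=
      RatFunc.algebraMap_injective Fq h2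
    have := congrArg Polynomial.natDegree h3
    simp [Polynomial.natDegree_X_pow] at this
    omega
  have hsub : ∀ k : ℕ, θ - θ ^ q ^ (k + 1) ≠ 0 := by
    intro k h
    rw [sub_eq_zero, hθ, ← map_pow] at h
    have h2 : (RatFunc.X : RatFunc Fq) = RatFunc.X ^ q ^ (k + 1) :=
      RatFunc.C.injective h
    exact hXpow _ (le_trans hq2 (Nat.le_self_pow (Nat.succ_ne_zero k) q)) h2
  have htθ : ∀ k : ℕ, t - θ ^ q ^ k ≠ 0 := by
    intro k h
    rw [sub_eq_zero, ht, hθ, ← map_pow] at h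
    have h2 : algebraMap (Polynomial (RatFunc Fq)) (RatFunc (RatFunc Fq)) Polynomial.X
        = algebraMap (Polynomial (RatFunc Fq)) (RatFunc (RatFunc Fq))
          (Polynomial.C ((RatFunc.X : RatFunc Fq) ^ q ^ k)) := by
      rw [RatFunc.algebraMap_X, RatFunc.algebraMap_C]; exact h
    exact Polynomial.X_ne_C _ (RatFunc.algebraMap_injective _ h2)
  have ht0 : t - θ ≠ 0 := by
    have := htθ 0
    simpa using this
  have hlne : ∀ i, l i ≠ 0 := by
    intro i
    induction i with
    | zero => rw [hl0]; exact one_ne_zero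
    | succ k ih => rw [hl]; exact mul_ne_zero (hsub k) ih
  have hbprod : ∀ n, b n = ∏ m ∈ Finset.range n, (t - θ ^ q ^ m) := by
    intro n
    induction n with
    | zero => simpa using hb0
    | succ k ih => rw [hb, ih, Finset.prod_range_succ]
  have hbshift : ∀ n, b (n + 1) = (∏ m ∈ Finset.range n, (t - θ ^ q ^ (m + 1))) * (t - θ) := by
    intro n
    rw [hbprod, Finset.prod_range_succ']
    simp
  have key : ∀ e : ℕ, (∑ i ∈ Finset.range (e + 1), b i / l i)
      = (∏ m ∈ Finset.range e, (t - θ ^ q ^ (m + 1))) / l e := by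
    intro e
    induction e with
    | zero => simp [hb0, hl0]
    | succ k ih =>
      rw [Finset.sum_range_succ, ih, Finset.prod_range_succ, hl, hbshift,
        div_add_div _ _ (hlne k) (mul_ne_zero (hsub k) (hlne k)),
        div_eq_div_iff (mul_ne_zero (hlne k) (mul_ne_zero (hsub k) (hlne k)))
          (mul_ne_zero (hsub k) (hlne k))]
      ring
  obtain ⟨e, rfl⟩ : ∃ e, d = e + 1 := ⟨d - 1, (Nat.succ_pred_eq_of_pos hd).symm⟩
  simp only [Nat.add_sub_cancel]
  have h2 : (∏ m ∈ Finset.range e, (t - θ ^ q ^ (m + 1))) / l e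
      = b (e + 1) / l (e + 1) * ((θ - θ ^ q ^ (e + 1)) / (t - θ)) := by
    rw [hbshift, hl]
    rw [div_mul_div_comm,
      div_eq_div_iff (hlne e) (mul_ne_zero (mul_ne_zero (hsub e) (hlne e)) ht0)]
    ring
  refine ⟨key e, h2, ?_⟩
  rw [key e, h2]
  ring
end
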